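/- arXiv:0902.2155 — 3 statements merged into one kernel-verified Lean document; each statement's English description precedes it below -/
import Mathlib

section
/- Let F be a supertropical semifield and let f = ∑_{i=0}^m α_i λ^i and g = ∑_{j=0}^n β_j λ^j be full polynomials of degrees m ≥ 1 and n ≥ 1 all of whose coefficients α_i, β_j are tangible. Set a_i = α_{i-1}/α_i for 1 ≤ i ≤ m and b_j = β_{j-1}/β_j for 1 ≤ j ≤ n. Then |Re(f,g)| = α_m^n · β_n^m · ∏_{i=1}^m ∏_{j=1}^n (a_i + b_j). -/
open Polynomial

/-- A supertropical semiring: a commutative semiring with an idempotent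
ghost map `nu` (a semiring homomorphism onto the ghost ideal), satisfying
supertropicality and bipotence. -/
class Supertropical (R : Type*) extends CommSemiring R where
  nu : R → R
  nu_idem : ∀ a : R, nu (nu a) = nu a
  nu_add : ∀ a b : R, nu (a + b) = nu a + nu b
  nu_mul : ∀ a b : R, nu (a * b) = nu a * nu b
  nu_zero : nu (0 : R) = 0
  supertropicality : ∀ a b : R, nu a = nu b → a + b = nu a
  bipotence : ∀ a b : R, a + b = a ∨ a + b = b ∨ (a + b = nu a ∧ nu a = nu b)

namespace Supertropical

variable {R : Type*} [Supertropical R]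

/-- membership in the ghost ideal `G₀ = {a | ν a = a}` -/
def ghost (a : R) : Prop := nu a = a

/-- tangible elements: `T = R \ (G₀ ∪ {0})` (note `0 ∈ G₀`). -/
def tangible (a : R) : Prop := ¬ ghost a

/-- the order on ν-values: `a^ν ≤ b^ν` iff `a^ν + b^ν = b^ν` -/
def nuLe (a b : R) : Prop := nu a + nu b = nu b

/-- strict order on ν-values -/
def nuLt (a b : R) : Prop := nuLe a b ∧ nu a ≠ nu b

/-- the basic open interval `W_{α,β} = {a | α^ν < a^ν < β^ν}` of the ν-topology -/
def interval (α β : R) : Set R := {a : R | nuLt α a ∧ nuLt a β}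

/-- the tangible open interval `W_{α,β} ∩ T` -/
def tangInterval (α β : R) : Set R := {a : R | tangible a ∧ nuLt α a ∧ nuLt a β}

/-- `R` is connected if no open interval is the union of two disjoint
nonempty open intervals. -/
def STConnected (R : Type*) [Supertropical R] : Prop :=
  ¬ ∃ α β γ₁ δ₁ γ₂ δ₂ : R,
      interval α β = interval γ₁ δ₁ ∪ interval γ₂ δ₂ ∧
      interval γ₁ δ₁ ∩ interval γ₂ δ₂ = (∅ : Set R) ∧
      (interval γ₁ δ₁).Nonempty ∧ (interval γ₂ δ₂).Nonempty

end Supertropical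

open Supertropical

/-- A supertropical semifield: the tangible elements form a multiplicative
abelian group, and `ν(T) = G₀ \ {0}`. -/
class STSemifield (R : Type*) extends Supertropical R where
  tangible_one : tangible (1 : R)
  tangible_mul : ∀ a b : R, tangible a → tangible b → tangible (a * b)
  tangible_inv : ∀ a : R, tangible a → ∃ b : R, tangible b ∧ a * b = 1
  nu_onto : ∀ g : R, ghost g → g ≠ 0 → ∃ t : R, tangible t ∧ nu t = g

/-- An ℕ-divisible supertropical semifield. -/
class STDivSemifield (R : Type*) extends STSemifield R where
  divisible : ∀ (a : R) (n : ℕ), 1 ≤ n → ∃ b : R, b ^ n = a ∧ (tangible a → tangible b)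

namespace Supertropical

variable {R : Type*} [Supertropical R]

/-- a polynomial is ghost if all its values are ghost -/
def ghostPoly (f : R[X]) : Prop := ∀ a : R, ghost (f.eval a)

/-- e-equivalence of polynomials: they define the same function -/
def eEquiv (f g : R[X]) : Prop := ∀ a : R, f.eval a = g.eval a

/-- `g` e-divides `f` if `f` is e-equivalent to `g * h` for some `h` -/
def eDivides (g f : R[X]) : Prop := ∃ h : R[X], eEquiv f (g * h)

/-- a polynomial all of whose nonzero coefficients are tangible -/
def tangPoly (f : R[X]) : Prop := ∀ i : ℕ, f.coeff i ≠ 0 → tangible (f.coeff i)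

/-- monic: leading coefficient `1` or `ν(1)` -/
def stMonic (f : R[X]) : Prop := f.leadingCoeff = 1 ∨ f.leadingCoeff = nu 1

/-- a common tangible root of two polynomials -/
def commonTangibleRoot (f g : R[X]) (a : R) : Prop :=
  tangible a ∧ ghost (f.eval a) ∧ ghost (g.eval a)

/-- relative primeness of polynomials -/
def RelPrime (f g : R[X]) : Prop :=
  ¬ ∃ p q : R[X], tangPoly p ∧ tangPoly q ∧ ¬ (p = 0 ∧ q = 0) ∧
      p.natDegree < g.natDegree ∧ q.natDegree < f.natDegree ∧
      ghostPoly (p * f + q * g) ∧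
      (p * f).natDegree = (q * g).natDegree ∧
      (p * f).natTrailingDegree = (q * g).natTrailingDegree

/-- a full polynomial: all coefficients up to the degree are nonzero, and
`ν(αᵢ²) ≥ ν(α_{i-1}·α_{i+1})` for `0 < i < deg` -/
def fullPoly (f : R[X]) : Prop :=
  (∀ i ≤ f.natDegree, f.coeff i ≠ 0) ∧
  ∀ i : ℕ, 0 < i → i < f.natDegree →
    nuLe (f.coeff (i - 1) * f.coeff (i + 1)) (f.coeff i * f.coeff i)

end Supertropical

/-- the resultant matrix of `f` (of degree `m`) and `g` (of degree `n`):
rows `0 ≤ i < n` carry the coefficients of `f`, shifted, and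
rows `n ≤ i < n + m` carry the coefficients of `g`, shifted. -/
def resMatrix {R : Type*} [CommSemiring R] (m n : ℕ) (f g : R[X]) :
    Matrix (Fin (m + n)) (Fin (m + n)) R := fun i j =>
  if (i : ℕ) < n then
    (if (i : ℕ) ≤ (j : ℕ) then f.coeff ((j : ℕ) - (i : ℕ)) else 0)
  else
    (if (i : ℕ) - n ≤ (j : ℕ) then g.coeff ((j : ℕ) - ((i : ℕ) - n)) else 0)

/-- the supertropical determinant (permanent) of a square matrix -/
def sdet {R : Type*} [CommSemiring R] {k : ℕ} (A : Matrix (Fin k) (Fin k) R) : R :=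
  ∑ σ : Equiv.Perm (Fin k), ∏ i, A i (σ i)

/-- the resultant `|Re(f,g)|` for `f` of degree `m` and `g` of degree `n` -/
def resultant {R : Type*} [CommSemiring R] (m n : ℕ) (f g : R[X]) : R :=
  sdet (resMatrix m n f g)

/-- the resultant at the actual degrees of `f` and `g` -/
def Res {R : Type*} [CommSemiring R] (f g : R[X]) : R :=
  resultant f.natDegree g.natDegree f g


namespace ST10
open Supertropical

variable {R : Type*} [Supertropical R]

lemma add_self' (a : R) : a + a = nu a := supertropicality a a rfl

lemma nule_refl (a : R) : nuLe a a := by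
  show nu a + nu a = nu a
  rw [add_self' (nu a), nu_idem]

lemma nule_of_nu_eq {a b : R} (h : nu a = nu b) : nuLe a b := by
  show nu a + nu b = nu b
  rw [h, add_self' (nu b), nu_idem]

lemma nule_trans {a b c : R} (h1 : nuLe a b) (h2 : nuLe b c) : nuLe a c := by
  show nu a + nu c = nu c
  conv_lhs => rw [← h2, ← add_assoc, h1]
  exact h2

lemma nu_add_cases (a b : R) : nu a + nu b = nu a ∨ nu a + nu b = nu b := by
  rcases bipotence (nu a) (nu b) with h | h | ⟨h, _⟩
  · exact Or.inl h
  · exact Or.inr h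
  · rw [nu_idem] at h; exact Or.inl h

lemma nule_total (a b : R) : nuLe a b ∨ nuLe b a := by
  rcases nu_add_cases a b with h | h
  · right; show nu b + nu a = nu a; rw [add_comm]; exact h
  · left; exact h

lemma nule_antisymm {a b : R} (h1 : nuLe a b) (h2 : nuLe b a) : nu a = nu b := by
  have : nu b + nu a = nu a := h2
  rw [add_comm] at this
  rw [← h1, this]

lemma nult_of_not_nule {a b : R} (h : ¬ nuLe a b) : nuLt b a := by
  rcases nule_total a b with h1 | h1
  · exact absurd h1 h
  · exact ⟨h1, fun he => h (nule_of_nu_eq he.symm)⟩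

lemma not_nule_of_nult {a b : R} (h : nuLt a b) : ¬ nuLe b a :=
  fun h2 => h.2 (nule_antisymm h.1 h2)

lemma nult_of_nule_of_nult {a b c : R} (h1 : nuLe a b) (h2 : nuLt b c) : nuLt a c :=
  ⟨nule_trans h1 h2.1, fun he => h2.2 (nule_antisymm h2.1 (nule_trans (nule_of_nu_eq he.symm) h1))⟩

lemma nult_of_nult_of_nule {a b c : R} (h1 : nuLt a b) (h2 : nuLe b c) : nuLt a c :=
  ⟨nule_trans h1.1 h2, fun he => h1.2 (nule_antisymm h1.1 (nule_trans h2 (nule_of_nu_eq he.symm)))⟩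

lemma add_eq_left {a b : R} (h : nuLt b a) : a + b = a := by
  rcases bipotence a b with h1 | h1 | ⟨_, he⟩
  · exact h1
  · exfalso
    have h2 : nu a + nu b = nu b := by rw [← nu_add, h1]
    exact h.2 (nule_antisymm h.1 h2)
  · exact absurd he.symm h.2

lemma add_eq_right {a b : R} (h : nuLt a b) : a + b = b := by
  rw [add_comm]; exact add_eq_left h

lemma ghost_nu (a : R) : ghost (nu a) := nu_idem a

lemma ghost_mul {a : R} (b : R) (h : ghost a) : ghost (a * b) := by
  show nu (a * b) = a * b
  have h1 : a * b + a * b = nu (a * b) := add_self' _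
  have h2 : a * b + a * b = a * b := by
    rw [← add_mul]
    rw [add_self' a, h]
  rw [← h1, h2]

lemma ghost_mul_left {a : R} (b : R) (h : ghost a) : ghost (b * a) := by
  rw [mul_comm]; exact ghost_mul b h

lemma nule_zero (a : R) : nuLe 0 a := by
  show nu 0 + nu a = nu a
  rw [nu_zero, zero_add]

lemma nule_mul_right {a b : R} (c : R) (h : nuLe a b) : nuLe (a * c) (b * c) := by
  show nu (a * c) + nu (b * c) = nu (b * c)
  rw [nu_mul, nu_mul, ← add_mul, h]

lemma nule_mul {a b c d : R} (h1 : nuLe a b) (h2 : nuLe c d) : nuLe (a * c) (b * d) := by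
  refine nule_trans (nule_mul_right c h1) ?_
  rw [mul_comm b c, mul_comm b d]
  exact nule_mul_right b h2

lemma nu_add_absorb {a b : R} (h : nuLe b a) : nu a + b = nu a := by
  by_cases he : nu b = nu a
  · have : nu (nu a) = nu b := by rw [nu_idem, he]
    rw [supertropicality (nu a) b this, nu_idem]
  · rcases bipotence (nu a) b with h1 | h1 | ⟨_, h2⟩
    · exact h1
    · exfalso
      have h3 : nu a + nu b = nu b := by rw [← nu_idem a, ← nu_add, h1]
      exact he (nule_antisymm h h3)
    · rw [nu_idem] at h2; exact absurd h2.symm he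

lemma nule_add {a b c : R} (h1 : nuLe a c) (h2 : nuLe b c) : nuLe (a + b) c := by
  show nu (a + b) + nu c = nu c
  rw [nu_add, add_assoc, h2, h1]

lemma nu_add_eq_or (a b : R) : nu (a + b) = nu a ∨ nu (a + b) = nu b := by
  rw [nu_add]; exact nu_add_cases a b

lemma nult_add {a b c : R} (h1 : nuLt a c) (h2 : nuLt b c) : nuLt (a + b) c := by
  refine ⟨nule_add h1.1 h2.1, ?_⟩
  rcases nu_add_eq_or a b with h | h <;> rw [h]
  · exact h1.2
  · exact h2.2

lemma nule_sum {ι : Type*} {s : Finset ι} {x : ι → R} {c : R}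
    (h : ∀ i ∈ s, nuLe (x i) c) : nuLe (∑ i ∈ s, x i) c := by
  induction s using Finset.cons_induction with
  | empty => simpa using nule_zero c
  | cons a s ha ih =>
    rw [Finset.sum_cons]
    exact nule_add (h a (Finset.mem_cons_self a s))
      (ih fun i hi => h i (Finset.mem_cons_of_mem hi))

lemma nult_sum {ι : Type*} {s : Finset ι} {x : ι → R} {c : R} (hs : s.Nonempty)
    (h : ∀ i ∈ s, nuLt (x i) c) : nuLt (∑ i ∈ s, x i) c := by
  induction hs using Finset.Nonempty.cons_induction with
  | singleton a => simpa using h a (by simp)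
  | cons a s ha hs ih =>
    rw [Finset.sum_cons]
    exact nult_add (h a (Finset.mem_cons_self a s))
      (ih fun i hi => h i (Finset.mem_cons_of_mem hi))

lemma sum_eq_of_max {ι : Type*} {s : Finset ι} {x : ι → R} {i₀ : ι} (h0 : i₀ ∈ s)
    (h : ∀ i ∈ s, i ≠ i₀ → nuLt (x i) (x i₀)) : ∑ i ∈ s, x i = x i₀ := by
  classical
  rw [← Finset.add_sum_erase s x h0]
  rcases (s.erase i₀).eq_empty_or_nonempty with he | he
  · rw [he, Finset.sum_empty, add_zero]
  · refine add_eq_left (nult_sum he fun i hi => ?_)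
    exact h i (Finset.mem_of_mem_erase hi) (Finset.ne_of_mem_erase hi)

lemma sum_eq_ghost {ι : Type*} {s : Finset ι} {x : ι → R} {i₀ i₁ : ι} (h0 : i₀ ∈ s)
    (h1 : i₁ ∈ s) (hne : i₁ ≠ i₀) (he : nu (x i₀) = nu (x i₁))
    (h : ∀ i ∈ s, nuLe (x i) (x i₀)) : ∑ i ∈ s, x i = nu (x i₀) := by
  classical
  have h1' : i₁ ∈ s.erase i₀ := Finset.mem_erase.2 ⟨hne, h1⟩
  rw [← Finset.add_sum_erase s x h0, ← Finset.add_sum_erase _ x h1', ← add_assoc,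
    supertropicality _ _ he]
  refine nu_add_absorb (nule_sum fun i hi => ?_)
  exact h i (Finset.mem_of_mem_erase (Finset.mem_of_mem_erase hi))

def STInv (a : R) : Prop := ∃ b, a * b = 1

lemma STInv.mul {a b : R} (ha : STInv a) (hb : STInv b) : STInv (a * b) := by
  obtain ⟨a', ha'⟩ := ha; obtain ⟨b', hb'⟩ := hb
  exact ⟨a' * b', by rw [mul_mul_mul_comm, ha', hb', one_mul]⟩

lemma STInv.one : STInv (1 : R) := ⟨1, one_mul 1⟩

lemma nule_cancel {a b c : R} (h : nuLe (a * c) (b * c)) (hc : STInv c) : nuLe a b := by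
  obtain ⟨d, hd⟩ := hc
  have h2 := nule_mul_right d h
  rw [mul_assoc, mul_assoc, hd, mul_one, mul_one] at h2
  exact h2

lemma mul_cancel_eq {a b c : R} (h : a * c = b * c) (hc : STInv c) : a = b := by
  obtain ⟨d, hd⟩ := hc
  have h2 := congrArg (· * d) h
  simpa [mul_assoc, hd] using h2

lemma nu_mul_cancel {a b c : R} (h : nu (a * c) = nu (b * c)) (hc : STInv c) : nu a = nu b :=
  nule_antisymm (nule_cancel (nule_of_nu_eq h) hc) (nule_cancel (nule_of_nu_eq h.symm) hc)

lemma nult_mul_of_nule {a b c d : R} (h1 : nuLt a b) (h2 : nuLe c d) (hc : STInv c) :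
    nuLt (a * c) (b * d) := by
  refine ⟨nule_mul h1.1 h2, fun he => ?_⟩
  have l1 : nuLe (a * c) (b * c) := nule_mul_right c h1.1
  have l2 : nuLe (b * c) (b * d) := by
    rw [mul_comm b c, mul_comm b d]; exact nule_mul_right b h2
  have l3 : nuLe (b * c) (a * c) := nule_trans l2 (nule_of_nu_eq he.symm)
  exact h1.2 (nu_mul_cancel (nule_antisymm l1 l3) hc)

lemma nu_prod_congr {ι : Type*} {s : Finset ι} {x y : ι → R}
    (h : ∀ i ∈ s, nu (x i) = nu (y i)) : nu (∏ i ∈ s, x i) = nu (∏ i ∈ s, y i) := by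
  induction s using Finset.cons_induction with
  | empty => rfl
  | cons a s ha ih =>
    rw [Finset.prod_cons, Finset.prod_cons, nu_mul, nu_mul,
      h a (Finset.mem_cons_self a s), ih fun i hi => h i (Finset.mem_cons_of_mem hi)]

end ST10


namespace ST10
open Supertropical

section Semifield
variable {K : Type*} [STSemifield K]

lemma tangible_ne_zero {x : K} (h : tangible x) : x ≠ 0 := by
  intro he
  exact h (by rw [he]; exact nu_zero)

lemma STInv_of_tangible {x : K} (h : tangible x) : STInv x := by
  obtain ⟨y, _, hy⟩ := STSemifield.tangible_inv x h
  exact ⟨y, hy⟩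

lemma tangible_prod {ι : Type*} {s : Finset ι} {x : ι → K}
    (h : ∀ i ∈ s, tangible (x i)) : tangible (∏ i ∈ s, x i) := by
  induction s using Finset.cons_induction with
  | empty => simpa using STSemifield.tangible_one
  | cons a s ha ih =>
    rw [Finset.prod_cons]
    exact STSemifield.tangible_mul _ _ (h a (Finset.mem_cons_self a s))
      (ih fun i hi => h i (Finset.mem_cons_of_mem hi))

lemma nu_ne_zero_of_tangible {x : K} (h : tangible x) : nu x ≠ 0 := by
  intro h0
  obtain ⟨y, hy⟩ := STInv_of_tangible h
  have hone : nu (1 : K) = 0 := by rw [← hy, nu_mul, h0, zero_mul]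
  have hall : ∀ z : K, nu z = 0 := fun z => by
    have : nu z = nu z * nu 1 := by rw [← nu_mul, mul_one]
    rw [this, hone, mul_zero]
  have hz : ∀ z : K, z = 0 := fun z => by
    have h1 : z + 0 = nu z := supertropicality z 0 (by rw [hall, nu_zero])
    rw [add_zero] at h1
    rw [h1, hall]
  exact STSemifield.tangible_one (show ghost (1 : K) by
    show nu (1 : K) = 1
    rw [hone, hz 1])

end Semifield

section Merge
variable {R : Type*} [Supertropical R]

open scoped Classical in
noncomputable def mX (m n : ℕ) (a b : ℕ → R) : ℕ → ℕ
  | 0 => 0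
  | s + 1 =>
    let x := mX m n a b s
    if x < m ∧ (n ≤ s - x ∨ nuLe (a (x + 1)) (b (s - x + 1))) then x + 1 else x

variable (m n : ℕ) (a b : ℕ → R)

lemma mX_zero : mX m n a b 0 = 0 := rfl

open scoped Classical in
lemma mX_succ (s : ℕ) : mX m n a b (s+1) =
    (if mX m n a b s < m ∧ (n ≤ s - mX m n a b s ∨
      nuLe (a (mX m n a b s + 1)) (b (s - mX m n a b s + 1)))
     then mX m n a b s + 1 else mX m n a b s) := by
  rw [mX]

lemma mX_step (s : ℕ) : mX m n a b (s+1) = mX m n a b s + 1 ∨ mX m n a b (s+1) = mX m n a b s := by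
  rw [mX_succ]
  split
  · exact Or.inl rfl
  · exact Or.inr rfl

lemma mX_le_succ (s : ℕ) : mX m n a b s ≤ mX m n a b (s+1) := by
  rcases mX_step m n a b s with h | h <;> omega

lemma mX_mono : Monotone (mX m n a b) := monotone_nat_of_le_succ (mX_le_succ m n a b)

lemma mX_le_self (s : ℕ) : mX m n a b s ≤ s := by
  induction s with
  | zero => exact le_of_eq (mX_zero m n a b)
  | succ s ih => rcases mX_step m n a b s with h | h <;> omega

lemma mX_le_m (s : ℕ) : mX m n a b s ≤ m := by
  induction s with
  | zero => simp [mX_zero]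
  | succ s ih =>
    rw [mX_succ]
    split
    · next h => omega
    · exact ih

lemma mY_le_n (s : ℕ) (hs : s ≤ m + n) : s - mX m n a b s ≤ n := by
  induction s with
  | zero => simp
  | succ s ih =>
    have hxs := mX_le_self m n a b s
    have hxm := mX_le_m m n a b s
    rw [mX_succ]
    split
    · next h => omega
    · next h =>
      rcases Nat.lt_or_ge (mX m n a b s) m with hlt | hge
      · have h2 : ¬ (n ≤ s - mX m n a b s ∨
            nuLe (a (mX m n a b s + 1)) (b (s - mX m n a b s + 1))) := fun hc => h ⟨hlt, hc⟩
        omega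
      · omega

lemma mX_final : mX m n a b (m + n) = m := by
  have h1 := mX_le_m m n a b (m+n)
  have h2 := mY_le_n m n a b (m+n) le_rfl
  omega

lemma mergeM1 (hbs : ∀ j, 1 ≤ j → j < n → nuLe (b j) (b (j+1))) :
    ∀ s, 1 ≤ mX m n a b s → s - mX m n a b s < n →
      nuLe (a (mX m n a b s)) (b (s - mX m n a b s + 1)) := by
  intro s
  induction s with
  | zero => rw [mX_zero]; omega
  | succ s ih =>
    have hxs := mX_le_self m n a b s
    rw [mX_succ]
    split
    · next h =>
      intro _ hyn
      have h2 : ¬ n ≤ s - mX m n a b s := by omega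
      rcases h.2 with hc | hc
      · exact absurd hc h2
      · have he : s + 1 - (mX m n a b s + 1) = s - mX m n a b s := by omega
        rw [he]
        exact hc
    · next h =>
      intro hx1 hyn
      have he : s + 1 - mX m n a b s = s - mX m n a b s + 1 := by omega
      rw [he]
      refine nule_trans (ih hx1 (by omega)) ?_
      exact hbs _ (by omega) (by omega)

lemma mergeM2 (has : ∀ i, 1 ≤ i → i < m → nuLe (a i) (a (i+1))) :
    ∀ s, 1 ≤ s - mX m n a b s → mX m n a b s < m →
      nuLt (b (s - mX m n a b s)) (a (mX m n a b s + 1)) := by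
  intro s
  induction s with
  | zero => rw [mX_zero]; omega
  | succ s ih =>
    have hxs := mX_le_self m n a b s
    rw [mX_succ]
    split
    · next h =>
      intro hy1 hxm
      have he : s + 1 - (mX m n a b s + 1) = s - mX m n a b s := by omega
      rw [he] at hy1 ⊢
      refine nult_of_nult_of_nule (ih hy1 h.1) ?_
      exact has _ (by omega) (by omega)
    · next h =>
      intro hy1 hxm
      have he : s + 1 - mX m n a b s = s - mX m n a b s + 1 := by omega
      rw [he]
      rcases Nat.lt_or_ge (mX m n a b s) m with hlt | hge
      · have h2 : ¬ (n ≤ s - mX m n a b s ∨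
            nuLe (a (mX m n a b s + 1)) (b (s - mX m n a b s + 1))) := fun hc => h ⟨hlt, hc⟩
        push_neg at h2
        exact nult_of_not_nule h2.2
      · omega

lemma reachA : ∀ s t, 1 ≤ t → t ≤ mX m n a b s →
    ∃ u, u < s ∧ mX m n a b u = t - 1 ∧ mX m n a b (u+1) = t := by
  intro s
  induction s with
  | zero => rw [mX_zero]; omega
  | succ s ih =>
    intro t ht1 hts
    rcases mX_step m n a b s with h | h
    · rcases Nat.lt_or_ge (mX m n a b s) t with hlt | hge
      · exact ⟨s, by omega, by omega, by omega⟩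
      · obtain ⟨u, hu1, hu2, hu3⟩ := ih t ht1 hge
        exact ⟨u, by omega, hu2, hu3⟩
    · obtain ⟨u, hu1, hu2, hu3⟩ := ih t ht1 (by omega)
      exact ⟨u, by omega, hu2, hu3⟩

lemma reachB : ∀ s t, 1 ≤ t → t ≤ s - mX m n a b s →
    ∃ u, u < s ∧ mX m n a b (u+1) = mX m n a b u ∧ (u+1) - mX m n a b (u+1) = t := by
  intro s
  induction s with
  | zero => rw [mX_zero]; omega
  | succ s ih =>
    intro t ht1 hts
    have hxs := mX_le_self m n a b s
    rcases mX_step m n a b s with h | h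
    · have : t ≤ s - mX m n a b s := by omega
      obtain ⟨u, hu1, hu2, hu3⟩ := ih t ht1 this
      exact ⟨u, by omega, hu2, hu3⟩
    · rcases Nat.lt_or_ge (s - mX m n a b s) t with hlt | hge
      · exact ⟨s, by omega, h, by omega⟩
      · obtain ⟨u, hu1, hu2, hu3⟩ := ih t ht1 hge
        exact ⟨u, by omega, hu2, hu3⟩

end Merge
end ST10


namespace ST10
open Supertropical

lemma nule_congr {R : Type*} [Supertropical R] {x y x' y' : R}
    (h : nuLe x y) (e1 : x = x') (e2 : y = y') : nuLe x' y' := e1 ▸ e2 ▸ h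

lemma nult_congr {R : Type*} [Supertropical R] {x y x' y' : R}
    (h : nuLt x y) (e1 : x = x') (e2 : y = y') : nuLt x' y' := e1 ▸ e2 ▸ h

section Split
variable {K : Type*} [STSemifield K]

lemma sorted_le {m : ℕ} {a : ℕ → K} (has : ∀ i, 1 ≤ i → i < m → nuLe (a i) (a (i+1)))
    {i : ℕ} (h1 : 1 ≤ i) : ∀ i', i ≤ i' → i' ≤ m → nuLe (a i) (a i') := by
  intro i'
  induction i' with
  | zero => intro h2 _; exact ((by omega : False).elim)
  | succ i' ih =>
    intro h2 h3
    rcases Nat.lt_or_ge i (i'+1) with h | h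
    · exact nule_trans (ih (by omega) (by omega)) (has i' (by omega) (by omega))
    · have he : i = i' + 1 := by omega
      rw [he]
      exact nule_refl _

/-- `Tprod m a p = ∏_{t=p+1}^{m} a t` -/
noncomputable def Tprod (m : ℕ) (a : ℕ → K) (p : ℕ) : K := ∏ t ∈ Finset.Icc (p+1) m, a t

lemma Tprod_peel {m p : ℕ} (a : ℕ → K) (h : p < m) :
    Tprod m a p = a (p+1) * Tprod m a (p+1) := by
  have hc : Finset.Icc (p+1) m = Finset.cons (p+1) (Finset.Icc (p+2) m)
      (by simp [Finset.mem_Icc]) := by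
    ext t; simp only [Finset.mem_Icc, Finset.mem_cons]; omega
  rw [Tprod, hc, Finset.prod_cons]; rfl

lemma Tprod_tangible {m : ℕ} {a : ℕ → K} (ht : ∀ t, 1 ≤ t → t ≤ m → tangible (a t))
    (p : ℕ) : tangible (Tprod m a p) := by
  refine tangible_prod fun t htm => ?_
  rw [Finset.mem_Icc] at htm
  exact ht t (by omega) (by omega)

variable (m n : ℕ) (a b : ℕ → K)

/-- the dominant split value at position `s` -/
noncomputable def Vhat (s : ℕ) : K :=
  Tprod m a (mX m n a b s) * Tprod n b (s - mX m n a b s)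

lemma climbLe (has : ∀ i, 1 ≤ i → i < m → nuLe (a i) (a (i+1)))
    (hbs : ∀ j, 1 ≤ j → j < n → nuLe (b j) (b (j+1))) :
    ∀ s, s ≤ m + n → ∀ k p, mX m n a b s - p = k → p ≤ mX m n a b s → s - p ≤ n →
      nuLe (Tprod m a p * Tprod n b (s - p)) (Vhat m n a b s) := by
  intro s _ k
  induction k with
  | zero =>
    intro p hk hp _
    have : p = mX m n a b s := by omega
    rw [this, Vhat]
    exact nule_refl _
  | succ k ih =>
    intro p hk hp hq
    have hxs := mX_le_self m n a b s
    have hxm := mX_le_m m n a b s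
    have hplt : p < mX m n a b s := by omega
    have k1 : nuLe (a (p+1)) (a (mX m n a b s)) :=
      sorted_le has (by omega) _ (by omega) (by omega)
    have k2 := mergeM1 m n a b hbs s (by omega) (by omega)
    have k3 : nuLe (b (s - mX m n a b s + 1)) (b (s - p)) :=
      sorted_le hbs (by omega) _ (by omega) (by omega)
    have key : nuLe (a (p+1)) (b (s - p)) := nule_trans k1 (nule_trans k2 k3)
    have e1 : Tprod m a p = a (p+1) * Tprod m a (p+1) := Tprod_peel a (by omega)
    have e2 : Tprod n b (s - (p+1)) = b (s - p) * Tprod n b (s - p) := by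
      have h2 : s - (p+1) + 1 = s - p := by omega
      rw [Tprod_peel b (by omega), h2]
    have step : nuLe (Tprod m a p * Tprod n b (s - p))
        (Tprod m a (p+1) * Tprod n b (s - (p+1))) := by
      refine nule_congr (nule_mul_right (Tprod m a (p+1) * Tprod n b (s - p)) key) ?_ ?_
      · rw [e1]; ring
      · rw [e2]; ring
    exact nule_trans step (ih (p+1) (by omega) (by omega) (by omega))

lemma descendLe (has : ∀ i, 1 ≤ i → i < m → nuLe (a i) (a (i+1)))
    (hbs : ∀ j, 1 ≤ j → j < n → nuLe (b j) (b (j+1))) :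
    ∀ s, s ≤ m + n → ∀ k p, p - mX m n a b s = k → mX m n a b s ≤ p → p ≤ m → p ≤ s →
      nuLe (Tprod m a p * Tprod n b (s - p)) (Vhat m n a b s) := by
  intro s hs k
  induction k with
  | zero =>
    intro p hk hp _ _
    have : p = mX m n a b s := by omega
    rw [this, Vhat]
    exact nule_refl _
  | succ k ih =>
    intro p hk hp hpm hps
    have hxs := mX_le_self m n a b s
    have hyn := mY_le_n m n a b s hs
    have hplt : mX m n a b s < p := by omega
    have k1 : nuLe (b (s - p + 1)) (b (s - mX m n a b s)) :=
      sorted_le hbs (by omega) _ (by omega) (by omega)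
    have k2 := (mergeM2 m n a b has s (by omega) (by omega)).1
    have k3 : nuLe (a (mX m n a b s + 1)) (a p) :=
      sorted_le has (by omega) _ (by omega) (by omega)
    have key : nuLe (b (s - p + 1)) (a p) := nule_trans k1 (nule_trans k2 k3)
    have e1 : Tprod m a (p-1) = a p * Tprod m a p := by
      have h2 : p - 1 + 1 = p := by omega
      rw [Tprod_peel a (by omega : p - 1 < m), h2]
    have e2 : Tprod n b (s - p) = b (s - p + 1) * Tprod n b (s - p + 1) := by
      rw [Tprod_peel b (by omega : s - p < n)]
    have step : nuLe (Tprod m a p * Tprod n b (s - p))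
        (Tprod m a (p-1) * Tprod n b (s - (p-1))) := by
      refine nule_congr (nule_mul_right (Tprod m a p * Tprod n b (s - p + 1)) key) ?_ ?_
      · rw [e2]; ring
      · rw [e1]
        have : s - (p-1) = s - p + 1 := by omega
        rw [this]; ring
    exact nule_trans step (ih (p-1) (by omega) (by omega) (by omega) (by omega))

lemma splitOptLe (has : ∀ i, 1 ≤ i → i < m → nuLe (a i) (a (i+1)))
    (hbs : ∀ j, 1 ≤ j → j < n → nuLe (b j) (b (j+1)))
    {s p : ℕ} (hs : s ≤ m + n) (hpm : p ≤ m) (hps : p ≤ s) (hq : s - p ≤ n) :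
    nuLe (Tprod m a p * Tprod n b (s - p)) (Vhat m n a b s) := by
  rcases Nat.le_total p (mX m n a b s) with h | h
  · exact climbLe m n a b has hbs s hs _ p rfl h hq
  · exact descendLe m n a b has hbs s hs _ p rfl h hpm hps

lemma climbLt (has : ∀ i, 1 ≤ i → i < m → nuLe (a i) (a (i+1)))
    (hbs : ∀ j, 1 ≤ j → j < n → nuLe (b j) (b (j+1)))
    (hta : ∀ i, 1 ≤ i → i ≤ m → tangible (a i))
    (htb : ∀ j, 1 ≤ j → j ≤ n → tangible (b j))
    (hst : ∀ i j, 1 ≤ i → i ≤ m → 1 ≤ j → j ≤ n → nu (a i) ≠ nu (b j))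
    {s p : ℕ} (hs : s ≤ m + n) (hp : p < mX m n a b s) (hq : s - p ≤ n) :
    nuLt (Tprod m a p * Tprod n b (s - p)) (Vhat m n a b s) := by
  have hxs := mX_le_self m n a b s
  have hxm := mX_le_m m n a b s
  have k1 : nuLe (a (p+1)) (a (mX m n a b s)) :=
    sorted_le has (by omega) _ (by omega) (by omega)
  have k2 := mergeM1 m n a b hbs s (by omega) (by omega)
  have k3 : nuLe (b (s - mX m n a b s + 1)) (b (s - p)) :=
    sorted_le hbs (by omega) _ (by omega) (by omega)
  have key : nuLt (a (p+1)) (b (s - p)) :=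
    ⟨nule_trans k1 (nule_trans k2 k3), hst (p+1) (s-p) (by omega) (by omega) (by omega) (by omega)⟩
  have e1 : Tprod m a p = a (p+1) * Tprod m a (p+1) := Tprod_peel a (by omega)
  have e2 : Tprod n b (s - (p+1)) = b (s - p) * Tprod n b (s - p) := by
    have h2 : s - (p+1) + 1 = s - p := by omega
    rw [Tprod_peel b (by omega), h2]
  have hC : STInv (Tprod m a (p+1) * Tprod n b (s - p)) :=
    (STInv_of_tangible (Tprod_tangible hta _)).mul (STInv_of_tangible (Tprod_tangible htb _))
  have step : nuLt (Tprod m a p * Tprod n b (s - p))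
      (Tprod m a (p+1) * Tprod n b (s - (p+1))) := by
    refine nult_congr (nult_mul_of_nule key (nule_refl _) hC) ?_ ?_
    · rw [e1]; ring
    · rw [e2]; ring
  exact nult_of_nult_of_nule step
    (climbLe m n a b has hbs s hs _ (p+1) rfl (by omega) (by omega))

lemma descendLt (has : ∀ i, 1 ≤ i → i < m → nuLe (a i) (a (i+1)))
    (hbs : ∀ j, 1 ≤ j → j < n → nuLe (b j) (b (j+1)))
    (hta : ∀ i, 1 ≤ i → i ≤ m → tangible (a i))
    (htb : ∀ j, 1 ≤ j → j ≤ n → tangible (b j))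
    (hst : ∀ i j, 1 ≤ i → i ≤ m → 1 ≤ j → j ≤ n → nu (a i) ≠ nu (b j))
    {s p : ℕ} (hs : s ≤ m + n) (hp : mX m n a b s < p) (hpm : p ≤ m) (hps : p ≤ s) :
    nuLt (Tprod m a p * Tprod n b (s - p)) (Vhat m n a b s) := by
  have hxs := mX_le_self m n a b s
  have hyn := mY_le_n m n a b s hs
  have k1 : nuLe (b (s - p + 1)) (b (s - mX m n a b s)) :=
    sorted_le hbs (by omega) _ (by omega) (by omega)
  have k2 := (mergeM2 m n a b has s (by omega) (by omega)).1
  have k3 : nuLe (a (mX m n a b s + 1)) (a p) :=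
    sorted_le has (by omega) _ (by omega) (by omega)
  have key : nuLt (b (s - p + 1)) (a p) :=
    ⟨nule_trans k1 (nule_trans k2 k3),
     fun h => hst p (s - p + 1) (by omega) (by omega) (by omega) (by omega) h.symm⟩
  have e1 : Tprod m a (p-1) = a p * Tprod m a p := by
    have h2 : p - 1 + 1 = p := by omega
    rw [Tprod_peel a (by omega : p - 1 < m), h2]
  have e2 : Tprod n b (s - p) = b (s - p + 1) * Tprod n b (s - p + 1) := by
    rw [Tprod_peel b (by omega : s - p < n)]
  have hC : STInv (Tprod m a p * Tprod n b (s - p + 1)) :=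
    (STInv_of_tangible (Tprod_tangible hta _)).mul (STInv_of_tangible (Tprod_tangible htb _))
  have step : nuLt (Tprod m a p * Tprod n b (s - p))
      (Tprod m a (p-1) * Tprod n b (s - (p-1))) := by
    refine nult_congr (nult_mul_of_nule key (nule_refl _) hC) ?_ ?_
    · rw [e2]; ring
    · rw [e1]
      have : s - (p-1) = s - p + 1 := by omega
      rw [this]; ring
  exact nult_of_nult_of_nule step
    (descendLe m n a b has hbs s hs _ (p-1) rfl (by omega) (by omega) (by omega))

lemma splitOptLt (has : ∀ i, 1 ≤ i → i < m → nuLe (a i) (a (i+1)))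
    (hbs : ∀ j, 1 ≤ j → j < n → nuLe (b j) (b (j+1)))
    (hta : ∀ i, 1 ≤ i → i ≤ m → tangible (a i))
    (htb : ∀ j, 1 ≤ j → j ≤ n → tangible (b j))
    (hst : ∀ i j, 1 ≤ i → i ≤ m → 1 ≤ j → j ≤ n → nu (a i) ≠ nu (b j))
    {s p : ℕ} (hs : s ≤ m + n) (hne : p ≠ mX m n a b s)
    (hpm : p ≤ m) (hps : p ≤ s) (hq : s - p ≤ n) :
    nuLt (Tprod m a p * Tprod n b (s - p)) (Vhat m n a b s) := by
  rcases Nat.lt_or_ge p (mX m n a b s) with h | h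
  · exact climbLt m n a b has hbs hta htb hst hs h hq
  · exact descendLt m n a b has hbs hta htb hst hs (by omega) hpm hps

end Split
end ST10


namespace ST10
open Supertropical

section MoreSums
variable {R : Type*} [Supertropical R]

lemma nule_prod {ι : Type*} {s : Finset ι} {x y : ι → R}
    (h : ∀ i ∈ s, nuLe (x i) (y i)) : nuLe (∏ i ∈ s, x i) (∏ i ∈ s, y i) := by
  induction s using Finset.cons_induction with
  | empty => exact nule_refl _
  | cons a s ha ih =>
    rw [Finset.prod_cons, Finset.prod_cons]
    exact nule_mul (h a (Finset.mem_cons_self a s))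
      (ih fun i hi => h i (Finset.mem_cons_of_mem hi))

lemma STInv_prod {ι : Type*} {s : Finset ι} {x : ι → R}
    (h : ∀ i ∈ s, STInv (x i)) : STInv (∏ i ∈ s, x i) := by
  induction s using Finset.cons_induction with
  | empty => exact STInv.one
  | cons a s ha ih =>
    rw [Finset.prod_cons]
    exact (h a (Finset.mem_cons_self a s)).mul (ih fun i hi => h i (Finset.mem_cons_of_mem hi))

lemma nult_cancel {a b c : R} (h : nuLt (a * c) (b * c)) (hc : STInv c) : nuLt a b :=
  ⟨nule_cancel h.1 hc, fun he => h.2 (by rw [nu_mul, nu_mul, he])⟩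

lemma nult_prod {ι : Type*} {s : Finset ι} {x y : ι → R} {i₀ : ι} (h0 : i₀ ∈ s)
    (h : ∀ i ∈ s, nuLe (x i) (y i)) (hstrict : nuLt (x i₀) (y i₀))
    (hinv : ∀ i ∈ s, STInv (x i)) :
    nuLt (∏ i ∈ s, x i) (∏ i ∈ s, y i) := by
  classical
  rw [← Finset.prod_erase_mul s x h0, ← Finset.prod_erase_mul s y h0]
  have hrest : nuLe (∏ i ∈ s.erase i₀, x i) (∏ i ∈ s.erase i₀, y i) :=
    nule_prod fun i hi => h i (Finset.mem_of_mem_erase hi)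
  have hinvr : STInv (∏ i ∈ s.erase i₀, x i) :=
    STInv_prod fun i hi => hinv i (Finset.mem_of_mem_erase hi)
  have := nult_mul_of_nule hstrict hrest hinvr
  exact nult_congr this (mul_comm _ _) (mul_comm _ _)

end MoreSums

/-- all the data and hypotheses of the main theorem -/
structure Setup (K : Type*) [STSemifield K] where
  m : ℕ
  n : ℕ
  hm : 1 ≤ m
  hn : 1 ≤ n
  f : Polynomial K
  g : Polynomial K
  a : ℕ → K
  b : ℕ → K
  hcf : ∀ i, m < i → f.coeff i = 0
  hcg : ∀ j, n < j → g.coeff j = 0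
  htf : ∀ i ≤ m, tangible (f.coeff i)
  htg : ∀ j ≤ n, tangible (g.coeff j)
  hta : ∀ i, 1 ≤ i → i ≤ m → tangible (a i)
  htb : ∀ j, 1 ≤ j → j ≤ n → tangible (b j)
  ha : ∀ i, 1 ≤ i → i ≤ m → f.coeff i * a i = f.coeff (i - 1)
  hb : ∀ j, 1 ≤ j → j ≤ n → g.coeff j * b j = g.coeff (j - 1)
  has : ∀ i, 1 ≤ i → i < m → nuLe (a i) (a (i+1))
  hbs : ∀ j, 1 ≤ j → j < n → nuLe (b j) (b (j+1))

namespace Setup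
variable {K : Type*} [STSemifield K] (S : Setup K)

noncomputable def x (s : ℕ) : ℕ := mX S.m S.n S.a S.b s
noncomputable def y (s : ℕ) : ℕ := s - S.x s

noncomputable def A : Matrix (Fin (S.m + S.n)) (Fin (S.m + S.n)) K := resMatrix S.m S.n S.f S.g

/-- position `s ≥ 1` is an `a`-step -/
noncomputable def isA (s : ℕ) : Prop := S.x s = S.x (s-1) + 1

noncomputable instance (s : ℕ) : Decidable (S.isA s) := Nat.decEq _ _

lemma isA_or (s : ℕ) : S.isA (s+1) ∨ S.x (s+1) = S.x s := by
  rcases mX_step S.m S.n S.a S.b s with h | h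
  · left; show S.x (s+1) = S.x (s+1-1) + 1; simpa [x] using h
  · right; exact h

lemma x_of_isA {s : ℕ} (h : S.isA (s+1)) : S.x (s+1) = S.x s + 1 := by
  simpa [isA] using h

lemma x_of_not_isA {s : ℕ} (h : ¬ S.isA (s+1)) : S.x (s+1) = S.x s := by
  rcases S.isA_or s with h1 | h1
  · exact absurd h1 h
  · exact h1

lemma x_le_m (s : ℕ) : S.x s ≤ S.m := mX_le_m _ _ _ _ s
lemma x_le_self (s : ℕ) : S.x s ≤ s := mX_le_self _ _ _ _ s
lemma y_le_n {s : ℕ} (hs : s ≤ S.m + S.n) : S.y s ≤ S.n := mY_le_n _ _ _ _ s hs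
lemma x_mono : Monotone S.x := mX_mono _ _ _ _

lemma telA : ∀ k r, S.m - r = k → r ≤ S.m → S.f.coeff r = S.f.coeff S.m * Tprod S.m S.a r := by
  intro k
  induction k with
  | zero =>
    intro r hk hr
    have hrm : r = S.m := by omega
    rw [hrm]
    have he : Finset.Icc (S.m+1) S.m = ∅ := Finset.Icc_eq_empty (by omega)
    rw [Tprod, he, Finset.prod_empty, mul_one]
  | succ k ih =>
    intro r hk hr
    have hrm : r < S.m := by omega
    have h1 := S.ha (r+1) (by omega) (by omega)
    simp only [Nat.add_sub_cancel] at h1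
    rw [← h1, ih (r+1) (by omega) (by omega), Tprod_peel S.a hrm]
    ring

lemma telB : ∀ k r, S.n - r = k → r ≤ S.n → S.g.coeff r = S.g.coeff S.n * Tprod S.n S.b r := by
  intro k
  induction k with
  | zero =>
    intro r hk hr
    have hrn : r = S.n := by omega
    rw [hrn]
    have he : Finset.Icc (S.n+1) S.n = ∅ := Finset.Icc_eq_empty (by omega)
    rw [Tprod, he, Finset.prod_empty, mul_one]
  | succ k ih =>
    intro r hk hr
    have hrm : r < S.n := by omega
    have h1 := S.hb (r+1) (by omega) (by omega)
    simp only [Nat.add_sub_cancel] at h1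
    rw [← h1, ih (r+1) (by omega) (by omega), Tprod_peel S.b hrm]
    ring

/-- the optimal column-to-row assignment -/
noncomputable def pstar (j : Fin (S.m + S.n)) : Fin (S.m + S.n) :=
  if h : S.isA ((j:ℕ)+1) then
    ⟨S.n + (S.x ((j:ℕ)+1) - 1), by
      have h1 := S.x_le_m ((j:ℕ)+1)
      have h2 := S.x_of_isA h
      omega⟩
  else
    ⟨S.y ((j:ℕ)+1) - 1, by
      have h1 := S.y_le_n (show (j:ℕ)+1 ≤ S.m + S.n by omega)
      have h2 := S.hn
      have h3 := S.hm
      omega⟩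

lemma pstar_of_A {j : Fin (S.m + S.n)} (h : S.isA ((j:ℕ)+1)) :
    (S.pstar j : ℕ) = S.n + (S.x ((j:ℕ)+1) - 1) := by
  simp [pstar, h]

lemma pstar_of_B {j : Fin (S.m + S.n)} (h : ¬ S.isA ((j:ℕ)+1)) :
    (S.pstar j : ℕ) = S.y ((j:ℕ)+1) - 1 := by
  simp [pstar, h]

lemma entryF {r j : Fin (S.m + S.n)} (hr : (r:ℕ) < S.n) (hle : (r:ℕ) ≤ (j:ℕ)) :
    S.A r j = S.f.coeff ((j:ℕ) - (r:ℕ)) := by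
  show resMatrix S.m S.n S.f S.g r j = _
  rw [resMatrix, if_pos hr, if_pos hle]

lemma entryF0 {r j : Fin (S.m + S.n)} (hr : (r:ℕ) < S.n) (hgt : (j:ℕ) < (r:ℕ)) :
    S.A r j = 0 := by
  show resMatrix S.m S.n S.f S.g r j = _
  rw [resMatrix, if_pos hr, if_neg (by omega)]

lemma entryG {r j : Fin (S.m + S.n)} (hr : S.n ≤ (r:ℕ)) (hle : (r:ℕ) - S.n ≤ (j:ℕ)) :
    S.A r j = S.g.coeff ((j:ℕ) - ((r:ℕ) - S.n)) := by
  show resMatrix S.m S.n S.f S.g r j = _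
  rw [resMatrix, if_neg (by omega), if_pos hle]

lemma entryG0 {r j : Fin (S.m + S.n)} (hr : S.n ≤ (r:ℕ)) (hgt : (j:ℕ) < (r:ℕ) - S.n) :
    S.A r j = 0 := by
  show resMatrix S.m S.n S.f S.g r j = _
  rw [resMatrix, if_neg (by omega), if_neg (by omega)]

lemma entry_tangible {r j : Fin (S.m + S.n)} (h : S.A r j ≠ 0) : tangible (S.A r j) := by
  rcases Nat.lt_or_ge (r:ℕ) S.n with hr | hr
  · rcases Nat.lt_or_ge (j:ℕ) (r:ℕ) with hj | hj
    · exact absurd (S.entryF0 hr hj) h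
    · rw [S.entryF hr hj] at h ⊢
      rcases le_or_gt ((j:ℕ) - (r:ℕ)) S.m with hle | hlt
      · exact S.htf _ hle
      · exact absurd (S.hcf _ hlt) h
  · rcases Nat.lt_or_ge (j:ℕ) ((r:ℕ) - S.n) with hj | hj
    · exact absurd (S.entryG0 hr hj) h
    · rw [S.entryG hr hj] at h ⊢
      rcases le_or_gt ((j:ℕ) - ((r:ℕ) - S.n)) S.n with hle | hlt
      · exact S.htg _ hle
      · exact absurd (S.hcg _ hlt) h

/-- value of the optimal entry -/
lemma entry_pstar (j : Fin (S.m + S.n)) :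
    S.A (S.pstar j) j =
      if S.isA ((j:ℕ)+1) then S.g.coeff (S.y ((j:ℕ)+1)) else S.f.coeff (S.x ((j:ℕ)+1)) := by
  by_cases h : S.isA ((j:ℕ)+1)
  · rw [if_pos h]
    have hx := S.x_of_isA h
    have hxs := S.x_le_self ((j:ℕ)+1)
    have hco := S.pstar_of_A h
    have hr : S.n ≤ (S.pstar j : ℕ) := by omega
    rw [S.entryG hr (by omega)]
    congr 1
    show (j:ℕ) - ((S.pstar j : ℕ) - S.n) = S.y ((j:ℕ)+1)
    rw [hco]
    unfold y
    omega
  · rw [if_neg h]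
    have hx := S.x_of_not_isA h
    have hxs := S.x_le_self (j:ℕ)
    have hco := S.pstar_of_B h
    have hyn := S.y_le_n (show (j:ℕ)+1 ≤ S.m + S.n by omega)
    have hys : S.y ((j:ℕ)+1) = (j:ℕ) + 1 - S.x ((j:ℕ)+1) := rfl
    have hr : (S.pstar j : ℕ) < S.n := by
      have := S.hn; omega
    rw [S.entryF hr (by omega)]
    congr 1
    omega

noncomputable def Vh (s : ℕ) : K := Vhat S.m S.n S.a S.b s

noncomputable def drow (r : Fin (S.m + S.n)) : K :=
  if (r:ℕ) < S.n then Tprod S.n S.b ((r:ℕ)+1) else Tprod S.m S.a ((r:ℕ) - S.n + 1)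

noncomputable def lead (r : Fin (S.m + S.n)) : K :=
  if (r:ℕ) < S.n then S.f.coeff S.m else S.g.coeff S.n

lemma drow_tangible (r : Fin (S.m + S.n)) : tangible (S.drow r) := by
  unfold drow
  split
  · exact Tprod_tangible S.htb _
  · exact Tprod_tangible S.hta _

lemma lead_tangible (r : Fin (S.m + S.n)) : tangible (S.lead r) := by
  unfold lead
  split
  · exact S.htf _ le_rfl
  · exact S.htg _ le_rfl

lemma Vh_tangible (s : ℕ) : tangible (S.Vh s) :=
  STSemifield.tangible_mul _ _ (Tprod_tangible S.hta _) (Tprod_tangible S.htb _)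

lemma Vh_def (s : ℕ) : S.Vh s = Tprod S.m S.a (S.x s) * Tprod S.n S.b (S.y s) := rfl

end Setup
end ST10


namespace ST10
namespace Setup
open Supertropical
variable {K : Type*} [STSemifield K] (S : Setup K)

lemma colBound (r j : Fin (S.m + S.n)) :
    nuLe (S.A r j * S.drow r) (S.lead r * S.Vh ((j:ℕ)+1)) := by
  have hjlt := j.isLt
  have hrlt := r.isLt
  by_cases hz : S.A r j = 0
  · rw [hz, zero_mul]; exact nule_zero _
  rcases Nat.lt_or_ge (r:ℕ) S.n with hr | hr
  · have hle : (r:ℕ) ≤ (j:ℕ) := by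
      by_contra hgt; exact hz (S.entryF0 hr (by omega))
    rw [S.entryF hr hle] at hz ⊢
    have hpm : (j:ℕ) - (r:ℕ) ≤ S.m := by
      by_contra hlt; exact hz (S.hcf _ (by omega))
    have htel := S.telA _ ((j:ℕ) - (r:ℕ)) rfl hpm
    have hsp : ((j:ℕ)+1) - ((j:ℕ) - (r:ℕ)) = (r:ℕ)+1 := by omega
    have hdr : S.drow r = Tprod S.n S.b ((r:ℕ)+1) := by rw [drow, if_pos hr]
    have hld : S.lead r = S.f.coeff S.m := by rw [lead, if_pos hr]
    have hopt := splitOptLe S.m S.n S.a S.b S.has S.hbs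
      (s := (j:ℕ)+1) (p := (j:ℕ) - (r:ℕ)) (by omega) hpm (by omega) (by omega)
    rw [hsp] at hopt
    refine nule_congr (nule_mul_right (S.f.coeff S.m) hopt) ?_ ?_
    · rw [htel, hdr]; ring
    · rw [hld]; unfold Vh; ring
  · have hle : (r:ℕ) - S.n ≤ (j:ℕ) := by
      by_contra hgt; exact hz (S.entryG0 hr (by omega))
    rw [S.entryG hr hle] at hz ⊢
    have hqn : (j:ℕ) - ((r:ℕ) - S.n) ≤ S.n := by
      by_contra hlt; exact hz (S.hcg _ (by omega))
    have htel := S.telB _ ((j:ℕ) - ((r:ℕ) - S.n)) rfl hqn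
    have hsp : ((j:ℕ)+1) - (((r:ℕ) - S.n)+1) = (j:ℕ) - ((r:ℕ) - S.n) := by omega
    have hdr : S.drow r = Tprod S.m S.a (((r:ℕ) - S.n)+1) := by rw [drow, if_neg (by omega)]
    have hld : S.lead r = S.g.coeff S.n := by rw [lead, if_neg (by omega)]
    have hopt := splitOptLe S.m S.n S.a S.b S.has S.hbs
      (s := (j:ℕ)+1) (p := ((r:ℕ) - S.n)+1) (by omega) (by omega) (by omega) (by omega)
    rw [hsp] at hopt
    refine nule_congr (nule_mul_right (S.g.coeff S.n) hopt) ?_ ?_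
    · rw [htel, hdr]; ring
    · rw [hld]; unfold Vh; ring

lemma y_pos_of_not_isA {j : Fin (S.m + S.n)} (h : ¬ S.isA ((j:ℕ)+1)) :
    1 ≤ S.y ((j:ℕ)+1) := by
  have h1 := S.x_of_not_isA h
  have h2 := S.x_le_self (j:ℕ)
  unfold y
  omega

lemma x_pos_of_isA {j : Fin (S.m + S.n)} (h : S.isA ((j:ℕ)+1)) :
    1 ≤ S.x ((j:ℕ)+1) := by
  have h1 := S.x_of_isA h
  omega

lemma colExact (j : Fin (S.m + S.n)) :
    S.A (S.pstar j) j * S.drow (S.pstar j) = S.lead (S.pstar j) * S.Vh ((j:ℕ)+1) := by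
  have hjlt := j.isLt
  by_cases h : S.isA ((j:ℕ)+1)
  · have hco := S.pstar_of_A h
    have hx1 := S.x_pos_of_isA h
    have hxm := S.x_le_m ((j:ℕ)+1)
    have hyn := S.y_le_n (show (j:ℕ)+1 ≤ S.m + S.n by omega)
    have hdr : S.drow (S.pstar j) = Tprod S.m S.a (S.x ((j:ℕ)+1)) := by
      rw [drow, if_neg (by omega)]
      congr 1
      omega
    have hld : S.lead (S.pstar j) = S.g.coeff S.n := by rw [lead, if_neg (by omega)]
    rw [S.entry_pstar j, if_pos h, hdr, hld, S.telB _ (S.y ((j:ℕ)+1)) rfl hyn, S.Vh_def]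
    ring
  · have hco := S.pstar_of_B h
    have hy1 := S.y_pos_of_not_isA h
    have hyn := S.y_le_n (show (j:ℕ)+1 ≤ S.m + S.n by omega)
    have hxm := S.x_le_m ((j:ℕ)+1)
    have hdr : S.drow (S.pstar j) = Tprod S.n S.b (S.y ((j:ℕ)+1)) := by
      rw [drow, if_pos (by omega)]
      congr 1
      omega
    have hld : S.lead (S.pstar j) = S.f.coeff S.m := by rw [lead, if_pos (by omega)]
    rw [S.entry_pstar j, if_neg h, hdr, hld, S.telA _ (S.x ((j:ℕ)+1)) rfl hxm, S.Vh_def]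
    ring

lemma tight_char
    (hst : ∀ i j, 1 ≤ i → i ≤ S.m → 1 ≤ j → j ≤ S.n → nu (S.a i) ≠ nu (S.b j))
    {r j : Fin (S.m + S.n)}
    (ht : nu (S.A r j * S.drow r) = nu (S.lead r * S.Vh ((j:ℕ)+1))) :
    ((r:ℕ) < S.n ∧ (r:ℕ) + 1 = S.y ((j:ℕ)+1)) ∨
      (S.n ≤ (r:ℕ) ∧ (r:ℕ) - S.n + 1 = S.x ((j:ℕ)+1)) := by
  have hjlt := j.isLt
  have hrlt := r.isLt
  have hz : S.A r j ≠ 0 := by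
    intro h0
    rw [h0, zero_mul, nu_zero] at ht
    exact nu_ne_zero_of_tangible
      (STSemifield.tangible_mul _ _ (S.lead_tangible r) (S.Vh_tangible _)) ht.symm
  rcases Nat.lt_or_ge (r:ℕ) S.n with hr | hr
  · left
    refine ⟨hr, ?_⟩
    have hle : (r:ℕ) ≤ (j:ℕ) := by
      by_contra hgt; exact hz (S.entryF0 hr (by omega))
    have hpm : (j:ℕ) - (r:ℕ) ≤ S.m := by
      by_contra hlt; rw [S.entryF hr hle] at hz; exact hz (S.hcf _ (by omega))
    by_contra hne
    have hpne : (j:ℕ) - (r:ℕ) ≠ S.x ((j:ℕ)+1) := by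
      unfold y at hne; have := S.x_le_self ((j:ℕ)+1); omega
    have hopt := splitOptLt S.m S.n S.a S.b S.has S.hbs S.hta S.htb hst
      (s := (j:ℕ)+1) (p := (j:ℕ) - (r:ℕ)) (by omega) hpne hpm (by omega) (by omega)
    have hsp : ((j:ℕ)+1) - ((j:ℕ) - (r:ℕ)) = (r:ℕ)+1 := by omega
    rw [hsp] at hopt
    have hstrict := nult_mul_of_nule hopt (nule_refl (S.f.coeff S.m))
      (STInv_of_tangible (S.htf _ le_rfl))
    have htel := S.telA _ ((j:ℕ) - (r:ℕ)) rfl hpm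
    have hdr : S.drow r = Tprod S.n S.b ((r:ℕ)+1) := by rw [drow, if_pos hr]
    have hld : S.lead r = S.f.coeff S.m := by rw [lead, if_pos hr]
    refine hstrict.2 ?_
    have e1 : Tprod S.m S.a ((j:ℕ) - (r:ℕ)) * Tprod S.n S.b ((r:ℕ)+1) * S.f.coeff S.m
        = S.A r j * S.drow r := by
      rw [S.entryF hr hle, htel, hdr]; ring
    have e2 : Vhat S.m S.n S.a S.b ((j:ℕ)+1) * S.f.coeff S.m = S.lead r * S.Vh ((j:ℕ)+1) := by
      rw [hld, show Vhat S.m S.n S.a S.b ((j:ℕ)+1) = S.Vh ((j:ℕ)+1) from rfl]; ring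
    rw [e1, e2, ht]
  · right
    refine ⟨hr, ?_⟩
    have hle : (r:ℕ) - S.n ≤ (j:ℕ) := by
      by_contra hgt; exact hz (S.entryG0 hr (by omega))
    have hqn : (j:ℕ) - ((r:ℕ) - S.n) ≤ S.n := by
      by_contra hlt; rw [S.entryG hr hle] at hz; exact hz (S.hcg _ (by omega))
    by_contra hne
    have hopt := splitOptLt S.m S.n S.a S.b S.has S.hbs S.hta S.htb hst
      (s := (j:ℕ)+1) (p := ((r:ℕ) - S.n)+1) (by omega) hne (by omega) (by omega) (by omega)
    have hsp : ((j:ℕ)+1) - (((r:ℕ) - S.n)+1) = (j:ℕ) - ((r:ℕ) - S.n) := by omega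
    rw [hsp] at hopt
    have hstrict := nult_mul_of_nule hopt (nule_refl (S.g.coeff S.n))
      (STInv_of_tangible (S.htg _ le_rfl))
    have htel := S.telB _ ((j:ℕ) - ((r:ℕ) - S.n)) rfl hqn
    have hdr : S.drow r = Tprod S.m S.a (((r:ℕ) - S.n)+1) := by rw [drow, if_neg (by omega)]
    have hld : S.lead r = S.g.coeff S.n := by rw [lead, if_neg (by omega)]
    refine hstrict.2 ?_
    have e1 : Tprod S.m S.a (((r:ℕ) - S.n)+1) * Tprod S.n S.b ((j:ℕ) - ((r:ℕ) - S.n))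
        * S.g.coeff S.n = S.A r j * S.drow r := by
      rw [S.entryG hr hle, htel, hdr]; ring
    have e2 : Vhat S.m S.n S.a S.b ((j:ℕ)+1) * S.g.coeff S.n = S.lead r * S.Vh ((j:ℕ)+1) := by
      rw [hld, show Vhat S.m S.n S.a S.b ((j:ℕ)+1) = S.Vh ((j:ℕ)+1) from rfl]; ring
    rw [e1, e2, ht]

end Setup
end ST10


namespace ST10
namespace Setup
open Supertropical
variable {K : Type*} [STSemifield K] (S : Setup K)

lemma y_mono : Monotone S.y := by
  apply monotone_nat_of_le_succ
  intro s
  have h1 : S.x (s+1) ≤ S.x s + 1 := by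
    rcases S.isA_or s with h | h
    · rw [S.x_of_isA h]
    · omega
  have h2 := S.x_le_self s
  unfold y
  omega

lemma lastB {s : ℕ} (h : 1 ≤ S.y s) : ∃ u, u < s ∧ ¬ S.isA (u+1) ∧ S.y (u+1) = S.y s := by
  obtain ⟨u, hu1, hu2, hu3⟩ := reachB S.m S.n S.a S.b s (S.y s) h le_rfl
  refine ⟨u, hu1, fun hA => ?_, hu3⟩
  have := S.x_of_isA hA
  change S.x (u+1) = S.x u at hu2
  omega

lemma lastA {s : ℕ} (h : 1 ≤ S.x s) : ∃ u, u < s ∧ S.isA (u+1) ∧ S.x (u+1) = S.x s := by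
  obtain ⟨u, hu1, hu2, hu3⟩ := reachA S.m S.n S.a S.b s (S.x s) h le_rfl
  refine ⟨u, hu1, ?_, hu3⟩
  show S.x (u+1) = S.x (u+1-1) + 1
  simp only [Nat.add_sub_cancel]
  change S.x u = S.x s - 1 at hu2
  change S.x (u+1) = S.x s at hu3
  omega

lemma y_succ_of_not_isA {s : ℕ} (h : ¬ S.isA (s+1)) : S.y (s+1) = S.y s + 1 := by
  have h1 := S.x_of_not_isA h
  have h2 := S.x_le_self s
  unfold y
  omega

lemma y_succ_of_isA {s : ℕ} (h : S.isA (s+1)) : S.y (s+1) = S.y s := by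
  have h1 := S.x_of_isA h
  have h2 := S.x_le_self s
  unfold y
  omega

lemma pstar_injective : Function.Injective S.pstar := by
  intro j j' he
  by_cases hA : S.isA ((j:ℕ)+1) <;> by_cases hA' : S.isA ((j':ℕ)+1)
  · have e1 := S.pstar_of_A hA
    have e2 := S.pstar_of_A hA'
    have hx1 := S.x_pos_of_isA hA
    have hx2 := S.x_pos_of_isA hA'
    have hxx : S.x ((j:ℕ)+1) = S.x ((j':ℕ)+1) := by
      rw [he] at e1; omega
    rcases Nat.lt_trichotomy (j:ℕ) (j':ℕ) with h | h | h
    · exfalso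
      have hm := S.x_mono (show (j:ℕ)+1 ≤ (j':ℕ) by omega)
      have := S.x_of_isA hA'
      omega
    · exact Fin.ext h
    · exfalso
      have hm := S.x_mono (show (j':ℕ)+1 ≤ (j:ℕ) by omega)
      have := S.x_of_isA hA
      omega
  · exfalso
    have e1 := S.pstar_of_A hA
    have e2 := S.pstar_of_B hA'
    have hy := S.y_le_n (show (j':ℕ)+1 ≤ S.m + S.n by have := j'.isLt; omega)
    have := S.hn
    rw [he] at e1
    omega
  · exfalso
    have e1 := S.pstar_of_B hA
    have e2 := S.pstar_of_A hA'
    have hy := S.y_le_n (show (j:ℕ)+1 ≤ S.m + S.n by have := j.isLt; omega)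
    have := S.hn
    rw [he] at e1
    omega
  · have e1 := S.pstar_of_B hA
    have e2 := S.pstar_of_B hA'
    have hy1 := S.y_pos_of_not_isA hA
    have hy2 := S.y_pos_of_not_isA hA'
    have hyy : S.y ((j:ℕ)+1) = S.y ((j':ℕ)+1) := by
      rw [he] at e1; omega
    rcases Nat.lt_trichotomy (j:ℕ) (j':ℕ) with h | h | h
    · exfalso
      have hm := S.y_mono (show (j:ℕ)+1 ≤ (j':ℕ) by omega)
      have := S.y_succ_of_not_isA hA'
      omega
    · exact Fin.ext h
    · exfalso
      have hm := S.y_mono (show (j':ℕ)+1 ≤ (j:ℕ) by omega)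
      have := S.y_succ_of_not_isA hA
      omega

lemma tight_unique
    (hst : ∀ i j, 1 ≤ i → i ≤ S.m → 1 ≤ j → j ≤ S.n → nu (S.a i) ≠ nu (S.b j))
    (p : Fin (S.m + S.n) → Fin (S.m + S.n)) (hinj : Function.Injective p)
    (htight : ∀ j, nu (S.A (p j) j * S.drow (p j)) = nu (S.lead (p j) * S.Vh ((j:ℕ)+1))) :
    ∀ j, p j = S.pstar j := by
  have H : ∀ N, ∀ j : Fin (S.m + S.n), (j:ℕ) < N → p j = S.pstar j := by
    intro N
    induction N with
    | zero => intro j hj; omega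
    | succ N ih =>
      intro j hj
      rcases Nat.lt_or_ge (j:ℕ) N with hlt | hge
      · exact ih j hlt
      · have hjN : (j:ℕ) = N := by omega
        have hjlt := j.isLt
        rcases S.tight_char hst (htight j) with ⟨hrn, hry⟩ | ⟨hrn, hrx⟩
        · -- p j is the f-row with index y-1
          by_cases hA : S.isA ((j:ℕ)+1)
          · exfalso
            have hy1 : 1 ≤ S.y ((j:ℕ)+1) := by omega
            obtain ⟨u, hu1, hu2, hu3⟩ := S.lastB hy1
            have huj : u ≠ (j:ℕ) := fun hee => hu2 (hee ▸ hA)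
            have hult : u < (j:ℕ) := by omega
            set ju : Fin (S.m + S.n) := ⟨u, by omega⟩ with hju
            have hpu : p ju = S.pstar ju := ih ju (by show u < N; omega)
            have hpsu : (S.pstar ju : ℕ) = S.y (u+1) - 1 := S.pstar_of_B hu2
            have hee : p j = p ju := by
              apply Fin.ext
              have h1 : (p j : ℕ) = S.y ((j:ℕ)+1) - 1 := by omega
              rw [h1, hpu, hpsu, hu3]
            have hv : (j:ℕ) = u := congrArg Fin.val (hinj hee)
            omega
          · apply Fin.ext
            rw [S.pstar_of_B hA]
            omega
        · -- p j is the g-row with index x-1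
          by_cases hA : S.isA ((j:ℕ)+1)
          · apply Fin.ext
            rw [S.pstar_of_A hA]
            omega
          · exfalso
            have hx1 : 1 ≤ S.x ((j:ℕ)+1) := by omega
            obtain ⟨u, hu1, hu2, hu3⟩ := S.lastA hx1
            have huj : u ≠ (j:ℕ) := fun hee => hA (hee ▸ hu2)
            have hult : u < (j:ℕ) := by omega
            set ju : Fin (S.m + S.n) := ⟨u, by omega⟩ with hju
            have hpu : p ju = S.pstar ju := ih ju (by show u < N; omega)
            have hpsu : (S.pstar ju : ℕ) = S.n + (S.x (u+1) - 1) := S.pstar_of_A hu2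
            have hee : p j = p ju := by
              apply Fin.ext
              have h1 : (p j : ℕ) = S.n + (S.x ((j:ℕ)+1) - 1) := by omega
              rw [h1, hpu, hpsu, hu3]
            have hv : (j:ℕ) = u := congrArg Fin.val (hinj hee)
            omega
  intro j
  exact H ((j:ℕ)+1) j (by omega)

end Setup
end ST10


namespace ST10
namespace Setup
open Supertropical
variable {K : Type*} [STSemifield K] (S : Setup K)

noncomputable def Wcol (p : Fin (S.m + S.n) → Fin (S.m + S.n)) : K := ∏ j, S.A (p j) j
noncomputable def Pd : K := ∏ r, S.drow r
noncomputable def Ld : K := ∏ r, S.lead r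
noncomputable def VV : K := ∏ j : Fin (S.m + S.n), S.Vh ((j:ℕ)+1)

lemma Pd_tangible : tangible S.Pd := tangible_prod fun r _ => S.drow_tangible r

lemma prod_split (e : Equiv.Perm (Fin (S.m + S.n))) :
    ∏ j, (S.A (e j) j * S.drow (e j)) = S.Wcol ⇑e * S.Pd := by
  rw [Finset.prod_mul_distrib]
  congr 1
  exact Equiv.prod_comp e S.drow

lemma prod_split_rhs (e : Equiv.Perm (Fin (S.m + S.n))) :
    ∏ j, (S.lead (e j) * S.Vh ((j:ℕ)+1)) = S.Ld * S.VV := by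
  rw [Finset.prod_mul_distrib]
  congr 1
  exact Equiv.prod_comp e S.lead

noncomputable def pequiv : Equiv.Perm (Fin (S.m + S.n)) :=
  Equiv.ofBijective S.pstar (Finite.injective_iff_bijective.mp S.pstar_injective)

lemma pequiv_apply (j : Fin (S.m + S.n)) : S.pequiv j = S.pstar j := rfl

lemma wcol_exact : S.Wcol S.pstar * S.Pd = S.Ld * S.VV := by
  have h1 : ∏ j, (S.A (S.pstar j) j * S.drow (S.pstar j))
      = ∏ j, (S.lead (S.pstar j) * S.Vh ((j:ℕ)+1)) :=
    Finset.prod_congr rfl fun j _ => S.colExact j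
  have h2 := S.prod_split S.pequiv
  have h3 := S.prod_split_rhs S.pequiv
  have hc : ⇑S.pequiv = S.pstar := rfl
  rw [hc] at h2 h3
  rw [← h2, h1, h3]

lemma wcol_bound (e : Equiv.Perm (Fin (S.m + S.n))) :
    nuLe (S.Wcol ⇑e * S.Pd) (S.Ld * S.VV) := by
  have h1 : nuLe (∏ j, (S.A (e j) j * S.drow (e j))) (∏ j, (S.lead (e j) * S.Vh ((j:ℕ)+1))) :=
    nule_prod fun j _ => S.colBound (e j) j
  exact nule_congr h1 (S.prod_split e) (S.prod_split_rhs e)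

lemma wcol_le (e : Equiv.Perm (Fin (S.m + S.n))) :
    nuLe (S.Wcol ⇑e) (S.Wcol S.pstar) := by
  have h := S.wcol_bound e
  rw [← S.wcol_exact] at h
  exact nule_cancel h (STInv_of_tangible S.Pd_tangible)

lemma wstar_tangible : tangible (S.Wcol S.pstar) := by
  refine tangible_prod fun j _ => ?_
  rw [S.entry_pstar j]
  have hjlt := j.isLt
  split
  · exact S.htg _ (S.y_le_n (by omega))
  · exact S.htf _ (S.x_le_m _)

lemma wcol_lt
    (hst : ∀ i j, 1 ≤ i → i ≤ S.m → 1 ≤ j → j ≤ S.n → nu (S.a i) ≠ nu (S.b j))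
    (e : Equiv.Perm (Fin (S.m + S.n))) (hne : ⇑e ≠ S.pstar) :
    nuLt (S.Wcol ⇑e) (S.Wcol S.pstar) := by
  by_cases hz : ∃ j, S.A (e j) j = 0
  · obtain ⟨j0, hj0⟩ := hz
    have hzz : S.Wcol ⇑e = 0 := Finset.prod_eq_zero (Finset.mem_univ j0) hj0
    rw [hzz]
    refine ⟨nule_zero _, ?_⟩
    rw [nu_zero]
    exact fun h => nu_ne_zero_of_tangible S.wstar_tangible h.symm
  · push_neg at hz
    have htan : ∀ j, tangible (S.A (e j) j * S.drow (e j)) := fun j =>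
      STSemifield.tangible_mul _ _ (S.entry_tangible (hz j)) (S.drow_tangible _)
    have hnt : ∃ j0, nu (S.A (e j0) j0 * S.drow (e j0))
        ≠ nu (S.lead (e j0) * S.Vh ((j0:ℕ)+1)) := by
      by_contra hall
      push_neg at hall
      exact hne (funext (S.tight_unique hst ⇑e e.injective hall))
    obtain ⟨j0, hj0⟩ := hnt
    have h1 : nuLt (∏ j, (S.A (e j) j * S.drow (e j)))
        (∏ j, (S.lead (e j) * S.Vh ((j:ℕ)+1))) := by
      refine nult_prod (Finset.mem_univ j0) (fun j _ => S.colBound (e j) j)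
        ⟨S.colBound (e j0) j0, hj0⟩ (fun j _ => STInv_of_tangible (htan j))
    have h2 := nult_congr h1 (S.prod_split e) (S.prod_split_rhs e)
    rw [← S.wcol_exact] at h2
    exact nult_cancel h2 (STInv_of_tangible S.Pd_tangible)

lemma sdet_eq_sum_cols : sdet S.A = ∑ σ : Equiv.Perm (Fin (S.m + S.n)), S.Wcol ⇑σ := by
  unfold sdet Wcol
  refine Fintype.sum_equiv (Equiv.inv (Equiv.Perm (Fin (S.m + S.n)))) _ _ fun σ => ?_
  rw [← Equiv.prod_comp σ (fun j => S.A ((Equiv.inv (Equiv.Perm (Fin (S.m + S.n))) σ) j) j)]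
  refine Finset.prod_congr rfl fun i _ => ?_
  simp [Equiv.inv_apply]

lemma main_strict
    (hst : ∀ i j, 1 ≤ i → i ≤ S.m → 1 ≤ j → j ≤ S.n → nu (S.a i) ≠ nu (S.b j)) :
    sdet S.A = S.Wcol S.pstar := by
  rw [S.sdet_eq_sum_cols]
  have he : S.Wcol ⇑S.pequiv = S.Wcol S.pstar := rfl
  rw [show S.Wcol S.pstar = S.Wcol ⇑S.pequiv from rfl]
  refine sum_eq_of_max (Finset.mem_univ S.pequiv) fun σ _ hne => ?_
  rw [he]
  refine S.wcol_lt hst σ fun hc => hne ?_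
  exact Equiv.ext fun j => by rw [hc]; rfl

end Setup
end ST10


namespace ST10
open Supertropical

open scoped Classical

lemma prod_T_eq {K : Type*} [STSemifield K] (N mm : ℕ) (w : ℕ → ℕ) (c : ℕ → K) :
    ∏ s ∈ Finset.range N, Tprod mm c (w s)
      = ∏ t ∈ Finset.Icc 1 mm, c t ^ ((Finset.range N).filter (fun s => w s < t)).card := by
  have h1 : ∀ s, Tprod mm c (w s) = ∏ t ∈ Finset.Icc 1 mm, (if w s < t then c t else 1) := by
    intro s
    rw [Tprod, ← Finset.prod_filter]
    congr 1
    ext t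
    simp only [Finset.mem_Icc, Finset.mem_filter]
    omega
  calc ∏ s ∈ Finset.range N, Tprod mm c (w s)
      = ∏ s ∈ Finset.range N, ∏ t ∈ Finset.Icc 1 mm, (if w s < t then c t else 1) :=
        Finset.prod_congr rfl fun s _ => h1 s
    _ = ∏ t ∈ Finset.Icc 1 mm, ∏ s ∈ Finset.range N, (if w s < t then c t else 1) :=
        Finset.prod_comm
    _ = ∏ t ∈ Finset.Icc 1 mm, c t ^ ((Finset.range N).filter (fun s => w s < t)).card := by
        refine Finset.prod_congr rfl fun t _ => ?_
        rw [← Finset.prod_filter, Finset.prod_const]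

namespace Setup
variable {K : Type*} [STSemifield K] (S : Setup K)

lemma M1' {s : ℕ} (h1 : 1 ≤ S.x s) (h2 : S.y s < S.n) :
    nuLe (S.a (S.x s)) (S.b (S.y s + 1)) :=
  mergeM1 S.m S.n S.a S.b S.hbs s h1 h2

lemma M2' {s : ℕ} (h1 : 1 ≤ S.y s) (h2 : S.x s < S.m) :
    nuLt (S.b (S.y s)) (S.a (S.x s + 1)) :=
  mergeM2 S.m S.n S.a S.b S.has s h1 h2

lemma cntA {t : ℕ} (ht1 : 1 ≤ t) (htm : t ≤ S.m) :
    ((Finset.range (S.m + S.n)).filter (fun s => S.x (s+1) < t)).card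
      = (t - 1) + ((Finset.Icc 1 S.n).filter (fun j => nuLt (S.b j) (S.a t))).card := by
  have hxf : mX S.m S.n S.a S.b (S.m + S.n) = S.m := mX_final S.m S.n S.a S.b
  obtain ⟨u, hu1, hu2, hu3⟩ := reachA S.m S.n S.a S.b (S.m + S.n) t ht1 (by rw [hxf]; omega)
  change S.x u = t - 1 at hu2
  change S.x (u+1) = t at hu3
  have hxu := S.x_le_self u
  have hyun := S.y_le_n (show u ≤ S.m + S.n by omega)
  have hyu : S.y u = u - (t-1) := by unfold y; omega
  have hA : S.isA (u+1) := by
    show S.x (u+1) = S.x (u+1-1) + 1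
    simp only [Nat.add_sub_cancel]
    omega
  have hyA : S.y (u+1) = S.y u := S.y_succ_of_isA hA
  have hfr : (Finset.range (S.m + S.n)).filter (fun s => S.x (s+1) < t) = Finset.range u := by
    ext s
    simp only [Finset.mem_filter, Finset.mem_range]
    constructor
    · rintro ⟨hs, hx⟩
      by_contra hsu
      have := S.x_mono (show u + 1 ≤ s + 1 by omega)
      omega
    · intro hsu
      have := S.x_mono (show s + 1 ≤ u by omega)
      exact ⟨by omega, by omega⟩
  have hset : (Finset.Icc 1 S.n).filter (fun j => nuLt (S.b j) (S.a t)) =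
      Finset.Icc 1 (S.y u) := by
    ext j
    simp only [Finset.mem_filter, Finset.mem_Icc]
    constructor
    · rintro ⟨⟨hj1, hjn⟩, hlt⟩
      refine ⟨hj1, ?_⟩
      by_contra hju
      have hyn : S.y u < S.n := by omega
      have hM1 := S.M1' (s := u+1) (by omega) (by omega)
      rw [hu3, hyA] at hM1
      have hbb : nuLe (S.b (S.y u + 1)) (S.b j) :=
        sorted_le S.hbs (by omega) _ (by omega) (by omega)
      exact not_nule_of_nult hlt (nule_trans hM1 hbb)
    · rintro ⟨hj1, hju⟩
      have hy1 : 1 ≤ S.y u := by omega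
      have hM2 := S.M2' (s := u) hy1 (by omega)
      rw [hu2] at hM2
      have hidx : t - 1 + 1 = t := by omega
      rw [hidx] at hM2
      have hbb : nuLe (S.b j) (S.b (S.y u)) :=
        sorted_le S.hbs (by omega) _ (by omega) (by omega)
      exact ⟨⟨hj1, by omega⟩, nult_of_nule_of_nult hbb hM2⟩
  rw [hfr, hset, Finset.card_range, Nat.card_Icc]
  omega

lemma cntB {t : ℕ} (ht1 : 1 ≤ t) (htn : t ≤ S.n) :
    ((Finset.range (S.m + S.n)).filter (fun s => S.y (s+1) < t)).card
      = (t - 1) + ((Finset.Icc 1 S.m).filter (fun i => nuLe (S.a i) (S.b t))).card := by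
  have hxf : mX S.m S.n S.a S.b (S.m + S.n) = S.m := mX_final S.m S.n S.a S.b
  have hxf' : S.x (S.m + S.n) = S.m := hxf
  obtain ⟨u, hu1, hu2, hu3⟩ := reachB S.m S.n S.a S.b (S.m + S.n) t ht1
    (by show t ≤ (S.m + S.n) - mX S.m S.n S.a S.b (S.m + S.n); rw [hxf]; omega)
  change S.x (u+1) = S.x u at hu2
  have hu3' : S.y (u+1) = t := hu3
  have hxu := S.x_le_self u
  have hxm := S.x_le_m u
  have hnA : ¬ S.isA (u+1) := fun hA => by
    have := S.x_of_isA hA; omega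
  have hyB : S.y (u+1) = S.y u + 1 := S.y_succ_of_not_isA hnA
  have hyu : S.y u = t - 1 := by omega
  have hfr : (Finset.range (S.m + S.n)).filter (fun s => S.y (s+1) < t) = Finset.range u := by
    ext s
    simp only [Finset.mem_filter, Finset.mem_range]
    constructor
    · rintro ⟨hs, hy⟩
      by_contra hsu
      have := S.y_mono (show u + 1 ≤ s + 1 by omega)
      omega
    · intro hsu
      have := S.y_mono (show s + 1 ≤ u by omega)
      exact ⟨by omega, by omega⟩
  have hset : (Finset.Icc 1 S.m).filter (fun i => nuLe (S.a i) (S.b t)) =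
      Finset.Icc 1 (S.x u) := by
    ext i
    simp only [Finset.mem_filter, Finset.mem_Icc]
    constructor
    · rintro ⟨⟨hi1, him⟩, hle⟩
      refine ⟨hi1, ?_⟩
      by_contra hiu
      have hxlt : S.x u < S.m := by omega
      have hM2 := S.M2' (s := u+1) (by omega) (by omega)
      rw [hu3', hu2] at hM2
      have haa : nuLe (S.a (S.x u + 1)) (S.a i) :=
        sorted_le S.has (by omega) _ (by omega) (by omega)
      exact not_nule_of_nult (nult_of_nult_of_nule hM2 haa) hle
    · rintro ⟨hi1, hiu⟩
      have hx1 : 1 ≤ S.x u := by omega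
      have hM1 := S.M1' (s := u) hx1 (by omega)
      rw [hyu] at hM1
      have hidx : t - 1 + 1 = t := by omega
      rw [hidx] at hM1
      have haa : nuLe (S.a i) (S.a (S.x u)) :=
        sorted_le S.has (by omega) _ (by omega) (by omega)
      exact ⟨⟨hi1, by omega⟩, nule_trans haa hM1⟩
  rw [hfr, hset, Finset.card_range, Nat.card_Icc]
  have hxy : S.x u + S.y u = u := by unfold y; omega
  omega

end Setup
end ST10


namespace ST10
open Supertropical
open scoped Classical

lemma tangible_pow {K : Type*} [STSemifield K] {x : K} (h : tangible x) (k : ℕ) :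
    tangible (x ^ k) := by
  induction k with
  | zero => simpa using STSemifield.tangible_one
  | succ k ih => rw [pow_succ]; exact STSemifield.tangible_mul _ _ ih h

lemma prod_shift {K : Type*} [STSemifield K] (mm : ℕ) (c : ℕ → K) :
    ∏ s ∈ Finset.range mm, Tprod mm c (s+1) = ∏ t ∈ Finset.Icc 1 mm, c t ^ (t-1) := by
  rw [prod_T_eq mm mm (fun s => s+1) c]
  refine Finset.prod_congr rfl fun t ht => ?_
  rw [Finset.mem_Icc] at ht
  congr 1
  have : (Finset.range mm).filter (fun s => s + 1 < t) = Finset.range (t-1) := by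
    ext s
    simp only [Finset.mem_filter, Finset.mem_range]
    omega
  rw [this, Finset.card_range]

namespace Setup
variable {K : Type*} [STSemifield K] (S : Setup K)

noncomputable def TanC : K :=
  ∏ i ∈ Finset.Icc 1 S.m, ∏ j ∈ Finset.Icc 1 S.n,
    (if nuLe (S.a i) (S.b j) then S.b j else S.a i)

noncomputable def Aex : K := ∏ t ∈ Finset.Icc 1 S.m, S.a t ^ (t-1)
noncomputable def Bex : K := ∏ t ∈ Finset.Icc 1 S.n, S.b t ^ (t-1)
noncomputable def PA : K :=
  ∏ t ∈ Finset.Icc 1 S.m, S.a t ^ ((Finset.Icc 1 S.n).filter (fun j => nuLt (S.b j) (S.a t))).card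
noncomputable def PB : K :=
  ∏ t ∈ Finset.Icc 1 S.n, S.b t ^ ((Finset.Icc 1 S.m).filter (fun i => nuLe (S.a i) (S.b t))).card

lemma VV_eq : S.VV = (S.Aex * S.PA) * (S.Bex * S.PB) := by
  have h0 : S.VV = ∏ s ∈ Finset.range (S.m + S.n),
      (Tprod S.m S.a (S.x (s+1)) * Tprod S.n S.b (S.y (s+1))) := by
    rw [VV]
    rw [← Fin.prod_univ_eq_prod_range
      (fun s => Tprod S.m S.a (S.x (s+1)) * Tprod S.n S.b (S.y (s+1))) (S.m + S.n)]
    exact Finset.prod_congr rfl fun j _ => S.Vh_def _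
  rw [h0, Finset.prod_mul_distrib,
    prod_T_eq (S.m + S.n) S.m (fun s => S.x (s+1)) S.a,
    prod_T_eq (S.m + S.n) S.n (fun s => S.y (s+1)) S.b]
  have hA : ∏ t ∈ Finset.Icc 1 S.m,
      S.a t ^ ((Finset.range (S.m + S.n)).filter (fun s => S.x (s+1) < t)).card
      = S.Aex * S.PA := by
    rw [Aex, PA, ← Finset.prod_mul_distrib]
    refine Finset.prod_congr rfl fun t ht => ?_
    rw [Finset.mem_Icc] at ht
    rw [S.cntA ht.1 ht.2, pow_add]
  have hB : ∏ t ∈ Finset.Icc 1 S.n,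
      S.b t ^ ((Finset.range (S.m + S.n)).filter (fun s => S.y (s+1) < t)).card
      = S.Bex * S.PB := by
    rw [Bex, PB, ← Finset.prod_mul_distrib]
    refine Finset.prod_congr rfl fun t ht => ?_
    rw [Finset.mem_Icc] at ht
    rw [S.cntB ht.1 ht.2, pow_add]
  rw [hA, hB]

lemma TanC_eq : S.TanC = S.PA * S.PB := by
  have hfac : ∀ i j : ℕ, (if nuLe (S.a i) (S.b j) then S.b j else S.a i)
      = (if nuLt (S.b j) (S.a i) then S.a i else 1)
        * (if nuLe (S.a i) (S.b j) then S.b j else 1) := by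
    intro i j
    by_cases h : nuLe (S.a i) (S.b j)
    · have hn : ¬ nuLt (S.b j) (S.a i) := fun hlt => not_nule_of_nult hlt h
      rw [if_pos h, if_neg hn, if_pos h, one_mul]
    · have hl : nuLt (S.b j) (S.a i) := nult_of_not_nule h
      rw [if_neg h, if_pos hl, if_neg h, mul_one]
  have h1 : S.TanC = (∏ i ∈ Finset.Icc 1 S.m, ∏ j ∈ Finset.Icc 1 S.n,
        (if nuLt (S.b j) (S.a i) then S.a i else 1))
      * ∏ i ∈ Finset.Icc 1 S.m, ∏ j ∈ Finset.Icc 1 S.n,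
        (if nuLe (S.a i) (S.b j) then S.b j else 1) := by
    rw [TanC, ← Finset.prod_mul_distrib]
    refine Finset.prod_congr rfl fun i _ => ?_
    rw [← Finset.prod_mul_distrib]
    exact Finset.prod_congr rfl fun j _ => hfac i j
  rw [h1]
  congr 1
  · rw [PA]
    refine Finset.prod_congr rfl fun i _ => ?_
    rw [← Finset.prod_filter, Finset.prod_const]
  · rw [PB]
    rw [Finset.prod_comm]
    refine Finset.prod_congr rfl fun j _ => ?_
    rw [← Finset.prod_filter, Finset.prod_const]

lemma Pd_eq : S.Pd = S.Bex * S.Aex := by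
  have h0 : S.Pd = ∏ rv ∈ Finset.range (S.m + S.n),
      (if rv < S.n then Tprod S.n S.b (rv+1) else Tprod S.m S.a (rv - S.n + 1)) := by
    rw [Pd]
    exact Fin.prod_univ_eq_prod_range
      (fun rv => if rv < S.n then Tprod S.n S.b (rv+1) else Tprod S.m S.a (rv - S.n + 1))
      (S.m + S.n)
  rw [h0, show S.m + S.n = S.n + S.m from add_comm _ _, Finset.prod_range_add]
  congr 1
  · rw [Bex, ← prod_shift S.n S.b]
    refine Finset.prod_congr rfl fun s hs => ?_
    rw [Finset.mem_range] at hs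
    rw [if_pos hs]
  · rw [Aex, ← prod_shift S.m S.a]
    refine Finset.prod_congr rfl fun s _ => ?_
    rw [if_neg (by omega)]
    congr 2
    omega

lemma Ld_eq : S.Ld = S.f.coeff S.m ^ S.n * S.g.coeff S.n ^ S.m := by
  have h0 : S.Ld = ∏ rv ∈ Finset.range (S.m + S.n),
      (if rv < S.n then S.f.coeff S.m else S.g.coeff S.n) := by
    rw [Ld]
    exact Fin.prod_univ_eq_prod_range
      (fun rv => if rv < S.n then S.f.coeff S.m else S.g.coeff S.n) (S.m + S.n)
  rw [h0, show S.m + S.n = S.n + S.m from add_comm _ _, Finset.prod_range_add]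
  congr 1
  · rw [Finset.prod_congr rfl (fun s hs => if_pos (Finset.mem_range.mp hs)),
      Finset.prod_const, Finset.card_range]
  · rw [Finset.prod_congr rfl (fun s _ => if_neg (by omega : ¬ S.n + s < S.n)),
      Finset.prod_const, Finset.card_range]

lemma Aex_tangible : tangible S.Aex :=
  tangible_prod fun t ht => tangible_pow (S.hta t (by simp [Finset.mem_Icc] at ht; omega)
    (by simp [Finset.mem_Icc] at ht; omega)) _

lemma Bex_tangible : tangible S.Bex :=
  tangible_prod fun t ht => tangible_pow (S.htb t (by simp [Finset.mem_Icc] at ht; omega)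
    (by simp [Finset.mem_Icc] at ht; omega)) _

lemma wstar_eq : S.Wcol S.pstar = S.f.coeff S.m ^ S.n * S.g.coeff S.n ^ S.m * S.TanC := by
  have h := S.wcol_exact
  rw [S.VV_eq, S.Ld_eq, S.Pd_eq] at h
  refine mul_cancel_eq (c := S.Bex * S.Aex) ?_ 
    (STInv_of_tangible (STSemifield.tangible_mul _ _ S.Bex_tangible S.Aex_tangible))
  rw [h, S.TanC_eq]
  ring

end Setup
end ST10


namespace ST10
open Supertropical
open scoped Classical
namespace Setup
variable {K : Type*} [STSemifield K] (S : Setup K)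

lemma Astep_cond {s : ℕ} (h : S.isA (s+1)) :
    S.x s < S.m ∧ (S.n ≤ S.y s ∨ nuLe (S.a (S.x s + 1)) (S.b (S.y s + 1))) := by
  have hx := S.x_of_isA h
  by_contra hc
  have h2 : S.x (s+1) = S.x s := by
    rw [show S.x (s+1) = mX S.m S.n S.a S.b (s+1) from rfl, mX_succ]
    exact if_neg hc
  omega

lemma Bstep_strict {s : ℕ} (h : ¬ S.isA (s+1)) (hxm : S.x s < S.m) :
    S.y s < S.n ∧ nuLt (S.b (S.y s + 1)) (S.a (S.x s + 1)) := by
  have hx := S.x_of_not_isA h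
  by_cases hc : S.x s < S.m ∧ (S.n ≤ S.y s ∨ nuLe (S.a (S.x s + 1)) (S.b (S.y s + 1)))
  · exfalso
    have h2 : S.x (s+1) = S.x s + 1 := by
      rw [show S.x (s+1) = mX S.m S.n S.a S.b (s+1) from rfl, mX_succ]
      exact if_pos hc
    omega
  · push_neg at hc
    obtain ⟨h1, h2⟩ := hc hxm
    exact ⟨by omega, nult_of_not_nule h2⟩

lemma tie_setup
    (htie : ∃ p q, 1 ≤ p ∧ p ≤ S.m ∧ 1 ≤ q ∧ q ≤ S.n ∧ nu (S.a p) = nu (S.b q)) :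
    ∃ i j u, 1 ≤ i ∧ i ≤ S.m ∧ 1 ≤ j ∧ j ≤ S.n ∧ nu (S.a i) = nu (S.b j) ∧
      u + 1 < S.m + S.n ∧ S.isA (u+1) ∧ S.x (u+1) = i ∧ ¬ S.isA (u+2) ∧
      S.y (u+2) = j ∧ S.y (u+1) = j - 1 := by
  obtain ⟨p, q, hp1, hpm, hq1, hqn, hpq⟩ := htie
  have hTne : ((Finset.Icc 1 S.n).filter (fun jj => nu (S.b jj) = nu (S.a p))).Nonempty :=
    ⟨q, Finset.mem_filter.mpr ⟨Finset.mem_Icc.mpr ⟨hq1, hqn⟩, hpq.symm⟩⟩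
  set jstar := ((Finset.Icc 1 S.n).filter (fun jj => nu (S.b jj) = nu (S.a p))).min' hTne
    with hjs
  have hjmem := Finset.min'_mem _ hTne
  rw [← hjs, Finset.mem_filter, Finset.mem_Icc] at hjmem
  obtain ⟨⟨hj1, hjn⟩, hjv⟩ := hjmem
  have hUne : ((Finset.Icc 1 S.m).filter (fun ii => nu (S.a ii) = nu (S.b jstar))).Nonempty :=
    ⟨p, Finset.mem_filter.mpr ⟨Finset.mem_Icc.mpr ⟨hp1, hpm⟩, by rw [hjv]⟩⟩
  set istar := ((Finset.Icc 1 S.m).filter (fun ii => nu (S.a ii) = nu (S.b jstar))).max' hUne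
    with his
  have himem := Finset.max'_mem _ hUne
  rw [← his, Finset.mem_filter, Finset.mem_Icc] at himem
  obtain ⟨⟨hi1, him⟩, hiv⟩ := himem
  have F1 : ∀ jj, 1 ≤ jj → jj < jstar → nuLt (S.b jj) (S.a istar) := by
    intro jj h1 h2
    have hle : nuLe (S.b jj) (S.b jstar) := sorted_le S.hbs h1 _ (by omega) hjn
    have hne : nu (S.b jj) ≠ nu (S.b jstar) := by
      intro he
      have hmem : jj ∈ (Finset.Icc 1 S.n).filter (fun jj => nu (S.b jj) = nu (S.a p)) :=
        Finset.mem_filter.mpr ⟨Finset.mem_Icc.mpr ⟨h1, by omega⟩, by rw [he, hjv]⟩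
      have := Finset.min'_le _ jj hmem
      rw [← hjs] at this
      omega
    exact nult_of_nult_of_nule ⟨hle, hne⟩ (nule_of_nu_eq hiv.symm)
  have F2 : ∀ ii, istar < ii → ii ≤ S.m → nuLt (S.b jstar) (S.a ii) := by
    intro ii h1 h2
    have hle : nuLe (S.a istar) (S.a ii) := sorted_le S.has hi1 _ (by omega) h2
    have hne2 : nu (S.a ii) ≠ nu (S.b jstar) := by
      intro he
      have hmem : ii ∈ (Finset.Icc 1 S.m).filter (fun ii => nu (S.a ii) = nu (S.b jstar)) :=
        Finset.mem_filter.mpr ⟨Finset.mem_Icc.mpr ⟨by omega, h2⟩, he⟩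
      have := Finset.le_max' _ ii hmem
      rw [← his] at this
      omega
    exact ⟨nule_trans (nule_of_nu_eq hiv.symm) hle, fun he => hne2 he.symm⟩
  have hxf : mX S.m S.n S.a S.b (S.m + S.n) = S.m := mX_final S.m S.n S.a S.b
  obtain ⟨u, hu1, hu2, hu3⟩ := reachA S.m S.n S.a S.b (S.m + S.n) istar hi1 (by rw [hxf]; omega)
  change S.x u = istar - 1 at hu2
  change S.x (u+1) = istar at hu3
  have hA : S.isA (u+1) := by
    show S.x (u+1) = S.x (u+1-1) + 1
    simp only [Nat.add_sub_cancel]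
    omega
  have hxy : S.x (u+1) + S.y (u+1) = u + 1 := by
    unfold y
    have := S.x_le_self (u+1)
    omega
  have hyn' := S.y_le_n (show u+1 ≤ S.m + S.n by omega)
  have hge : jstar - 1 ≤ S.y (u+1) := by
    by_contra hlt
    push_neg at hlt
    have hM1 := S.M1' (s := u+1) (by omega) (by omega)
    rw [hu3] at hM1
    exact not_nule_of_nult (F1 (S.y (u+1) + 1) (by omega) (by omega)) hM1
  have hle' : S.y (u+1) ≤ jstar - 1 := by
    by_contra hgt
    push_neg at hgt
    have hjy : jstar ≤ S.y (u+1) := by omega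
    obtain ⟨w, hw1, hw2, hw3⟩ := reachB S.m S.n S.a S.b (u+1) jstar hj1 hjy
    change S.x (w+1) = S.x w at hw2
    have hw3' : S.y (w+1) = jstar := hw3
    have hwu : w + 1 ≤ u := by
      by_contra hh
      have hwu' : w = u := by omega
      rw [hwu'] at hw2
      omega
    have hnAw : ¬ S.isA (w+1) := fun hAw => by
      have := S.x_of_isA hAw
      omega
    have hxmono := S.x_mono (show w + 1 ≤ u from hwu)
    have hxwlt : S.x w < S.m := by omega
    obtain ⟨hyy, hbs'⟩ := S.Bstep_strict hnAw hxwlt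
    have hyw : S.y w + 1 = jstar := by
      have := S.y_succ_of_not_isA hnAw
      omega
    rw [hyw] at hbs'
    have hcc : nuLe (S.a (S.x w + 1)) (S.b jstar) :=
      nule_trans (sorted_le S.has (by omega) _ (by omega) him) (nule_of_nu_eq hiv)
    exact not_nule_of_nult hbs' hcc
  have hyu1 : S.y (u+1) = jstar - 1 := by omega
  have hulb : u + 1 < S.m + S.n := by omega
  have hnB : ¬ S.isA (u+2) := by
    intro hAB
    obtain ⟨hxm2, hcond⟩ := S.Astep_cond (s := u+1) hAB
    rw [hu3] at hxm2
    rcases hcond with hcnd | hcnd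
    · omega
    · rw [hu3, hyu1] at hcnd
      have hj : jstar - 1 + 1 = jstar := by omega
      rw [hj] at hcnd
      exact not_nule_of_nult (F2 (istar + 1) (by omega) (by omega)) hcnd
  have hy2 : S.y (u+2) = jstar := by
    have hys := S.y_succ_of_not_isA (s := u+1) hnB
    rw [show u+1+1 = u+2 from rfl] at hys
    omega
  exact ⟨istar, jstar, u, hi1, him, hj1, hjn, hiv, hulb, hA, hu3, hnB, hy2, hyu1⟩

lemma main_tie
    (htie : ∃ p q, 1 ≤ p ∧ p ≤ S.m ∧ 1 ≤ q ∧ q ≤ S.n ∧ nu (S.a p) = nu (S.b q)) :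
    sdet S.A = nu (S.Wcol S.pstar) := by
  obtain ⟨i, j, u, hi1, him, hj1, hjn, hiv, hulb, hA, hxi, hnB, hy2, hy1⟩ := S.tie_setup htie
  have hxy : S.x (u+1) + S.y (u+1) = u + 1 := by
    unfold y
    have := S.x_le_self (u+1)
    omega
  set j1 : Fin (S.m + S.n) := ⟨u, by omega⟩ with hj1def
  set j2 : Fin (S.m + S.n) := ⟨u+1, by omega⟩ with hj2def
  have hne12 : j1 ≠ j2 := by
    intro h
    have : u = u + 1 := congrArg Fin.val h
    omega
  have hc1 : ((j1:ℕ)) = u := rfl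
  have hc2 : ((j2:ℕ)) = u + 1 := rfl
  -- entries
  have hr1 : (S.pstar j1 : ℕ) = S.n + (i - 1) := by
    rw [S.pstar_of_A (by exact hA), hxi]
  have hr2 : (S.pstar j2 : ℕ) = j - 1 := by
    rw [S.pstar_of_B (by exact hnB), hy2]
  have E11 : S.A (S.pstar j1) j1 = S.g.coeff (j - 1) := by
    rw [S.entry_pstar j1, if_pos (by exact hA)]
    rw [show S.y ((j1:ℕ)+1) = j - 1 from hy1]
  have E22 : S.A (S.pstar j2) j2 = S.f.coeff i := by
    rw [S.entry_pstar j2, if_neg (by exact hnB)]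
    have : S.x ((j2:ℕ)+1) = i := by
      rw [show ((j2:ℕ)+1) = u+1+1 from rfl, S.x_of_not_isA (s := u+1) hnB, hxi]
    rw [this]
  have E21 : S.A (S.pstar j2) j1 = S.f.coeff (i - 1) := by
    rw [S.entryF (by omega : (S.pstar j2 : ℕ) < S.n) (by omega : (S.pstar j2 : ℕ) ≤ (j1:ℕ))]
    congr 1
    omega
  have E12 : S.A (S.pstar j1) j2 = S.g.coeff j := by
    rw [S.entryG (by omega : S.n ≤ (S.pstar j1 : ℕ)) (by omega)]
    congr 1
    omega
  -- the swapped permutation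
  set e' : Equiv.Perm (Fin (S.m + S.n)) := (Equiv.swap j1 j2).trans S.pequiv with he'
  have he'app : ∀ jj, e' jj = S.pstar ((Equiv.swap j1 j2) jj) := fun jj => rfl
  have hsplit : ∀ h : Fin (S.m + S.n) → K,
      ∏ jj, h jj = h j1 * (h j2 * ∏ jj ∈ (Finset.univ.erase j1).erase j2, h jj) := by
    intro h
    rw [← Finset.mul_prod_erase _ h (Finset.mem_univ j1),
      ← Finset.mul_prod_erase _ h (Finset.mem_erase.mpr ⟨hne12.symm, Finset.mem_univ j2⟩)]
  have hW1 : S.Wcol ⇑e' = S.A (S.pstar j2) j1 * (S.A (S.pstar j1) j2 *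
      ∏ jj ∈ (Finset.univ.erase j1).erase j2, S.A (S.pstar jj) jj) := by
    rw [Wcol]
    rw [Finset.prod_congr rfl (fun jj _ => by rw [he'app jj])]
    rw [hsplit (fun jj => S.A (S.pstar ((Equiv.swap j1 j2) jj)) jj)]
    rw [Equiv.swap_apply_left, Equiv.swap_apply_right]
    congr 2
    refine Finset.prod_congr rfl fun jj hjj => ?_
    rw [Finset.mem_erase] at hjj
    obtain ⟨hne2', hjj'⟩ := hjj
    rw [Finset.mem_erase] at hjj'
    rw [Equiv.swap_apply_of_ne_of_ne hjj'.1 hne2']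
  have hW2 : S.Wcol S.pstar = S.A (S.pstar j1) j1 * (S.A (S.pstar j2) j2 *
      ∏ jj ∈ (Finset.univ.erase j1).erase j2, S.A (S.pstar jj) jj) := by
    rw [Wcol]
    exact hsplit (fun jj => S.A (S.pstar jj) jj)
  have hnu0 : nu (S.A (S.pstar j2) j1 * S.A (S.pstar j1) j2)
      = nu (S.A (S.pstar j1) j1 * S.A (S.pstar j2) j2) := by
    rw [E21, E12, E11, E22, ← S.ha i hi1 him, ← S.hb j hj1 hjn]
    rw [nu_mul, nu_mul, nu_mul, nu_mul, hiv]
    ring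
  have hnuW : nu (S.Wcol ⇑e') = nu (S.Wcol S.pstar) := by
    rw [hW1, hW2, ← mul_assoc (S.A (S.pstar j2) j1), ← mul_assoc (S.A (S.pstar j1) j1),
      nu_mul (S.A (S.pstar j2) j1 * S.A (S.pstar j1) j2),
      nu_mul (S.A (S.pstar j1) j1 * S.A (S.pstar j2) j2), hnu0]
  have hnee : e' ≠ S.pequiv := by
    intro hee
    have h1 : e' j1 = S.pequiv j1 := by rw [hee]
    rw [he'app, Equiv.swap_apply_left] at h1
    have h2 : (S.pstar j2 : ℕ) = (S.pstar j1 : ℕ) := by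
      rw [congrArg Fin.val h1]
      rfl
    omega
  rw [S.sdet_eq_sum_cols]
  have hres := sum_eq_ghost (s := Finset.univ)
    (x := fun σ : Equiv.Perm (Fin (S.m + S.n)) => S.Wcol ⇑σ)
    (Finset.mem_univ S.pequiv) (Finset.mem_univ e') hnee
    (by exact hnuW.symm) (fun σ _ => S.wcol_le σ)
  rw [hres]
  rfl

end Setup
end ST10


open Supertropical Polynomial


open ST10 ST10.Setup

/-- the resultant of two full polynomials with tangible
coefficients, where `a i = α_{i-1}/α_i` and `b j = β_{j-1}/β_j` in the group
of tangible elements. -/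
theorem stmt10 {F : Type*} [STSemifield F] (m n : ℕ) (hm : 1 ≤ m) (hn : 1 ≤ n)
    (f g : F[X]) (hf : f.natDegree = m) (hg : g.natDegree = n)
    (hfull : fullPoly f) (hgfull : fullPoly g)
    (htf : ∀ i ≤ m, tangible (f.coeff i)) (htg : ∀ j ≤ n, tangible (g.coeff j))
    (a b : ℕ → F)
    (hta : ∀ i, 1 ≤ i → i ≤ m → tangible (a i))
    (htb : ∀ j, 1 ≤ j → j ≤ n → tangible (b j))
    (ha : ∀ i, 1 ≤ i → i ≤ m → f.coeff i * a i = f.coeff (i - 1))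
    (hb : ∀ j, 1 ≤ j → j ≤ n → g.coeff j * b j = g.coeff (j - 1)) :
    resultant m n f g =
      f.coeff m ^ n * g.coeff n ^ m *
        ∏ i ∈ Finset.Icc 1 m, ∏ j ∈ Finset.Icc 1 n, (a i + b j) := by
  classical
  have hcf : ∀ i, m < i → f.coeff i = 0 := fun i hi =>
    Polynomial.coeff_eq_zero_of_natDegree_lt (by rw [hf]; exact hi)
  have hcg : ∀ j, n < j → g.coeff j = 0 := fun j hj =>
    Polynomial.coeff_eq_zero_of_natDegree_lt (by rw [hg]; exact hj)
  have has : ∀ i, 1 ≤ i → i < m → nuLe (a i) (a (i+1)) := by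
    intro i h1 h2
    have hful := hfull.2 i (by omega) (by rw [hf]; omega)
    have e1 := ha i h1 (by omega)
    have e2 := ha (i+1) (by omega) (by omega)
    simp only [Nat.add_sub_cancel] at e2
    have hinv : STInv (f.coeff i * f.coeff (i+1)) :=
      STInv_of_tangible (STSemifield.tangible_mul _ _ (htf i (by omega)) (htf (i+1) (by omega)))
    refine nule_cancel (c := f.coeff i * f.coeff (i+1)) ?_ hinv
    refine nule_congr hful ?_ ?_
    · rw [← e1]; ring
    · rw [← e2]; ring
  have hbs : ∀ j, 1 ≤ j → j < n → nuLe (b j) (b (j+1)) := by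
    intro j h1 h2
    have hful := hgfull.2 j (by omega) (by rw [hg]; omega)
    have e1 := hb j h1 (by omega)
    have e2 := hb (j+1) (by omega) (by omega)
    simp only [Nat.add_sub_cancel] at e2
    have hinv : STInv (g.coeff j * g.coeff (j+1)) :=
      STInv_of_tangible (STSemifield.tangible_mul _ _ (htg j (by omega)) (htg (j+1) (by omega)))
    refine nule_cancel (c := g.coeff j * g.coeff (j+1)) ?_ hinv
    refine nule_congr hful ?_ ?_
    · rw [← e1]; ring
    · rw [← e2]; ring
  set S : ST10.Setup F :=
    ⟨m, n, hm, hn, f, g, a, b, hcf, hcg, htf, htg, hta, htb, ha, hb, has, hbs⟩ with hS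
  have hres : resultant m n f g = sdet S.A := rfl
  rw [hres]
  by_cases hst : ∀ i j, 1 ≤ i → i ≤ m → 1 ≤ j → j ≤ n → nu (a i) ≠ nu (b j)
  · rw [S.main_strict hst, S.wstar_eq]
    show f.coeff m ^ n * g.coeff n ^ m * S.TanC = _
    congr 1
    show (∏ i ∈ Finset.Icc 1 m, ∏ j ∈ Finset.Icc 1 n,
      (if nuLe (a i) (b j) then b j else a i)) = _
    refine Finset.prod_congr rfl fun i hi => Finset.prod_congr rfl fun j hj => ?_
    rw [Finset.mem_Icc] at hi hj
    by_cases h : nuLe (a i) (b j)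
    · rw [if_pos h]
      exact (add_eq_right ⟨h, hst i j hi.1 hi.2 hj.1 hj.2⟩).symm
    · rw [if_neg h]
      exact (add_eq_left (nult_of_not_nule h)).symm
  · push_neg at hst
    obtain ⟨i0, j0, h1, h2, h3, h4, heq⟩ := hst
    have htie : ∃ p q, 1 ≤ p ∧ p ≤ S.m ∧ 1 ≤ q ∧ q ≤ S.n ∧ nu (S.a p) = nu (S.b q) :=
      ⟨i0, j0, h1, h2, h3, h4, heq⟩
    rw [S.main_tie htie, S.wstar_eq]
    show nu (f.coeff m ^ n * g.coeff n ^ m * S.TanC) = _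
    have hg0 : ghost (a i0 + b j0) := by
      have h5 := supertropicality _ _ heq
      show nu _ = _
      rw [h5, nu_idem]
    have hnueq : nu (f.coeff m ^ n * g.coeff n ^ m * S.TanC)
        = nu (f.coeff m ^ n * g.coeff n ^ m *
            ∏ i ∈ Finset.Icc 1 m, ∏ j ∈ Finset.Icc 1 n, (a i + b j)) := by
      rw [nu_mul, nu_mul, nu_mul, nu_mul]
      congr 1
      show nu (∏ i ∈ Finset.Icc 1 m, ∏ j ∈ Finset.Icc 1 n,
        (if nuLe (a i) (b j) then b j else a i)) = _
      refine nu_prod_congr fun i _ => nu_prod_congr fun j _ => ?_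
      by_cases h : nuLe (a i) (b j)
      · rw [if_pos h, nu_add]
        exact h.symm
      · rw [if_neg h, nu_add]
        have h6 : nu (b j) + nu (a i) = nu (a i) := (nult_of_not_nule h).1
        rw [add_comm] at h6
        exact h6.symm
    rw [hnueq]
    -- the right-hand side is a ghost
    have h6 : ∏ i ∈ Finset.Icc 1 m, ∏ j ∈ Finset.Icc 1 n, (a i + b j)
        = (∏ j ∈ Finset.Icc 1 n, (a i0 + b j)) *
          ∏ i ∈ (Finset.Icc 1 m).erase i0, ∏ j ∈ Finset.Icc 1 n, (a i + b j) :=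
      (Finset.mul_prod_erase _ _ (Finset.mem_Icc.mpr ⟨h1, h2⟩)).symm
    have h7 : ∏ j ∈ Finset.Icc 1 n, (a i0 + b j)
        = (a i0 + b j0) * ∏ j ∈ (Finset.Icc 1 n).erase j0, (a i0 + b j) :=
      (Finset.mul_prod_erase _ _ (Finset.mem_Icc.mpr ⟨h3, h4⟩)).symm
    have hgR : ghost (f.coeff m ^ n * g.coeff n ^ m *
        ∏ i ∈ Finset.Icc 1 m, ∏ j ∈ Finset.Icc 1 n, (a i + b j)) := by
      rw [h6, h7]
      exact ghost_mul_left _ (ghost_mul _ (ghost_mul _ hg0))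
    exact hgR
end

section
/- Let F be a supertropical semifield and let f, g, h ∈ F[λ] be full polynomials of positive degree. Then ν(|Re(f, g·h)|) = ν(|Re(f,g)| · |Re(f,h)|) and ν(|Re(f·g, h)|) = ν(|Re(f,h)| · |Re(g,h)|). -/
open Polynomial

open Supertropical

open Supertropical Polynomial


namespace STRAux

open Supertropical Finset

variable {F : Type*} [STSemifield F]

lemma nuLe_refl (a : F) : nuLe a a := by
  unfold nuLe
  rw [← nu_add, supertropicality a a rfl, nu_idem]

lemma nuLe_of_nu_eq {a b : F} (h : nu a = nu b) : nuLe a b := by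
  unfold nuLe; rw [h, ← nu_add, supertropicality b b rfl, nu_idem]

lemma nuLe_trans {a b c : F} (h1 : nuLe a b) (h2 : nuLe b c) : nuLe a c := by
  unfold nuLe at *
  calc nu a + nu c = nu a + (nu b + nu c) := by rw [h2]
    _ = (nu a + nu b) + nu c := (add_assoc _ _ _).symm
    _ = nu b + nu c := by rw [h1]
    _ = nu c := h2

lemma nuLe_total (a b : F) : nuLe a b ∨ nuLe b a := by
  rcases bipotence (nu a) (nu b) with h | h | ⟨h, h'⟩
  · right; unfold nuLe; rw [add_comm]; exact h
  · left; exact h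
  · left; unfold nuLe
    rw [nu_idem] at h
    rw [nu_idem, nu_idem] at h'
    exact h.trans h' 

lemma nuLe_zero (a : F) : nuLe 0 a := by
  unfold nuLe; rw [nu_zero, zero_add]

lemma nuLe_antisymm {a b : F} (h1 : nuLe a b) (h2 : nuLe b a) : nu a = nu b := by
  unfold nuLe at *
  rw [← h1, add_comm]; exact h2.symm

lemma nuLe_mul_right {a b : F} (c : F) (h : nuLe a b) : nuLe (a * c) (b * c) := by
  unfold nuLe at *
  rw [nu_mul, nu_mul, ← add_mul, h]

lemma nuLe_mul {a b c d : F} (h1 : nuLe a b) (h2 : nuLe c d) : nuLe (a * c) (b * d) := by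
  refine nuLe_trans (nuLe_mul_right c h1) ?_
  rw [mul_comm b c, mul_comm b d]
  exact nuLe_mul_right b h2

lemma nuLe_pow {a b : F} (h : nuLe a b) (k : ℕ) : nuLe (a ^ k) (b ^ k) := by
  induction k with
  | zero => simpa using nuLe_refl (1 : F)
  | succ k ih => rw [pow_succ, pow_succ]; exact nuLe_mul ih h

lemma nu_pow_congr {a b : F} (h : nu a = nu b) (k : ℕ) : nu (a ^ k) = nu (b ^ k) := by
  induction k with
  | zero => simp
  | succ k ih => rw [pow_succ, pow_succ, nu_mul, nu_mul, ih, h]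

lemma nuLe_add_right (a b : F) : nuLe b (a + b) := by
  unfold nuLe
  rw [nu_add, ← add_assoc, add_comm (nu b) (nu a), add_assoc, ← nu_add,
    supertropicality b b rfl, nu_idem]

lemma nuLe_add_left (a b : F) : nuLe a (a + b) := by
  rw [add_comm]; exact nuLe_add_right b a

lemma nuLe_add {a b c : F} (h1 : nuLe a c) (h2 : nuLe b c) : nuLe (a + b) c := by
  unfold nuLe at *
  rw [nu_add, add_assoc, h2, h1]

lemma nu_add_eq_right {a b : F} (h : nuLe a b) : nu (a + b) = nu b := by
  rw [nu_add]; exact h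

lemma nu_mul_congr {a b a' b' : F} (h1 : nu a = nu a') (h2 : nu b = nu b') :
    nu (a * b) = nu (a' * b') := by rw [nu_mul, nu_mul, h1, h2]

lemma nu_add_congr {a b a' b' : F} (h1 : nu a = nu a') (h2 : nu b = nu b') :
    nu (a + b) = nu (a' + b') := by rw [nu_add, nu_add, h1, h2]

lemma nu_sum_le {ι : Type*} {s : Finset ι} {f : ι → F} {c : F}
    (h : ∀ i ∈ s, nuLe (f i) c) : nuLe (∑ i ∈ s, f i) c := by
  classical
  induction s using Finset.induction_on with
  | empty => simpa using nuLe_zero c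
  | insert _ _ hx ih =>
    rw [Finset.sum_insert hx]
    exact nuLe_add (h _ (Finset.mem_insert_self _ _))
      (ih fun i hi => h i (Finset.mem_insert_of_mem hi))

lemma nuLe_sum {ι : Type*} {s : Finset ι} {f : ι → F} {i : ι} (hi : i ∈ s) :
    nuLe (f i) (∑ j ∈ s, f j) := by
  classical
  rw [← Finset.add_sum_erase s f hi]
  exact nuLe_add_left _ _

lemma nuLe_sum_sum {ι : Type*} {s : Finset ι} {f g : ι → F}
    (h : ∀ i ∈ s, nuLe (f i) (g i)) : nuLe (∑ i ∈ s, f i) (∑ i ∈ s, g i) :=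
  nu_sum_le fun i hi => nuLe_trans (h i hi) (nuLe_sum hi)

lemma nu_sum_congr {ι : Type*} {s : Finset ι} {f g : ι → F}
    (h : ∀ i ∈ s, nu (f i) = nu (g i)) : nu (∑ i ∈ s, f i) = nu (∑ i ∈ s, g i) := by
  classical
  induction s using Finset.induction_on with
  | empty => rfl
  | insert _ _ hx ih =>
    rw [Finset.sum_insert hx, Finset.sum_insert hx]
    exact nu_add_congr (h _ (Finset.mem_insert_self _ _))
      (ih fun i hi => h i (Finset.mem_insert_of_mem hi))

lemma nu_prod_congr {ι : Type*} {s : Finset ι} {f g : ι → F}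
    (h : ∀ i ∈ s, nu (f i) = nu (g i)) : nu (∏ i ∈ s, f i) = nu (∏ i ∈ s, g i) := by
  classical
  induction s using Finset.induction_on with
  | empty => rfl
  | insert _ _ hx ih =>
    rw [Finset.prod_insert hx, Finset.prod_insert hx]
    exact nu_mul_congr (h _ (Finset.mem_insert_self _ _))
      (ih fun i hi => h i (Finset.mem_insert_of_mem hi))

lemma nuLe_prod_prod {ι : Type*} {s : Finset ι} {f g : ι → F}
    (h : ∀ i ∈ s, nuLe (f i) (g i)) : nuLe (∏ i ∈ s, f i) (∏ i ∈ s, g i) := by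
  classical
  induction s using Finset.induction_on with
  | empty => exact nuLe_refl _
  | insert _ _ hx ih =>
    rw [Finset.prod_insert hx, Finset.prod_insert hx]
    exact nuLe_mul (h _ (Finset.mem_insert_self _ _))
      (ih fun i hi => h i (Finset.mem_insert_of_mem hi))

lemma nuLe_sum_subset {ι : Type*} {s t : Finset ι} {f : ι → F} (h : s ⊆ t) :
    nuLe (∑ i ∈ s, f i) (∑ i ∈ t, f i) := by
  classical
  rw [← Finset.sum_sdiff h]
  exact nuLe_add_right _ _

lemma one_ne_zero' : (1 : F) ≠ 0 := by
  intro h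
  apply STSemifield.tangible_one (R := F)
  unfold ghost
  rw [h, nu_zero]

lemma tangible_ne_zero {a : F} (h : tangible a) : a ≠ 0 := by
  intro h0
  apply h
  unfold ghost
  rw [h0, nu_zero]

lemma exists_tangible_nu {c : F} (hc : c ≠ 0) : ∃ t : F, tangible t ∧ nu t = nu c := by
  by_cases hg : ghost c
  · obtain ⟨t, ht, htc⟩ := STSemifield.nu_onto c hg hc
    exact ⟨t, ht, by rw [htc]; exact hg.symm⟩
  · exact ⟨c, hg, rfl⟩

lemma nu_mul_one (a : F) : nu a * nu 1 = nu a := by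
  rw [← nu_mul, mul_one]

lemma nu_ne_zero {a : F} (ha : a ≠ 0) : nu a ≠ 0 := by
  by_cases hg : ghost a
  · rw [hg]; exact ha
  · obtain ⟨b, _, hab⟩ := STSemifield.tangible_inv a hg
    intro h0
    have h1 : nu (1 : F) = 0 := by
      rw [← hab, nu_mul, h0, zero_mul]
    have hall : ∀ x : F, nu x = 0 := fun x => by
      rw [← nu_mul_one x, h1, mul_zero]
    have hzero : ∀ x : F, x = 0 := fun x => by
      have := supertropicality x 0 (by rw [hall, nu_zero])
      rw [add_zero, hall] at this
      exact this
    exact one_ne_zero' (hzero 1)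

lemma mul_ne_zero' {a b : F} (ha : a ≠ 0) (hb : b ≠ 0) : a * b ≠ 0 := by
  obtain ⟨t, ht, htn⟩ := exists_tangible_nu ha
  obtain ⟨u, hu, hun⟩ := exists_tangible_nu hb
  intro h0
  have : nu (a * b) = nu (t * u) := by rw [nu_mul, nu_mul, htn, hun]
  rw [h0, nu_zero] at this
  exact nu_ne_zero (tangible_ne_zero (STSemifield.tangible_mul t u ht hu)) this.symm

lemma prod_ne_zero' {ι : Type*} {s : Finset ι} {f : ι → F}
    (h : ∀ i ∈ s, f i ≠ 0) : (∏ i ∈ s, f i) ≠ 0 := by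
  classical
  induction s using Finset.induction_on with
  | empty => simpa using one_ne_zero'
  | insert _ _ hx ih =>
    rw [Finset.prod_insert hx]
    exact mul_ne_zero' (h _ (Finset.mem_insert_self _ _))
      (ih fun i hi => h i (Finset.mem_insert_of_mem hi))

lemma nuLe_cancel {a b c : F} (hc : c ≠ 0) (h : nuLe (a * c) (b * c)) : nuLe a b := by
  obtain ⟨t, ht, htn⟩ := exists_tangible_nu hc
  obtain ⟨u, _, hu⟩ := STSemifield.tangible_inv t ht
  have key : ∀ x : F, nu (x * c) * nu u = nu x := by
    intro x
    rw [nu_mul, mul_assoc, ← htn, ← nu_mul, hu]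
    exact nu_mul_one x
  unfold nuLe at *
  have h2 := congrArg (· * nu u) h
  simp only [add_mul] at h2
  rwa [key, key] at h2

lemma nu_cancel_eq {a b c : F} (hc : c ≠ 0) (h : nu (a * c) = nu (b * c)) :
    nu a = nu b :=
  nuLe_antisymm (nuLe_cancel hc (nuLe_of_nu_eq h)) (nuLe_cancel hc (nuLe_of_nu_eq h.symm))

lemma nuLe_congr {a b a' b' : F} (ha : nu a = nu a') (hb : nu b = nu b') :
    nuLe a b ↔ nuLe a' b' := by unfold nuLe; rw [ha, hb]

end STRAux

namespace STRAux

variable {F : Type*} [STSemifield F]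
open Supertropical

/-- a coefficient window: nonzero up to `m`, zero above `m`, log-concave -/
def Win (a : ℕ → F) (m : ℕ) : Prop :=
  (∀ i, i ≤ m → a i ≠ 0) ∧ (∀ i, m < i → a i = 0) ∧
    (∀ k, nuLe (a k * a (k + 2)) (a (k + 1) * a (k + 1)))

lemma Win.step {a : ℕ → F} {m : ℕ} (h : Win a m) (d x : ℕ) :
    nuLe (a x * a (x + d + 2)) (a (x + 1) * a (x + d + 1)) := by
  induction d generalizing x with
  | zero => exact h.2.2 x
  | succ d ih =>
    by_cases hz : m < x + d + 3
    · have hz0 : a (x + (d + 1) + 2) = 0 := h.2.1 _ (by omega)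
      rw [hz0, mul_zero]
      exact nuLe_zero _
    · have h1 : nuLe (a x * a (x + d + 2)) (a (x + 1) * a (x + d + 1)) := ih x
      have h2 : nuLe (a (x + d + 1) * a (x + d + 3)) (a (x + d + 2) * a (x + d + 2)) :=
        h.2.2 (x + d + 1)
      have h3 := nuLe_mul h1 h2
      have e1 : a x * a (x + d + 2) * (a (x + d + 1) * a (x + d + 3)) =
          a x * a (x + d + 1 + 2) * (a (x + d + 1) * a (x + d + 2)) := by ring_nf
      have e2 : a (x + 1) * a (x + d + 1) * (a (x + d + 2) * a (x + d + 2)) =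
          a (x + 1) * a (x + d + 1 + 1) * (a (x + d + 1) * a (x + d + 2)) := by ring_nf
      rw [e1, e2] at h3
      exact nuLe_cancel (mul_ne_zero' (h.1 _ (by omega)) (h.1 _ (by omega))) h3

lemma Win.exch_ord {a : ℕ → F} {m : ℕ} (h : Win a m) (d : ℕ) :
    ∀ x y x' y' : ℕ, x + y = x' + y' → x' = x + d → x' ≤ y' → y' ≤ y →
    nuLe (a x * a y) (a x' * a y') := by
  induction d with
  | zero =>
    intro x y x' y' hsum hx' _ _
    have : y = y' := by omega
    subst hx'
    rw [this]
    exact nuLe_refl _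
  | succ d ih =>
    intro x y x' y' hsum hx' h1 h2
    have hy2 : x + 2 ≤ y := by omega
    obtain ⟨w, rfl⟩ : ∃ w, y = w + 2 := ⟨y - 2, by omega⟩
    have hxw : x ≤ w := by omega
    obtain ⟨d', rfl⟩ : ∃ d', w = x + d' := ⟨w - x, by omega⟩
    refine nuLe_trans (h.step d' x) (ih (x + 1) (x + d' + 1) x' y' (by omega) (by omega) h1 (by omega))

lemma Win.exch {a : ℕ → F} {m : ℕ} (h : Win a m) {x y x' y' : ℕ}
    (hsum : x + y = x' + y') (h1 : x ≤ x') (h2 : x ≤ y') (h3 : x' ≤ y) (h4 : y' ≤ y) :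
    nuLe (a x * a y) (a x' * a y') := by
  rcases le_total x' y' with hord | hord
  · exact h.exch_ord (x' - x) x y x' y' hsum (by omega) hord h4
  · rw [mul_comm (a x') (a y')]
    exact h.exch_ord (y' - x) x y y' x' (by omega) (by omega) hord h3

/-- shift a window -/
lemma Win.shift {a : ℕ → F} {m : ℕ} (h : Win a m) (hm : 1 ≤ m) :
    Win (fun i => a (i + 1)) (m - 1) := by
  refine ⟨fun i hi => h.1 _ (by omega), fun i hi => h.2.1 _ (by omega), fun k => ?_⟩
  have := h.2.2 (k + 1)
  simpa [Nat.add_assoc] using this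

end STRAux

namespace STRAux

open Supertropical Finset

variable {F : Type*} [STSemifield F]

/-- generalized (shifted) Sylvester-type matrix: `q` rows built from `a`
(shifted by `s`), the rest built from `b` (shifted by `t`). -/
def syl (q s t N : ℕ) (a b : ℕ → F) : Matrix (Fin N) (Fin N) F := fun i j =>
  if (i : ℕ) < q then
    (if (i : ℕ) ≤ (j : ℕ) + s then a ((j : ℕ) + s - (i : ℕ)) else 0)
  else
    (if (i : ℕ) - q ≤ (j : ℕ) + t then b ((j : ℕ) + t - ((i : ℕ) - q)) else 0)

/-- the recursive ν-value of the permanent of `syl` -/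
def Phi (a b : ℕ → F) : ℕ → ℕ → ℕ → ℕ → F
  | 0, 0, _, _ => 1
  | q + 1, 0, s, t => a s * Phi a b q 0 s (t + 1)
  | 0, r + 1, s, t => b t * Phi a b 0 r (s + 1) t
  | q + 1, r + 1, s, t => a s * Phi a b q (r + 1) s (t + 1) + b t * Phi a b (q + 1) r (s + 1) t
  termination_by q r s t => q + r

lemma Phi_zero_left (a b : ℕ → F) (r s t : ℕ) : Phi a b 0 r s t = b t ^ r := by
  induction r generalizing s t with
  | zero => simp [Phi]
  | succ r ih => rw [Phi, ih, pow_succ, mul_comm]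

lemma Phi_zero_right (a b : ℕ → F) (q s t : ℕ) : Phi a b q 0 s t = a s ^ q := by
  induction q generalizing s t with
  | zero => simp [Phi]
  | succ q ih => rw [Phi, ih, pow_succ, mul_comm]

lemma nuLe_Phi_left (a b : ℕ → F) (q r s t : ℕ) :
    nuLe (a s * Phi a b q r s (t + 1)) (Phi a b (q + 1) r s t) := by
  cases r with
  | zero => rw [Phi]; exact nuLe_refl _
  | succ r => rw [Phi]; exact nuLe_add_left _ _

lemma nuLe_Phi_right (a b : ℕ → F) (q r s t : ℕ) :
    nuLe (b t * Phi a b q r (s + 1) t) (Phi a b q (r + 1) s t) := by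
  cases q with
  | zero => rw [Phi]; exact nuLe_refl _
  | succ q => rw [Phi]; exact nuLe_add_right _ _

/-- the sdet is invariant if we rewrite the size -/
lemma sdet_congr {N N' : ℕ} (h : N = N') (M : ℕ → ℕ → F) :
    sdet (fun i j => M i j : Matrix (Fin N) (Fin N) F) =
      sdet (fun i j => M i j : Matrix (Fin N') (Fin N') F) := by subst h; rfl

lemma syl_apply_nat (q s t N : ℕ) (a b : ℕ → F) (i j : Fin N) :
    syl q s t N a b i j =
      (if (i : ℕ) < q then
        (if (i : ℕ) ≤ (j : ℕ) + s then a ((j : ℕ) + s - (i : ℕ)) else 0)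
      else
        (if (i : ℕ) - q ≤ (j : ℕ) + t then b ((j : ℕ) + t - ((i : ℕ) - q)) else 0)) := rfl

/-- minor of `syl` obtained by deleting row 0 and column 0 (requires `q = q₁+1`). -/
lemma syl_minor_a {q₁ s t K : ℕ} (a b : ℕ → F) :
    (syl (q₁ + 1) s t (K + 1) a b).submatrix Fin.succ Fin.succ =
      syl q₁ s (t + 1) K a b := by
  funext i j
  simp only [Matrix.submatrix_apply, syl, Fin.val_succ]
  split_ifs <;> first | rfl | (congr 1; omega) | (exfalso; omega)

/-- minor of `syl` obtained by deleting row `q` (the first `b`-row) and column 0. -/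
lemma syl_minor_b {q s t K : ℕ} (a b : ℕ → F) (hq : q < K + 1) :
    (syl q s t (K + 1) a b).submatrix (⟨q, hq⟩ : Fin (K + 1)).succAbove Fin.succ =
      syl q (s + 1) t K a b := by
  funext i j
  simp only [Matrix.submatrix_apply, syl, Fin.val_succ]
  have hsucc : ((⟨q, hq⟩ : Fin (K + 1)).succAbove i : ℕ) =
      if (i : ℕ) < q then (i : ℕ) else (i : ℕ) + 1 := by
    unfold Fin.succAbove
    split_ifs with h1 h2 h2 <;>
      simp only [Fin.lt_def, Fin.coe_castSucc, Fin.val_succ] at * <;> omega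
  rw [hsucc]
  split_ifs <;> first | rfl | (congr 1; omega) | (exfalso; omega)

/-- extension of a permutation of `Fin K` to a permutation of `Fin (K+1)`
sending `i₀` to `0` and `i₀.succAbove i` to `(σ i).succ`. -/
def permExt {K : ℕ} (i₀ : Fin (K + 1)) (σ : Equiv.Perm (Fin K)) : Equiv.Perm (Fin (K + 1)) :=
  (finSuccEquiv' i₀).trans ((σ.optionCongr).trans (finSuccEquiv' 0).symm)

lemma permExt_apply_i₀ {K : ℕ} (i₀ : Fin (K + 1)) (σ : Equiv.Perm (Fin K)) :
    permExt i₀ σ i₀ = 0 := by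
  simp [permExt, finSuccEquiv'_at, finSuccEquiv'_symm_none]

lemma permExt_apply_succAbove {K : ℕ} (i₀ : Fin (K + 1)) (σ : Equiv.Perm (Fin K)) (i : Fin K) :
    permExt i₀ σ (i₀.succAbove i) = (σ i).succ := by
  simp [permExt, finSuccEquiv'_succAbove, finSuccEquiv'_symm_some, Fin.zero_succAbove]

lemma permExt_injective {K : ℕ} (i₀ : Fin (K + 1)) : Function.Injective (permExt i₀) := by
  intro σ τ h
  ext i
  have := congrArg (fun e => e (i₀.succAbove i)) h
  simp only [permExt_apply_succAbove] at this
  exact congrArg Fin.val (Fin.succ_injective _ this)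

lemma permExt_surjective {K : ℕ} (i₀ : Fin (K + 1)) (τ : Equiv.Perm (Fin (K + 1)))
    (h : τ i₀ = 0) : ∃ σ, τ = permExt i₀ σ := by
  set e : Fin (K + 1) ≃ Option (Fin K) :=
    (τ.trans (finSuccEquiv' 0)) with he
  set e' : Option (Fin K) ≃ Option (Fin K) := (finSuccEquiv' i₀).symm.trans e with he'
  have hnone : e' none = none := by
    simp [he', he, finSuccEquiv'_symm_none, h, finSuccEquiv'_at]
  refine ⟨e'.removeNone, Equiv.ext fun x => ?_⟩
  rcases eq_or_ne x i₀ with rfl | hx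
  · rw [h, permExt_apply_i₀]
  · obtain ⟨i, rfl⟩ : ∃ i, i₀.succAbove i = x := by
      rcases Fin.exists_succAbove_eq hx with ⟨i, hi⟩
      exact ⟨i, hi⟩
    rw [permExt_apply_succAbove]
    have hsome : e' (some i) = some (e'.removeNone i) := by
      rcases hcase : e' (some i) with _ | y
      · exfalso
        have := e'.injective (hcase.trans hnone.symm)
        simp at this
      · exact hcase ▸ (Equiv.removeNone_some e' ⟨y, hcase⟩).symm
    have : e' (some i) = finSuccEquiv' 0 (τ (i₀.succAbove i)) := by
      simp [he', he, finSuccEquiv'_symm_some]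
    rw [this] at hsome
    have := congrArg (finSuccEquiv' (0 : Fin (K + 1))).symm hsome
    rw [Equiv.symm_apply_apply, finSuccEquiv'_symm_some, Fin.zero_succAbove] at this
    exact this

end STRAux

namespace STRAux

open Supertropical Finset

variable {F : Type*} [STSemifield F]

lemma nuLe_trans_eq {x y z w : F} (h1 : nuLe x y) (h2 : nu y = nu z) (h3 : nuLe z w) :
    nuLe x w := nuLe_trans (nuLe_trans h1 (nuLe_of_nu_eq h2)) h3

lemma sdet_fin_zero (M : Matrix (Fin 0) (Fin 0) F) : sdet M = 1 := by
  have huniv : (Finset.univ : Finset (Equiv.Perm (Fin 0))) = {1} := by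
    apply Finset.eq_singleton_iff_unique_mem.mpr
    exact ⟨Finset.mem_univ _, fun σ _ => Subsingleton.elim σ 1⟩
  rw [sdet, huniv, Finset.sum_singleton]
  exact Finset.prod_of_isEmpty _

lemma sdet_term_nuLe {N : ℕ} (M : Matrix (Fin N) (Fin N) F) (σ : Equiv.Perm (Fin N)) :
    nuLe (∏ i, M i (σ i)) (sdet M) :=
  nuLe_sum (s := Finset.univ) (f := fun τ : Equiv.Perm (Fin N) => ∏ i, M i (τ i))
    (Finset.mem_univ σ)

lemma prod_permExt {K : ℕ} (M : Matrix (Fin (K + 1)) (Fin (K + 1)) F)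
    (i₀ : Fin (K + 1)) (σ : Equiv.Perm (Fin K)) :
    ∏ i, M i (permExt i₀ σ i) =
      M i₀ 0 * ∏ i, (M.submatrix i₀.succAbove Fin.succ) i (σ i) := by
  rw [Fin.prod_univ_succAbove (fun i => M i (permExt i₀ σ i)) i₀]
  rw [permExt_apply_i₀]
  congr 1
  refine Finset.prod_congr rfl fun i _ => ?_
  rw [permExt_apply_succAbove]
  rfl

lemma sdet_lower {K : ℕ} (M : Matrix (Fin (K + 1)) (Fin (K + 1)) F) (i₀ : Fin (K + 1)) :
    nuLe (M i₀ 0 * sdet (M.submatrix i₀.succAbove Fin.succ)) (sdet M) := by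
  classical
  have h1 : M i₀ 0 * sdet (M.submatrix i₀.succAbove Fin.succ) =
      ∑ σ : Equiv.Perm (Fin K), ∏ i, M i (permExt i₀ σ i) := by
    rw [sdet, Finset.mul_sum]
    exact Finset.sum_congr rfl fun σ _ => (prod_permExt M i₀ σ).symm
  have h2 : ∑ σ : Equiv.Perm (Fin K), ∏ i, M i (permExt i₀ σ i) =
      ∑ τ ∈ Finset.univ.image (permExt i₀), ∏ i, M i (τ i) :=
    (Finset.sum_image (s := Finset.univ) (g := permExt i₀)
      (f := fun τ : Equiv.Perm (Fin (K + 1)) => ∏ i, M i (τ i))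
      (fun x _ y _ h => permExt_injective i₀ h)).symm
  rw [h1, h2]
  exact nuLe_sum_subset (Finset.subset_univ _)

lemma prod_swap_nuLe {N : ℕ} (M : Matrix (Fin N) (Fin N) F) (τ : Equiv.Perm (Fin N))
    {x y : Fin N} (hxy : x ≠ y)
    (hcmp : nuLe (M x (τ x) * M y (τ y)) (M x (τ y) * M y (τ x))) :
    nuLe (∏ i, M i (τ i)) (∏ i, M i ((τ * Equiv.swap x y) i)) := by
  classical
  have decomp : ∀ g : Equiv.Perm (Fin N), ∏ i, M i (g i) =
      M x (g x) * (M y (g y) * ∏ i ∈ (univ.erase x).erase y, M i (g i)) := by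
    intro g
    rw [Finset.mul_prod_erase (univ.erase x) (fun i => M i (g i))
      (Finset.mem_erase.2 ⟨hxy.symm, Finset.mem_univ y⟩),
      Finset.mul_prod_erase univ (fun i => M i (g i)) (Finset.mem_univ x)]
  rw [decomp τ, decomp (τ * Equiv.swap x y)]
  have h1 : (τ * Equiv.swap x y) x = τ y := by
    simp [Equiv.Perm.mul_apply, Equiv.swap_apply_left]
  have h2 : (τ * Equiv.swap x y) y = τ x := by
    simp [Equiv.Perm.mul_apply, Equiv.swap_apply_right]
  have h3 : ∀ i ∈ (univ.erase x).erase y, M i ((τ * Equiv.swap x y) i) = M i (τ i) := by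
    intro i hi
    simp only [Finset.mem_erase] at hi
    rw [Equiv.Perm.mul_apply, Equiv.swap_apply_of_ne_of_ne hi.2.1 hi.1]
  rw [h1, h2, Finset.prod_congr rfl h3]
  have e1 : M x (τ x) * (M y (τ y) * ∏ i ∈ (univ.erase x).erase y, M i (τ i)) =
      (M x (τ x) * M y (τ y)) * ∏ i ∈ (univ.erase x).erase y, M i (τ i) := by ring
  have e2 : M x (τ y) * (M y (τ x) * ∏ i ∈ (univ.erase x).erase y, M i (τ i)) =
      (M x (τ y) * M y (τ x)) * ∏ i ∈ (univ.erase x).erase y, M i (τ i) := by ring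
  rw [e1, e2]
  exact nuLe_mul_right _ hcmp

set_option maxHeartbeats 2000000 in
theorem mainA {a b : ℕ → F} {ma mb : ℕ} (ha : Win a ma) (hb : Win b mb) :
    ∀ N q r s t, N = q + r → nu (sdet (syl q s t N a b)) = nu (Phi a b q r s t) := by
  intro N
  induction N with
  | zero =>
    intro q r s t hN
    have hq : q = 0 := by omega
    have hr : r = 0 := by omega
    subst hq; subst hr
    rw [sdet_fin_zero]
    simp [Phi]
  | succ K ih =>
    intro q r s t hN
    set M : Matrix (Fin (K + 1)) (Fin (K + 1)) F := syl q s t (K + 1) a b with hM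
    have entA : ∀ (i j : Fin (K + 1)), (i : ℕ) < q → (i : ℕ) ≤ (j : ℕ) + s →
        M i j = a ((j : ℕ) + s - (i : ℕ)) := by
      intro i j h1 h2
      rw [hM, syl_apply_nat, if_pos h1, if_pos h2]
    have entB : ∀ (i j : Fin (K + 1)), ¬ ((i : ℕ) < q) → (i : ℕ) - q ≤ (j : ℕ) + t →
        M i j = b ((j : ℕ) + t - ((i : ℕ) - q)) := by
      intro i j h1 h2
      rw [hM, syl_apply_nat, if_neg h1, if_pos h2]
    have mainUA : ∀ (q₁ : ℕ), q = q₁ + 1 → ∀ τ' : Equiv.Perm (Fin (K + 1)), τ' 0 = 0 →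
        nuLe (∏ i, M i (τ' i)) (Phi a b q r s t) := by
      rintro q₁ rfl τ' hτ'0
      obtain ⟨σ', rfl⟩ := permExt_surjective 0 τ' hτ'0
      rw [prod_permExt]
      have h00 : M 0 0 = a s := by
        rw [entA 0 0 (by simp only [Fin.val_zero]; omega) (by simp)]
        simp only [Fin.val_zero, Nat.zero_add, Nat.add_zero, Nat.sub_zero, Nat.sub_self]
      have hmin : M.submatrix (0 : Fin (K + 1)).succAbove Fin.succ =
          syl q₁ s (t + 1) K a b := by
        have h0s : (0 : Fin (K + 1)).succAbove = Fin.succ :=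
          funext fun i => Fin.zero_succAbove i
        rw [hM, h0s]
        exact syl_minor_a a b
      have hterm : nuLe (∏ i, (M.submatrix (0 : Fin (K + 1)).succAbove Fin.succ) i (σ' i))
          (sdet (syl q₁ s (t + 1) K a b)) := by
        rw [hmin]; exact sdet_term_nuLe _ σ'
      refine nuLe_trans_eq (nuLe_mul (nuLe_refl (M 0 0)) hterm) ?_
        (nuLe_Phi_left a b q₁ r s t)
      exact nu_mul_congr (by rw [h00]) (ih q₁ r s (t + 1) (by omega))
    have mainUB : ∀ (r₁ : ℕ), r = r₁ + 1 → ∀ (hqK : q < K + 1)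
        (τ' : Equiv.Perm (Fin (K + 1))), τ' ⟨q, hqK⟩ = 0 →
        nuLe (∏ i, M i (τ' i)) (Phi a b q r s t) := by
      rintro r₁ rfl hqK τ' hτ'0
      obtain ⟨σ', rfl⟩ := permExt_surjective ⟨q, hqK⟩ τ' hτ'0
      rw [prod_permExt]
      have h00 : M ⟨q, hqK⟩ 0 = b t := by
        rw [entB ⟨q, hqK⟩ 0 (by simp) (by simp)]
        simp only [Fin.val_zero, Nat.zero_add, Nat.add_zero, Nat.sub_zero, Nat.sub_self]
      have hmin : M.submatrix (⟨q, hqK⟩ : Fin (K + 1)).succAbove Fin.succ =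
          syl q (s + 1) t K a b := by
        rw [hM]
        exact syl_minor_b a b hqK
      have hterm : nuLe (∏ i, (M.submatrix (⟨q, hqK⟩ : Fin (K + 1)).succAbove Fin.succ) i (σ' i))
          (sdet (syl q (s + 1) t K a b)) := by
        rw [hmin]; exact sdet_term_nuLe _ σ'
      refine nuLe_trans_eq (nuLe_mul (nuLe_refl (M ⟨q, hqK⟩ 0)) hterm) ?_
        (nuLe_Phi_right a b q r₁ s t)
      exact nu_mul_congr (by rw [h00]) (ih q r₁ (s + 1) t (by omega))
    have upper : nuLe (sdet M) (Phi a b q r s t) := by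
      have hsd : sdet M = ∑ σ : Equiv.Perm (Fin (K + 1)), ∏ i, M i (σ i) := rfl
      rw [hsd]
      apply nu_sum_le
      intro τ _
      have hτρ : τ (τ⁻¹ 0) = 0 := Equiv.apply_symm_apply τ 0
      set ρ := τ⁻¹ 0 with hρdef
      by_cases hz : M ρ 0 = 0
      · have h0 : ∏ i, M i (τ i) = 0 :=
          Finset.prod_eq_zero (Finset.mem_univ ρ) (by rw [hτρ, hz])
        rw [h0]; exact nuLe_zero _
      rcases lt_or_ge (ρ : ℕ) q with hρq | hρq
      · obtain ⟨q₁, hq₁⟩ : ∃ q₁, q = q₁ + 1 := ⟨q - 1, by omega⟩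
        have hρs : (ρ : ℕ) ≤ s := by
          by_contra hc
          apply hz
          rw [hM, syl_apply_nat, if_pos hρq, if_neg (by simpa using hc)]
        rcases eq_or_ne ρ (0 : Fin (K + 1)) with hρ0 | hρ0
        · exact mainUA q₁ hq₁ τ (hρ0 ▸ hτρ)
        · have hMρ0 : M ρ 0 = a (s - (ρ : ℕ)) := by
            rw [entA ρ 0 hρq (by simpa using hρs)]
            simp only [Fin.val_zero, Nat.zero_add, Nat.add_zero, Nat.sub_zero, Nat.sub_self]
          have hM0c : M 0 (τ 0) = a ((τ 0 : ℕ) + s) := by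
            rw [entA 0 (τ 0) (by simp only [Fin.val_zero]; omega) (by simp)]
            simp only [Fin.val_zero, Nat.zero_add, Nat.add_zero, Nat.sub_zero, Nat.sub_self]
          have hMρc : M ρ (τ 0) = a ((τ 0 : ℕ) + s - (ρ : ℕ)) := by
            rw [entA ρ (τ 0) hρq (by omega)]
          have h00 : M 0 0 = a s := by
            rw [entA 0 0 (by simp only [Fin.val_zero]; omega) (by simp)]
            simp only [Fin.val_zero, Nat.zero_add, Nat.add_zero, Nat.sub_zero, Nat.sub_self]
          have hcmp : nuLe (M 0 (τ 0) * M ρ (τ ρ)) (M 0 (τ ρ) * M ρ (τ 0)) := by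
            rw [hτρ, hMρ0, hM0c, hMρc, h00, mul_comm (a ((τ 0 : ℕ) + s)) (a (s - (ρ : ℕ)))]
            exact ha.exch (by omega) (by omega) (by omega) (by omega) (by omega)
          have hτ'0 : (τ * Equiv.swap (0 : Fin (K + 1)) ρ) 0 = 0 := by
            rw [Equiv.Perm.mul_apply, Equiv.swap_apply_left, hτρ]
          exact nuLe_trans (prod_swap_nuLe M τ (Ne.symm hρ0) hcmp)
            (mainUA q₁ hq₁ _ hτ'0)
      · have hr0 : r ≠ 0 := by
          intro h
          subst h
          have : (ρ : ℕ) < K + 1 := ρ.isLt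
          omega
        obtain ⟨r₁, hr₁⟩ : ∃ r₁, r = r₁ + 1 := ⟨r - 1, by omega⟩
        have hqK : q < K + 1 := by omega
        have hρt : (ρ : ℕ) - q ≤ t := by
          by_contra hc
          apply hz
          rw [hM, syl_apply_nat, if_neg (by omega), if_neg (by simpa using hc)]
        rcases eq_or_ne ρ (⟨q, hqK⟩ : Fin (K + 1)) with hρi | hρi
        · exact mainUB r₁ hr₁ hqK τ (hρi ▸ hτρ)
        · have hMρ0 : M ρ 0 = b (t - ((ρ : ℕ) - q)) := by
            rw [entB ρ 0 (by omega) (by simpa using hρt)]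
            simp only [Fin.val_zero, Nat.zero_add, Nat.add_zero, Nat.sub_zero, Nat.sub_self]
          have hMqc : M ⟨q, hqK⟩ (τ ⟨q, hqK⟩) = b ((τ ⟨q, hqK⟩ : ℕ) + t) := by
            rw [entB ⟨q, hqK⟩ (τ ⟨q, hqK⟩) (by simp) (by simp)]
            simp only [Fin.val_zero, Nat.zero_add, Nat.add_zero, Nat.sub_zero, Nat.sub_self]
          have hMρc : M ρ (τ ⟨q, hqK⟩) = b ((τ ⟨q, hqK⟩ : ℕ) + t - ((ρ : ℕ) - q)) := by
            rw [entB ρ (τ ⟨q, hqK⟩) (by omega) (by omega)]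
          have hMq0 : M ⟨q, hqK⟩ 0 = b t := by
            rw [entB ⟨q, hqK⟩ 0 (by simp) (by simp)]
            simp only [Fin.val_zero, Nat.zero_add, Nat.add_zero, Nat.sub_zero, Nat.sub_self]
          have hcmp : nuLe (M ⟨q, hqK⟩ (τ ⟨q, hqK⟩) * M ρ (τ ρ))
              (M ⟨q, hqK⟩ (τ ρ) * M ρ (τ ⟨q, hqK⟩)) := by
            rw [hτρ, hMρ0, hMqc, hMρc, hMq0,
              mul_comm (b ((τ ⟨q, hqK⟩ : ℕ) + t)) (b (t - ((ρ : ℕ) - q)))]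
            exact hb.exch (by omega) (by omega) (by omega) (by omega) (by omega)
          have hτ'0 : (τ * Equiv.swap (⟨q, hqK⟩ : Fin (K + 1)) ρ) ⟨q, hqK⟩ = 0 := by
            rw [Equiv.Perm.mul_apply, Equiv.swap_apply_left, hτρ]
          exact nuLe_trans (prod_swap_nuLe M τ (Ne.symm hρi) hcmp)
            (mainUB r₁ hr₁ hqK _ hτ'0)
    have lowA : ∀ q₁, q = q₁ + 1 → nuLe (a s * Phi a b q₁ r s (t + 1)) (sdet M) := by
      rintro q₁ rfl
      have h00 : M 0 0 = a s := by
        rw [entA 0 0 (by simp only [Fin.val_zero]; omega) (by simp)]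
        simp only [Fin.val_zero, Nat.zero_add, Nat.add_zero, Nat.sub_zero, Nat.sub_self]
      have hmin : M.submatrix (0 : Fin (K + 1)).succAbove Fin.succ =
          syl q₁ s (t + 1) K a b := by
        have h0s : (0 : Fin (K + 1)).succAbove = Fin.succ :=
          funext fun i => Fin.zero_succAbove i
        rw [hM, h0s]
        exact syl_minor_a a b
      have he : nu (a s * Phi a b q₁ r s (t + 1)) =
          nu (M 0 0 * sdet (M.submatrix (0 : Fin (K + 1)).succAbove Fin.succ)) := by
        refine nu_mul_congr (by rw [h00]) ?_
        rw [hmin]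
        exact (ih q₁ r s (t + 1) (by omega)).symm
      exact nuLe_trans (nuLe_of_nu_eq he) (sdet_lower M 0)
    have lowB : ∀ r₁, r = r₁ + 1 → nuLe (b t * Phi a b q r₁ (s + 1) t) (sdet M) := by
      rintro r₁ rfl
      have hqK : q < K + 1 := by omega
      have h00 : M ⟨q, hqK⟩ 0 = b t := by
        rw [entB ⟨q, hqK⟩ 0 (by simp) (by simp)]
        simp only [Fin.val_zero, Nat.zero_add, Nat.add_zero, Nat.sub_zero, Nat.sub_self]
      have hmin : M.submatrix (⟨q, hqK⟩ : Fin (K + 1)).succAbove Fin.succ =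
          syl q (s + 1) t K a b := by
        rw [hM]
        exact syl_minor_b a b hqK
      have he : nu (b t * Phi a b q r₁ (s + 1) t) =
          nu (M ⟨q, hqK⟩ 0 * sdet (M.submatrix (⟨q, hqK⟩ : Fin (K + 1)).succAbove Fin.succ)) := by
        refine nu_mul_congr (by rw [h00]) ?_
        rw [hmin]
        exact (ih q r₁ (s + 1) t (by omega)).symm
      exact nuLe_trans (nuLe_of_nu_eq he) (sdet_lower M ⟨q, hqK⟩)
    have lower : nuLe (Phi a b q r s t) (sdet M) := by
      cases q with
      | zero =>
        cases r with
        | zero => omega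
        | succ r₁ => rw [Phi]; exact lowB r₁ rfl
      | succ q₁ =>
        cases r with
        | zero => rw [Phi]; exact lowA q₁ rfl
        | succ r₁ => rw [Phi]; exact nuLe_add (lowA q₁ rfl) (lowB r₁ rfl)
    exact nuLe_antisymm upper lower

end STRAux

namespace STRAux

open Supertropical Finset

variable {F : Type*} [STSemifield F]

/-- the homogenized evaluation `∑ a_{s+σ} (b u)^σ (b (u+1))^(r-σ)` -/
def Sf (a b : ℕ → F) (r s u : ℕ) : F :=
  ∑ σ ∈ Finset.range (r + 1), a (s + σ) * (b u ^ σ * b (u + 1) ^ (r - σ))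

/-- the upper part of `Sf` -/
def Splus (a b : ℕ → F) (r₁ s u : ℕ) : F := b u * Sf a b r₁ (s + 1) u

lemma Sf_succ (a b : ℕ → F) (r₁ s u : ℕ) :
    Sf a b (r₁ + 1) s u = a s * b (u + 1) ^ (r₁ + 1) + Splus a b r₁ s u := by
  rw [Sf, Finset.sum_range_succ' _ (r₁ + 1)]
  rw [add_comm]
  congr 1
  · simp
  · rw [Splus, Sf, Finset.mul_sum]
    refine Finset.sum_congr rfl fun σ hσ => ?_
    rw [Finset.mem_range] at hσ
    rw [show s + (σ + 1) = s + 1 + σ by omega, show r₁ + 1 - (σ + 1) = r₁ - σ by omega,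
      pow_succ]
    ring

/-- the key exchange inequality between consecutive `Splus`/lower parts. -/
lemma Splus_exch {a b : ℕ → F} {mb : ℕ} (hb : Win b mb) (r₁ s u : ℕ) :
    nuLe (Splus a b r₁ s u * (a s * b (u + 2) ^ (r₁ + 1)))
      (a s * b (u + 1) ^ (r₁ + 1) * Splus a b r₁ s (u + 1)) := by
  rw [Splus, Splus, Sf, Sf]
  rw [Finset.mul_sum, Finset.mul_sum, Finset.sum_mul, Finset.mul_sum]
  refine nuLe_sum_sum fun σ hσ => ?_
  rw [Finset.mem_range] at hσ
  obtain ⟨δ, hδ⟩ : ∃ δ, r₁ = σ + δ := ⟨r₁ - σ, by omega⟩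
  subst hδ
  rw [show σ + δ - σ = δ by omega]
  have e1 : b u * (a (s + 1 + σ) * (b u ^ σ * b (u + 1) ^ δ)) * (a s * b (u + 2) ^ (σ + δ + 1)) =
      (b u * b (u + 2)) ^ (σ + 1) *
        (a s * a (s + 1 + σ) * b (u + 1) ^ δ * b (u + 2) ^ δ) := by
    rw [show σ + δ + 1 = (σ + 1) + δ by omega]
    ring
  have e2 : a s * b (u + 1) ^ (σ + δ + 1) * (b (u + 1) * (a (s + 1 + σ) * (b (u + 1) ^ σ * b (u + 2) ^ δ))) =
      (b (u + 1) * b (u + 1)) ^ (σ + 1) *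
        (a s * a (s + 1 + σ) * b (u + 1) ^ δ * b (u + 2) ^ δ) := by
    rw [show σ + δ + 1 = (σ + 1) + δ by omega]
    ring
  rw [e1, e2]
  exact nuLe_mul_right _ (nuLe_pow (hb.2.2 u) (σ + 1))

lemma nuLe_Splus_Sf (a b : ℕ → F) (r₁ s u : ℕ) :
    nuLe (Splus a b r₁ s u) (Sf a b (r₁ + 1) s u) := by
  rw [Sf_succ]
  exact nuLe_add_right _ _

/-- the claim lemma: the "all-lower-first" term is dominated. -/
lemma claimCL {a b : ℕ → F} {mb : ℕ} (hb : Win b mb) (r₁ s : ℕ) :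
    ∀ q₁ t, nuLe (Splus a b r₁ s t * ∏ k ∈ Finset.range q₁, Sf a b (r₁ + 1) s (t + k + 1))
      (a s * b (t + 1) ^ (r₁ + 1) * ∏ k ∈ Finset.range q₁, Sf a b (r₁ + 1) s (t + k + 1)
        + ∏ k ∈ Finset.range (q₁ + 1), Splus a b r₁ s (t + k)) := by
  intro q₁
  induction q₁ with
  | zero =>
    intro t
    simpa using nuLe_add_right (a s * b (t + 1) ^ (r₁ + 1)) (Splus a b r₁ s (t + 0))
  | succ q₁ ih =>
    intro t
    have hprodS : ∏ k ∈ Finset.range (q₁ + 1), Sf a b (r₁ + 1) s (t + k + 1) =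
        Sf a b (r₁ + 1) s (t + 1) * ∏ k ∈ Finset.range q₁, Sf a b (r₁ + 1) s (t + 1 + k + 1) := by
      rw [Finset.prod_range_succ' (fun k => Sf a b (r₁ + 1) s (t + k + 1)) q₁, mul_comm]
      congr 1
      refine Finset.prod_congr rfl fun k _ => ?_
      rw [show t + (k + 1) + 1 = t + 1 + k + 1 by omega]
    have hprodP : ∏ k ∈ Finset.range (q₁ + 1 + 1), Splus a b r₁ s (t + k) =
        Splus a b r₁ s t * ∏ k ∈ Finset.range (q₁ + 1), Splus a b r₁ s (t + 1 + k) := by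
      rw [Finset.prod_range_succ' (fun k => Splus a b r₁ s (t + k)) (q₁ + 1), mul_comm]
      congr 1
      refine Finset.prod_congr rfl fun k _ => ?_
      rw [show t + (k + 1) = t + 1 + k by omega]
    set Q : F := ∏ k ∈ Finset.range q₁, Sf a b (r₁ + 1) s (t + 1 + k + 1) with hQ
    set A : F := a s * b (t + 1) ^ (r₁ + 1) with hA
    set A' : F := a s * b (t + 2) ^ (r₁ + 1) with hA'
    set P : F := Splus a b r₁ s t with hP
    set P' : F := Splus a b r₁ s (t + 1) with hP'
    rw [hprodS, hprodP]
    have hS1 : Sf a b (r₁ + 1) s (t + 1) = A' + P' := by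
      rw [Sf_succ, hA', hP']
    -- decompose the LHS
    have hLHS : P * (Sf a b (r₁ + 1) s (t + 1) * Q) = P * A' * Q + P * (P' * Q) := by
      rw [hS1]; ring
    rw [hLHS]
    -- the α-term
    have hα : nuLe (P * A' * Q) (A * (Sf a b (r₁ + 1) s (t + 1) * Q)) := by
      have step2 : nuLe (P * A' * Q) (A * P' * Q) := by
        refine nuLe_mul_right Q ?_
        rw [hP, hA', hA, hP']
        exact Splus_exch hb r₁ s t
      refine nuLe_trans step2 ?_
      have e : A * P' * Q = A * (P' * Q) := by ring
      rw [e]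
      exact nuLe_mul (nuLe_refl A) (nuLe_mul_right Q (by rw [hS1]; exact nuLe_add_right _ _))
    refine nuLe_add ?_ ?_
    · exact nuLe_trans hα (nuLe_add_left _ _)
    · -- the β-term, via the induction hypothesis at t+1
      have hIH := ih (t + 1)
      have hIH2 : nuLe (P * (P' * Q))
          (P * (A' * Q + ∏ k ∈ Finset.range (q₁ + 1), Splus a b r₁ s (t + 1 + k))) := by
        rw [mul_comm P (P' * Q), mul_comm P _]
        refine nuLe_mul_right P ?_
        rw [hP', hQ, hA']
        rw [show t + 2 = t + 1 + 1 by omega]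
        exact hIH
      refine nuLe_trans hIH2 ?_
      rw [mul_add]
      refine nuLe_add ?_ ?_
      · have e : P * (A' * Q) = P * A' * Q := by ring
        rw [e]
        exact nuLe_trans hα (nuLe_add_left _ _)
      · exact nuLe_add_right _ _

end STRAux

namespace STRAux

open Supertropical Finset

variable {F : Type*} [STSemifield F]

lemma nu_add_eq_of {x y z : F} (hzy : nuLe z y) (hy : nuLe y (x + z)) :
    nu (x + y) = nu (x + z) := by
  refine nuLe_antisymm (nuLe_add (nuLe_add_left _ _) hy) (nuLe_add (nuLe_add_left _ _) ?_)
  exact nuLe_trans hzy (nuLe_add_right _ _)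

lemma prod_shift_succ (f : ℕ → F) (q t : ℕ) :
    ∏ k ∈ Finset.range (q + 1), f (t + k) = f t * ∏ k ∈ Finset.range q, f (t + k + 1) := by
  rw [Finset.prod_range_succ' (fun k => f (t + k)) q]
  exact mul_comm _ _

lemma prod_shift_one (f : ℕ → F) (q t : ℕ) :
    ∏ k ∈ Finset.range q, f (t + 1 + k) = ∏ k ∈ Finset.range q, f (t + k + 1) :=
  Finset.prod_congr rfl fun k _ => by rw [Nat.add_right_comm]

lemma prod_telescope (f : ℕ → F) (Q t : ℕ) :
    f t * ∏ k ∈ Finset.range Q, f (t + k + 1) = (∏ k ∈ Finset.range Q, f (t + k)) * f (t + Q) := by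
  rw [← prod_shift_succ f Q t, Finset.prod_range_succ]

set_option maxHeartbeats 2000000 in
theorem phiFormula {a b : ℕ → F} {mb : ℕ} (hb : Win b mb) :
    ∀ q r s t, nu (Phi a b q r s t * ∏ k ∈ Finset.range q, b (t + k + 1) ^ r) =
      nu (b (t + q) ^ r * ∏ k ∈ Finset.range q, Sf a b r s (t + k)) := by
  intro q
  induction q with
  | zero =>
    intro r s t
    simp [Phi_zero_left]
  | succ q₁ ihq =>
    intro r
    induction r with
    | zero =>
      intro s t
      have hSf0 : ∀ u, Sf a b 0 s u = a s := by
        intro u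
        rw [Sf, Finset.sum_range_one]
        simp
      simp only [pow_zero, one_mul, Finset.prod_const_one, mul_one, Phi_zero_right]
      rw [Finset.prod_congr rfl fun k _ => hSf0 (t + k), Finset.prod_const, Finset.card_range]
    | succ r₁ ihr =>
      intro s t
      set W : F := ∏ k ∈ Finset.range (q₁ + 1), b (t + k + 1) ^ (r₁ + 1) with hW
      set PS : F := ∏ k ∈ Finset.range q₁, Sf a b (r₁ + 1) s (t + k + 1) with hPS
      set B : F := b (t + (q₁ + 1)) ^ (r₁ + 1) with hB
      set X : F := B * (a s * b (t + 1) ^ (r₁ + 1) * PS) with hX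
      set Y : F := B * (Splus a b r₁ s t * PS) with hY
      set Z : F := B * ∏ k ∈ Finset.range (q₁ + 1), Splus a b r₁ s (t + k) with hZ
      have hsplit : Phi a b (q₁ + 1) (r₁ + 1) s t * W =
          a s * Phi a b q₁ (r₁ + 1) s (t + 1) * W
          + b t * Phi a b (q₁ + 1) r₁ (s + 1) t * W := by
        rw [Phi]; ring
      -- ν-value of the first branch
      have hT1v : nu (a s * Phi a b q₁ (r₁ + 1) s (t + 1) * W) = nu X := by
        have hW1 : W = b (t + 1) ^ (r₁ + 1) *
            ∏ k ∈ Finset.range q₁, b (t + 1 + k + 1) ^ (r₁ + 1) := by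
          rw [hW, ← prod_shift_one (fun u => b u ^ (r₁ + 1)) (q₁ + 1) t,
            prod_shift_succ (fun u => b u ^ (r₁ + 1)) q₁ (t + 1)]
        have e1 : a s * Phi a b q₁ (r₁ + 1) s (t + 1) *
            (b (t + 1) ^ (r₁ + 1) * ∏ k ∈ Finset.range q₁, b (t + 1 + k + 1) ^ (r₁ + 1)) =
            (a s * b (t + 1) ^ (r₁ + 1)) *
            (Phi a b q₁ (r₁ + 1) s (t + 1) * ∏ k ∈ Finset.range q₁, b (t + 1 + k + 1) ^ (r₁ + 1)) := by
          ring
        rw [hW1, e1, nu_mul, ihq (r₁ + 1) s (t + 1), ← nu_mul]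
        refine congrArg nu ?_
        rw [prod_shift_one (Sf a b (r₁ + 1) s) q₁ t, ← hPS,
          show t + 1 + q₁ = t + (q₁ + 1) by omega, ← hB, hX]
        ring
      -- ν-value of the second branch
      have hT2v : nu (b t * Phi a b (q₁ + 1) r₁ (s + 1) t * W) = nu Z := by
        have hW2 : W = (∏ k ∈ Finset.range (q₁ + 1), b (t + k + 1) ^ r₁) *
            (∏ k ∈ Finset.range (q₁ + 1), b (t + k + 1)) := by
          rw [hW, ← Finset.prod_mul_distrib]
          exact Finset.prod_congr rfl fun k _ => pow_succ _ _
        have e1 : b t * Phi a b (q₁ + 1) r₁ (s + 1) t *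
            ((∏ k ∈ Finset.range (q₁ + 1), b (t + k + 1) ^ r₁) *
              (∏ k ∈ Finset.range (q₁ + 1), b (t + k + 1))) =
            (Phi a b (q₁ + 1) r₁ (s + 1) t * ∏ k ∈ Finset.range (q₁ + 1), b (t + k + 1) ^ r₁) *
              (b t * ∏ k ∈ Finset.range (q₁ + 1), b (t + k + 1)) := by
          ring
        rw [hW2, e1, nu_mul, ihr (s + 1) t, prod_telescope b (q₁ + 1) t, ← nu_mul]
        refine congrArg nu ?_
        rw [hZ, show (∏ k ∈ Finset.range (q₁ + 1), Splus a b r₁ s (t + k)) =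
          ∏ k ∈ Finset.range (q₁ + 1), (b (t + k) * Sf a b r₁ (s + 1) (t + k)) from
          Finset.prod_congr rfl fun _ _ => rfl, Finset.prod_mul_distrib, hB, pow_succ]
        ring
      -- the right-hand side decomposes as X + Y
      have hRHS : b (t + (q₁ + 1)) ^ (r₁ + 1) *
          ∏ k ∈ Finset.range (q₁ + 1), Sf a b (r₁ + 1) s (t + k) = X + Y := by
        rw [prod_shift_succ (Sf a b (r₁ + 1) s) q₁ t, Sf_succ, ← hPS, ← hB, hX, hY]
        ring
      -- comparisons
      have hZY : nuLe Z Y := by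
        rw [hZ, hY, prod_shift_succ (Splus a b r₁ s) q₁ t]
        exact nuLe_mul (nuLe_refl B) (nuLe_mul (nuLe_refl _)
          (nuLe_prod_prod fun k _ => nuLe_Splus_Sf a b r₁ s (t + k + 1)))
      have hYXZ : nuLe Y (X + Z) := by
        have hcl := claimCL (a := a) hb r₁ s q₁ t
        have h2 : nuLe (B * (Splus a b r₁ s t * PS))
            (B * (a s * b (t + 1) ^ (r₁ + 1) * PS
              + ∏ k ∈ Finset.range (q₁ + 1), Splus a b r₁ s (t + k))) := by
          refine nuLe_trans (nuLe_of_nu_eq (by rw [mul_comm])) ?_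
          refine nuLe_trans (nuLe_mul_right B (by rw [hPS]; exact hcl)) ?_
          exact nuLe_of_nu_eq (by rw [mul_comm])
        refine nuLe_trans h2 (nuLe_of_nu_eq (congrArg nu ?_))
        rw [hX, hZ]
        ring
      calc nu (Phi a b (q₁ + 1) (r₁ + 1) s t * W)
          = nu (a s * Phi a b q₁ (r₁ + 1) s (t + 1) * W
              + b t * Phi a b (q₁ + 1) r₁ (s + 1) t * W) := by rw [hsplit]
        _ = nu (a s * Phi a b q₁ (r₁ + 1) s (t + 1) * W)
              + nu (b t * Phi a b (q₁ + 1) r₁ (s + 1) t * W) := nu_add _ _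
        _ = nu X + nu Z := by rw [hT1v, hT2v]
        _ = nu (X + Z) := (nu_add _ _).symm
        _ = nu (X + Y) := (nu_add_eq_of hZY hYXZ).symm
        _ = nu (b (t + (q₁ + 1)) ^ (r₁ + 1) *
              ∏ k ∈ Finset.range (q₁ + 1), Sf a b (r₁ + 1) s (t + k)) := by rw [hRHS]

end STRAux

namespace STRAux

open Supertropical Finset

variable {F : Type*} [STSemifield F]

/-- convolution of coefficient sequences -/
def conv (B C : ℕ → F) (k : ℕ) : F := ∑ i ∈ Finset.range (k + 1), B i * C (k - i)

lemma ne_zero_of_nuLe {x y : F} (h : nuLe x y) (hx : x ≠ 0) : y ≠ 0 := by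
  intro h0
  subst h0
  unfold nuLe at h
  rw [nu_zero, add_zero] at h
  exact nu_ne_zero hx h

lemma conv_comm (B C : ℕ → F) (k : ℕ) : conv B C k = conv C B k := by
  rw [conv, conv, ← Finset.sum_range_reflect]
  refine Finset.sum_congr rfl fun i hi => ?_
  rw [Finset.mem_range] at hi
  rw [show k + 1 - 1 - i = k - i by omega, show k - (k - i) = i by omega, mul_comm]

lemma conv_zero (B C : ℕ → F) : conv B C 0 = B 0 * C 0 := by
  rw [conv, Finset.sum_range_one]

lemma conv_leading {B C : ℕ → F} {n p : ℕ} (hB : Win B n) (hC : Win C p) :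
    conv B C (n + p) = B n * C p := by
  rw [conv]
  rw [Finset.sum_eq_single n]
  · rw [show n + p - n = p by omega]
  · intro i hi hne
    rw [Finset.mem_range] at hi
    rcases lt_or_gt_of_ne hne with h | h
    · rw [hC.2.1 _ (by omega), mul_zero]
    · rw [hB.2.1 _ (by omega), zero_mul]
  · intro h
    exact absurd (Finset.mem_range.2 (by omega)) h

lemma conv_win {B C : ℕ → F} {n p : ℕ} (hB : Win B n) (hC : Win C p) :
    Win (conv B C) (n + p) := by
  refine ⟨?_, ?_, ?_⟩
  · -- nonzero inside the window
    intro k hk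
    set i₀ := min k n with hi₀
    have hterm : B i₀ * C (k - i₀) ≠ 0 :=
      mul_ne_zero' (hB.1 _ (by omega)) (hC.1 _ (by omega))
    refine ne_zero_of_nuLe (nuLe_sum (f := fun i => B i * C (k - i)) ?_) hterm
    exact Finset.mem_range.2 (by omega)
  · -- zero above the window
    intro k hk
    rw [conv]
    refine Finset.sum_eq_zero fun i hi => ?_
    rcases le_or_gt i n with h | h
    · rw [hC.2.1 _ (by omega), mul_zero]
    · rw [hB.2.1 _ (by omega), zero_mul]
  · -- log-concavity
    intro k
    have expand : conv B C k * conv B C (k + 2) =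
        ∑ i ∈ Finset.range (k + 1), ∑ j ∈ Finset.range (k + 3),
          (B i * C (k - i)) * (B j * C (k + 2 - j)) := by
      rw [conv, conv, Finset.sum_mul_sum]
    rw [expand]
    refine nu_sum_le fun i hi => nu_sum_le fun j hj => ?_
    rw [Finset.mem_range] at hi hj
    rcases le_or_gt j i with hji | hij
    · -- C-move
      have h1 : nuLe (C (k - i) * C (k + 2 - j)) (C (k + 1 - i) * C (k + 1 - j)) :=
        hC.exch (by omega) (by omega) (by omega) (by omega) (by omega)
      have e1 : (B i * C (k - i)) * (B j * C (k + 2 - j)) =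
          (B i * B j) * (C (k - i) * C (k + 2 - j)) := by ring
      have e2 : (B i * C (k + 1 - i)) * (B j * C (k + 1 - j)) =
          (B i * B j) * (C (k + 1 - i) * C (k + 1 - j)) := by ring
      refine nuLe_trans (nuLe_of_nu_eq (congrArg nu e1)) ?_
      refine nuLe_trans (nuLe_mul (nuLe_refl (B i * B j)) h1) ?_
      refine nuLe_trans (nuLe_of_nu_eq (congrArg nu e2.symm)) ?_
      refine nuLe_mul (nuLe_sum (f := fun i => B i * C (k + 1 - i)) ?_)
        (nuLe_sum (f := fun i => B i * C (k + 1 - i)) ?_)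
      · exact Finset.mem_range.2 (by omega)
      · exact Finset.mem_range.2 (by omega)
    · -- B-move
      have h1 : nuLe (B i * B j) (B (i + 1) * B (j - 1)) :=
        hB.exch (by omega) (by omega) (by omega) (by omega) (by omega)
      have e1 : (B i * C (k - i)) * (B j * C (k + 2 - j)) =
          (B i * B j) * (C (k - i) * C (k + 2 - j)) := by ring
      have e2 : (B (i + 1) * C (k + 1 - (i + 1))) * (B (j - 1) * C (k + 1 - (j - 1))) =
          (B (i + 1) * B (j - 1)) * (C (k - i) * C (k + 2 - j)) := by
        rw [show k + 1 - (i + 1) = k - i by omega, show k + 1 - (j - 1) = k + 2 - j by omega]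
        ring
      refine nuLe_trans (nuLe_of_nu_eq (congrArg nu e1)) ?_
      refine nuLe_trans (nuLe_mul_right _ h1) ?_
      refine nuLe_trans (nuLe_of_nu_eq (congrArg nu e2.symm)) ?_
      refine nuLe_mul (nuLe_sum (f := fun i => B i * C (k + 1 - i)) ?_)
        (nuLe_sum (f := fun i => B i * C (k + 1 - i)) ?_)
      · exact Finset.mem_range.2 (by omega)
      · exact Finset.mem_range.2 (by omega)

/-- the constant-case of convolution -/
lemma conv_const {B C : ℕ → F} (hB0 : ∀ i, 0 < i → B i = 0) (k : ℕ) :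
    conv B C k = B 0 * C k := by
  rw [conv]
  rw [Finset.sum_eq_single 0]
  · rw [Nat.sub_zero]
  · intro i hi hne
    rw [hB0 i (by omega), zero_mul]
  · intro h
    exact absurd (Finset.mem_range.2 (by omega)) h

/-- peeling the smallest root: shift-domination of the convolution. -/
lemma conv_shift_nu {B C : ℕ → F} {n p : ℕ} (hB : Win B n) (hC : Win C p)
    (hp : 1 ≤ p) (hsm : nuLe (B 0 * C 1) (B 1 * C 0)) (k : ℕ) :
    nu (conv B C (k + 1)) = nu (conv (fun i => B (i + 1)) C k) := by
  have hdec : conv B C (k + 1) = conv (fun i => B (i + 1)) C k + B 0 * C (k + 1) := by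
    rw [conv, Finset.sum_range_succ' (fun i => B i * C (k + 1 - i)) (k + 1), conv]
    congr 1
    refine Finset.sum_congr rfl fun i hi => ?_
    rw [show k + 1 - (i + 1) = k - i by omega]
  have hdom : nuLe (B 0 * C (k + 1)) (conv (fun i => B (i + 1)) C k) := by
    by_cases hk : p < k + 1
    · rw [hC.2.1 _ hk, mul_zero]
      exact nuLe_zero _
    · have hint : nuLe (C 0 * C (k + 1)) (C 1 * C k) :=
        hC.exch (by omega) (by omega) (by omega) (by omega) (by omega)
      have h2 : nuLe ((B 0 * C (k + 1)) * (C 0 * C 1)) ((B 1 * C k) * (C 0 * C 1)) := by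
        refine nuLe_trans (nuLe_of_nu_eq (congrArg nu (by ring :
          (B 0 * C (k + 1)) * (C 0 * C 1) = (B 0 * C 1) * (C 0 * C (k + 1))))) ?_
        refine nuLe_trans (nuLe_mul hsm hint) ?_
        exact nuLe_of_nu_eq (congrArg nu (by ring))
      have h3 : nuLe (B 0 * C (k + 1)) (B 1 * C k) :=
        nuLe_cancel (mul_ne_zero' (hC.1 0 (by omega)) (hC.1 1 (by omega))) h2
      refine nuLe_trans h3 (nuLe_sum (f := fun i => B (i + 1) * C (k - i)) ?_)
      exact Finset.mem_range.2 (by omega)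
  rw [hdec, add_comm, nu_add_eq_right hdom]

end STRAux

namespace STRAux

open Supertropical Finset

variable {F : Type*} [STSemifield F]

/-- the merge statement: product of the `Sf`-factors over the convolution splits. -/
def MStmt (a : ℕ → F) (m : ℕ) (B C : ℕ → F) (n p : ℕ) : Prop :=
  nu ((∏ k ∈ Finset.range (n + p), Sf a (conv B C) m 0 k) *
      ((∏ k ∈ Finset.range n, B (k + 1) ^ m) * (∏ k ∈ Finset.range p, C (k + 1) ^ m))) =
  nu ((∏ k ∈ Finset.range n, Sf a B m 0 k) *
      ((∏ k ∈ Finset.range p, Sf a C m 0 k) *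
        (∏ k ∈ Finset.range (n + p), conv B C (k + 1) ^ m)))

lemma MStmt_symm {a : ℕ → F} {m : ℕ} {B C : ℕ → F} {n p : ℕ}
    (h : MStmt a m B C n p) : MStmt a m C B p n := by
  unfold MStmt at *
  have hcomm : conv C B = conv B C := funext fun k => conv_comm C B k
  rw [hcomm, show p + n = n + p by omega]
  calc nu ((∏ k ∈ Finset.range (n + p), Sf a (conv B C) m 0 k) *
      ((∏ k ∈ Finset.range p, C (k + 1) ^ m) * (∏ k ∈ Finset.range n, B (k + 1) ^ m)))
      = nu ((∏ k ∈ Finset.range (n + p), Sf a (conv B C) m 0 k) *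
      ((∏ k ∈ Finset.range n, B (k + 1) ^ m) * (∏ k ∈ Finset.range p, C (k + 1) ^ m))) :=
        congrArg nu (by ring)
    _ = nu ((∏ k ∈ Finset.range n, Sf a B m 0 k) *
      ((∏ k ∈ Finset.range p, Sf a C m 0 k) *
        (∏ k ∈ Finset.range (n + p), conv B C (k + 1) ^ m))) := h
    _ = nu ((∏ k ∈ Finset.range p, Sf a C m 0 k) *
      ((∏ k ∈ Finset.range n, Sf a B m 0 k) *
        (∏ k ∈ Finset.range (n + p), conv B C (k + 1) ^ m))) := congrArg nu (by ring)

lemma mergeBase {a : ℕ → F} {m : ℕ} {B C : ℕ → F} {p : ℕ}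
    (hB : Win B 0) : MStmt a m B C 0 p := by
  have hD : ∀ k, conv B C k = B 0 * C k := conv_const (fun i hi => hB.2.1 i hi)
  have hSf : ∀ k, Sf a (conv B C) m 0 k = B 0 ^ m * Sf a C m 0 k := by
    intro k
    rw [Sf, Sf, Finset.mul_sum]
    refine Finset.sum_congr rfl fun σ hσ => ?_
    rw [Finset.mem_range] at hσ
    obtain ⟨δ, hδ⟩ : ∃ δ, m = σ + δ := ⟨m - σ, by omega⟩
    subst hδ
    rw [hD k, hD (k + 1), show σ + δ - σ = δ by omega, mul_pow, mul_pow, pow_add]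
    ring
  unfold MStmt
  rw [show (0 : ℕ) + p = p by omega]
  refine congrArg nu ?_
  rw [Finset.prod_congr rfl fun k _ => hSf k, Finset.prod_mul_distrib,
    Finset.prod_const, Finset.card_range,
    Finset.prod_congr rfl (fun k (_ : k ∈ Finset.range p) => by
      rw [hD (k + 1), mul_pow] :
      ∀ k ∈ Finset.range p, conv B C (k + 1) ^ m = B 0 ^ m * C (k + 1) ^ m),
    Finset.prod_mul_distrib, Finset.prod_const, Finset.card_range]
  simp only [Finset.range_zero, Finset.prod_empty]
  ring

set_option maxHeartbeats 1000000 in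
lemma mergeStep {a B C : ℕ → F} {m n₁ p : ℕ} (hB : Win B (n₁ + 1)) (hC : Win C p)
    (hp : 1 ≤ p) (hsm : nuLe (B 0 * C 1) (B 1 * C 0))
    (IH : MStmt a m (fun i => B (i + 1)) C n₁ p) : MStmt a m B C (n₁ + 1) p := by
  have f1 : ∀ k, nu (conv B C (k + 1)) = nu (conv (fun i => B (i + 1)) C k) :=
    conv_shift_nu hB hC hp hsm
  have fD1 : nu (conv B C 1) = nu (B 1 * C 0) := by
    rw [f1 0, conv_zero]
  have f2 : nu (Sf a (conv B C) m 0 0) = nu (C 0 ^ m * Sf a B m 0 0) := by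
    rw [Sf, Sf, Finset.mul_sum]
    refine nu_sum_congr fun σ hσ => ?_
    rw [Finset.mem_range] at hσ
    obtain ⟨δ, hδ⟩ : ∃ δ, m = σ + δ := ⟨m - σ, by omega⟩
    subst hδ
    rw [show σ + δ - σ = δ by omega]
    have step1 : nu (conv B C 0 ^ σ) = nu ((B 0 * C 0) ^ σ) :=
      nu_pow_congr (congrArg nu (conv_zero B C)) σ
    have step2 : nu (conv B C 1 ^ δ) = nu ((B 1 * C 0) ^ δ) := nu_pow_congr fD1 δ
    refine (nu_mul_congr rfl (nu_mul_congr step1 step2)).trans (congrArg nu ?_)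
    rw [mul_pow, mul_pow, pow_add]
    ring
  have f3 : ∀ k, nu (Sf a (conv B C) m 0 (k + 1)) = nu (Sf a (conv (fun i => B (i + 1)) C) m 0 k) := by
    intro k
    rw [Sf, Sf]
    refine nu_sum_congr fun σ hσ => ?_
    exact nu_mul_congr rfl (nu_mul_congr (nu_pow_congr (f1 k) σ)
      (nu_pow_congr (f1 (k + 1)) (m - σ)))
  unfold MStmt
  rw [show n₁ + 1 + p = (n₁ + p) + 1 by omega]
  rw [Finset.prod_range_succ' (fun k => Sf a (conv B C) m 0 k) (n₁ + p),
    Finset.prod_range_succ' (fun k => B (k + 1) ^ m) n₁,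
    Finset.prod_range_succ' (fun k => Sf a B m 0 k) n₁,
    Finset.prod_range_succ' (fun k => conv B C (k + 1) ^ m) (n₁ + p)]
  simp only [Nat.zero_add]
  have splitL : nu (((∏ k ∈ Finset.range (n₁ + p), Sf a (conv B C) m 0 (k + 1)) * Sf a (conv B C) m 0 0) *
      (((∏ k ∈ Finset.range n₁, B (k + 1 + 1) ^ m) * B 1 ^ m) * (∏ k ∈ Finset.range p, C (k + 1) ^ m))) =
      nu (Sf a (conv B C) m 0 0 * B 1 ^ m) *
      nu ((∏ k ∈ Finset.range (n₁ + p), Sf a (conv B C) m 0 (k + 1)) *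
        ((∏ k ∈ Finset.range n₁, B (k + 1 + 1) ^ m) * (∏ k ∈ Finset.range p, C (k + 1) ^ m))) := by
    rw [← nu_mul]
    exact congrArg nu (by ring)
  have splitR : nu (((∏ k ∈ Finset.range n₁, Sf a B m 0 (k + 1)) * Sf a B m 0 0) *
      ((∏ k ∈ Finset.range p, Sf a C m 0 k) *
        ((∏ k ∈ Finset.range (n₁ + p), conv B C (k + 1 + 1) ^ m) * conv B C 1 ^ m))) =
      nu (Sf a B m 0 0 * conv B C 1 ^ m) *
      nu ((∏ k ∈ Finset.range n₁, Sf a B m 0 (k + 1)) *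
        ((∏ k ∈ Finset.range p, Sf a C m 0 k) *
          (∏ k ∈ Finset.range (n₁ + p), conv B C (k + 1 + 1) ^ m))) := by
    rw [← nu_mul]
    exact congrArg nu (by ring)
  rw [splitL, splitR]
  have headEq : nu (Sf a (conv B C) m 0 0 * B 1 ^ m) = nu (Sf a B m 0 0 * conv B C 1 ^ m) := by
    calc nu (Sf a (conv B C) m 0 0 * B 1 ^ m)
        = nu ((C 0 ^ m * Sf a B m 0 0) * B 1 ^ m) := nu_mul_congr f2 rfl
      _ = nu (Sf a B m 0 0 * (B 1 * C 0) ^ m) := congrArg nu (by rw [mul_pow]; ring)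
      _ = nu (Sf a B m 0 0 * conv B C 1 ^ m) := nu_mul_congr rfl (nu_pow_congr fD1.symm m)
  rw [headEq]
  refine congrArg (nu (Sf a B m 0 0 * conv B C 1 ^ m) * ·) ?_
  calc nu ((∏ k ∈ Finset.range (n₁ + p), Sf a (conv B C) m 0 (k + 1)) *
        ((∏ k ∈ Finset.range n₁, B (k + 1 + 1) ^ m) * (∏ k ∈ Finset.range p, C (k + 1) ^ m)))
      = nu ((∏ k ∈ Finset.range (n₁ + p), Sf a (conv (fun i => B (i + 1)) C) m 0 k) *
        ((∏ k ∈ Finset.range n₁, (fun i => B (i + 1)) (k + 1) ^ m) *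
          (∏ k ∈ Finset.range p, C (k + 1) ^ m))) :=
        nu_mul_congr (nu_prod_congr fun k _ => f3 k) rfl
    _ = nu ((∏ k ∈ Finset.range n₁, Sf a (fun i => B (i + 1)) m 0 k) *
        ((∏ k ∈ Finset.range p, Sf a C m 0 k) *
          (∏ k ∈ Finset.range (n₁ + p), conv (fun i => B (i + 1)) C (k + 1) ^ m))) := IH
    _ = nu ((∏ k ∈ Finset.range n₁, Sf a B m 0 (k + 1)) *
        ((∏ k ∈ Finset.range p, Sf a C m 0 k) *
          (∏ k ∈ Finset.range (n₁ + p), conv B C (k + 1 + 1) ^ m))) := by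
        refine nu_mul_congr (nu_prod_congr fun k _ => rfl)
          (nu_mul_congr rfl (nu_prod_congr fun k _ => (nu_pow_congr (f1 (k + 1)) m).symm))

theorem mergeProd {a : ℕ → F} (m : ℕ) :
    ∀ N B C n p, n + p = N → Win B n → Win C p → MStmt a m B C n p := by
  intro N
  induction N with
  | zero =>
    intro B C n p hN hB hC
    have hn : n = 0 := by omega
    subst hn
    exact mergeBase hB
  | succ N ih =>
    intro B C n p hN hB hC
    cases n with
    | zero => exact mergeBase hB
    | succ n₁ =>
      cases p with
      | zero => exact MStmt_symm (mergeBase hC)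
      | succ p₁ =>
        rcases nuLe_total (B 0 * C 1) (B 1 * C 0) with hsm | hsm
        · exact mergeStep hB hC (by omega) hsm
            (ih (fun i => B (i + 1)) C n₁ (p₁ + 1) (by omega) (hB.shift (by omega)) hC)
        · have hsm' : nuLe (C 0 * B 1) (C 1 * B 0) := by
            refine nuLe_trans (nuLe_of_nu_eq (congrArg nu (mul_comm _ _)))
              (nuLe_trans hsm (nuLe_of_nu_eq (congrArg nu (mul_comm _ _))))
          exact MStmt_symm (mergeStep hC hB (by omega) hsm'
            (ih (fun i => C (i + 1)) B p₁ (n₁ + 1) (by omega) (hC.shift (by omega)) hB))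

end STRAux

namespace STRAux

open Supertropical Finset

variable {F : Type*} [STSemifield F]

lemma pow_ne_zero' {x : F} (hx : x ≠ 0) (k : ℕ) : x ^ k ≠ 0 := by
  induction k with
  | zero => simpa using one_ne_zero'
  | succ k ih => rw [pow_succ]; exact mul_ne_zero' ih hx

set_option maxHeartbeats 1000000 in
/-- homogenized evaluation is multiplicative on convolutions (an exact identity). -/
lemma Sf_conv_mul {fA gA b : ℕ → F} {m n : ℕ}
    (hf : ∀ i, m < i → fA i = 0) (hg : ∀ j, n < j → gA j = 0) (u : ℕ) :
    Sf (conv fA gA) b (m + n) 0 u = Sf fA b m 0 u * Sf gA b n 0 u := by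
  classical
  set x := b u with hx
  set y := b (u + 1) with hy
  set Φf : (Σ _ : ℕ, ℕ) → F :=
    fun q => fA q.2 * gA (q.1 - q.2) * (x ^ q.1 * y ^ (m + n - q.1)) with hΦf
  set emb : ℕ × ℕ → (Σ _ : ℕ, ℕ) := fun q => ⟨q.1 + q.2, q.1⟩ with hemb
  have hRHS : Sf fA b m 0 u * Sf gA b n 0 u =
      ∑ q ∈ Finset.range (m + 1) ×ˢ Finset.range (n + 1),
        fA q.1 * gA q.2 * (x ^ (q.1 + q.2) * y ^ (m + n - (q.1 + q.2))) := by
    rw [Sf, Sf, Finset.sum_mul_sum, ← Finset.sum_product']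
    refine Finset.sum_congr rfl fun q hq => ?_
    rw [Finset.mem_product, Finset.mem_range, Finset.mem_range] at hq
    rw [show m + n - (q.1 + q.2) = (m - q.1) + (n - q.2) by omega, pow_add, pow_add]
    simp only [Nat.zero_add]
    ring
  have hLHS : Sf (conv fA gA) b (m + n) 0 u =
      ∑ q ∈ (Finset.range (m + n + 1)).sigma (fun σ => Finset.range (σ + 1)), Φf q := by
    rw [Sf]
    have e : ∀ σ ∈ Finset.range (m + n + 1),
        conv fA gA (0 + σ) * (b u ^ σ * b (u + 1) ^ (m + n - σ)) =
        ∑ i ∈ Finset.range (σ + 1), fA i * gA (σ - i) * (x ^ σ * y ^ (m + n - σ)) := by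
      intro σ _
      rw [show (0 : ℕ) + σ = σ by omega, conv, Finset.sum_mul]
    rw [Finset.sum_congr rfl e, Finset.sum_sigma']
  have hinj : ∀ q ∈ Finset.range (m + 1) ×ˢ Finset.range (n + 1),
      ∀ q' ∈ Finset.range (m + 1) ×ˢ Finset.range (n + 1), emb q = emb q' → q = q' := by
    rintro ⟨i, j⟩ _ ⟨i', j'⟩ _ h
    rw [hemb, Sigma.mk.inj_iff] at h
    obtain ⟨h1, h2⟩ := h
    have h2' : i = i' := by exact_mod_cast heq_iff_eq.mp h2
    subst h2'
    have : j = j' := by omega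
    subst this
    rfl
  have himsub : (Finset.range (m + 1) ×ˢ Finset.range (n + 1)).image emb ⊆
      (Finset.range (m + n + 1)).sigma (fun σ => Finset.range (σ + 1)) := by
    intro q hq
    rw [Finset.mem_image] at hq
    obtain ⟨⟨i, j⟩, hq', rfl⟩ := hq
    rw [Finset.mem_product, Finset.mem_range, Finset.mem_range] at hq'
    simp only [hemb, Finset.mem_sigma, Finset.mem_range]
    omega
  have hvanish : ∀ q ∈ (Finset.range (m + n + 1)).sigma (fun σ => Finset.range (σ + 1)),
      q ∉ (Finset.range (m + 1) ×ˢ Finset.range (n + 1)).image emb → Φf q = 0 := by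
    rintro ⟨σ, i⟩ hq hqim
    simp only [Finset.mem_sigma, Finset.mem_range] at hq
    by_cases h1 : fA i = 0
    · rw [hΦf]; simp only; rw [h1, zero_mul, zero_mul]
    by_cases h2 : gA (σ - i) = 0
    · rw [hΦf]; simp only; rw [h2, mul_zero, zero_mul]
    exfalso
    apply hqim
    rw [Finset.mem_image]
    refine ⟨(i, σ - i), ?_, ?_⟩
    · rw [Finset.mem_product, Finset.mem_range, Finset.mem_range]
      constructor
      · by_contra h; exact h1 (hf _ (by omega))
      · by_contra h; exact h2 (hg _ (by omega))
    · rw [hemb]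
      simp only
      rw [show i + (σ - i) = σ by omega]
  rw [hLHS, hRHS]
  calc ∑ q ∈ (Finset.range (m + n + 1)).sigma (fun σ => Finset.range (σ + 1)), Φf q
      = ∑ q ∈ (Finset.range (m + 1) ×ˢ Finset.range (n + 1)).image emb, Φf q :=
        (Finset.sum_subset himsub hvanish).symm
    _ = ∑ q ∈ Finset.range (m + 1) ×ˢ Finset.range (n + 1), Φf (emb q) :=
        Finset.sum_image hinj
    _ = ∑ q ∈ Finset.range (m + 1) ×ˢ Finset.range (n + 1),
          fA q.1 * gA q.2 * (x ^ (q.1 + q.2) * y ^ (m + n - (q.1 + q.2))) := by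
        refine Finset.sum_congr rfl fun q _ => ?_
        rw [hΦf, hemb]
        simp only
        rw [show q.1 + q.2 - q.1 = q.2 by omega]

end STRAux

namespace STRAux

open Supertropical Finset Polynomial

variable {F : Type*} [STSemifield F]

lemma win_of_full {f : F[X]} (hf : fullPoly f) : Win f.coeff f.natDegree := by
  refine ⟨hf.1, fun i hi => Polynomial.coeff_eq_zero_of_natDegree_lt hi, fun k => ?_⟩
  by_cases hk : k + 2 ≤ f.natDegree
  · exact hf.2 (k + 1) (by omega) (by omega)
  · have h0 : f.coeff (k + 2) = 0 := Polynomial.coeff_eq_zero_of_natDegree_lt (by omega)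
    rw [h0, mul_zero]
    exact nuLe_zero _

lemma resMatrix_eq_syl (m n : ℕ) (f g : F[X]) :
    resMatrix m n f g = syl n 0 0 (m + n) f.coeff g.coeff := rfl

lemma res_formula {f g : F[X]} (hfw : Win f.coeff f.natDegree) (hgw : Win g.coeff g.natDegree) :
    nu (Res f g * ∏ k ∈ Finset.range g.natDegree, g.coeff (k + 1) ^ f.natDegree) =
    nu (g.coeff g.natDegree ^ f.natDegree *
      ∏ k ∈ Finset.range g.natDegree, Sf f.coeff g.coeff f.natDegree 0 k) := by
  have h1 : nu (Res f g) = nu (Phi f.coeff g.coeff g.natDegree f.natDegree 0 0) := by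
    have he : Res f g =
        sdet (syl g.natDegree 0 0 (f.natDegree + g.natDegree) f.coeff g.coeff) := rfl
    rw [he]
    exact mainA hfw hgw (f.natDegree + g.natDegree) g.natDegree f.natDegree 0 0 (by omega)
  have h2 := phiFormula (a := f.coeff) hgw g.natDegree f.natDegree 0 0
  simp only [Nat.zero_add] at h2
  calc nu (Res f g * ∏ k ∈ Finset.range g.natDegree, g.coeff (k + 1) ^ f.natDegree)
      = nu (Res f g) * nu (∏ k ∈ Finset.range g.natDegree, g.coeff (k + 1) ^ f.natDegree) :=
        nu_mul _ _
    _ = nu (Phi f.coeff g.coeff g.natDegree f.natDegree 0 0) *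
        nu (∏ k ∈ Finset.range g.natDegree, g.coeff (k + 1) ^ f.natDegree) := by rw [h1]
    _ = nu (Phi f.coeff g.coeff g.natDegree f.natDegree 0 0 *
        ∏ k ∈ Finset.range g.natDegree, g.coeff (k + 1) ^ f.natDegree) := (nu_mul _ _).symm
    _ = nu (g.coeff g.natDegree ^ f.natDegree *
        ∏ k ∈ Finset.range g.natDegree, Sf f.coeff g.coeff f.natDegree 0 k) := h2

lemma coeff_mul_conv (g h : F[X]) : (g * h).coeff = conv g.coeff h.coeff := by
  funext k
  rw [Polynomial.coeff_mul, conv]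
  exact Finset.Nat.sum_antidiagonal_eq_sum_range_succ_mk _ k

lemma natDegree_mul_eq {g h : F[X]} (hgw : Win g.coeff g.natDegree)
    (hhw : Win h.coeff h.natDegree) : (g * h).natDegree = g.natDegree + h.natDegree :=
  Polynomial.natDegree_mul' (mul_ne_zero' (hgw.1 _ le_rfl) (hhw.1 _ le_rfl))

end STRAux
/-- multiplicativity of the ν-value of the resultant. -/
theorem stmt12 {F : Type*} [STSemifield F] (f g h : F[X])
    (hf : 0 < f.natDegree) (hg : 0 < g.natDegree) (hh : 0 < h.natDegree)
    (hfull : fullPoly f) (hgfull : fullPoly g) (hhfull : fullPoly h) :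
    nu (Res f (g * h)) = nu (Res f g * Res f h) ∧
    nu (Res (f * g) h) = nu (Res f h * Res g h) := by
  classical
  open STRAux in
  have hfw := win_of_full hfull
  have hgw := win_of_full hgfull
  have hhw := win_of_full hhfull
  set m := f.natDegree with hm
  set n := g.natDegree with hn
  set p := h.natDegree with hp
  constructor
  · -- part 1
    have hD : (g * h).coeff = conv g.coeff h.coeff := coeff_mul_conv g h
    have hdeg : (g * h).natDegree = n + p := natDegree_mul_eq hgw hhw
    have hDw : Win (conv g.coeff h.coeff) (n + p) := conv_win hgw hhw
    have res1 := res_formula hfw (g := g * h) (by rw [hD, hdeg]; exact hDw)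
    rw [hD, hdeg] at res1
    have res2 := res_formula hfw hgw
    have res3 := res_formula hfw hhw
    have merge := mergeProd (a := f.coeff) m (n + p) g.coeff h.coeff n p rfl hgw hhw
    unfold MStmt at merge
    set PD : F := ∏ k ∈ Finset.range (n + p), conv g.coeff h.coeff (k + 1) ^ m with hPD
    set PB : F := ∏ k ∈ Finset.range n, g.coeff (k + 1) ^ m with hPB
    set PC : F := ∏ k ∈ Finset.range p, h.coeff (k + 1) ^ m with hPC
    set SD : F := ∏ k ∈ Finset.range (n + p), Sf f.coeff (conv g.coeff h.coeff) m 0 k with hSD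
    set SB : F := ∏ k ∈ Finset.range n, Sf f.coeff g.coeff m 0 k with hSB
    set SC : F := ∏ k ∈ Finset.range p, Sf f.coeff h.coeff m 0 k with hSC
    have key : nu (Res f (g * h) * (PD * (PB * PC))) =
        nu ((Res f g * Res f h) * (PD * (PB * PC))) := by
      calc nu (Res f (g * h) * (PD * (PB * PC)))
          = nu ((Res f (g * h) * PD) * (PB * PC)) := congrArg nu (by ring)
        _ = nu (Res f (g * h) * PD) * nu (PB * PC) := nu_mul _ _
        _ = nu (conv g.coeff h.coeff (n + p) ^ m * SD) * nu (PB * PC) := by rw [res1]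
        _ = nu (conv g.coeff h.coeff (n + p) ^ m) * nu (SD * (PB * PC)) := by
            simp only [nu_mul, mul_assoc]
        _ = nu (conv g.coeff h.coeff (n + p) ^ m) * nu (SB * (SC * PD)) := by rw [merge]
        _ = nu ((g.coeff n * h.coeff p) ^ m) * nu (SB * (SC * PD)) := by
            rw [conv_leading hgw hhw]
        _ = nu (((g.coeff n ^ m * SB) * (h.coeff p ^ m * SC)) * PD) := by
            rw [← nu_mul]
            exact congrArg nu (by rw [mul_pow]; ring)
        _ = (nu (g.coeff n ^ m * SB) * nu (h.coeff p ^ m * SC)) * nu PD := by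
            simp only [nu_mul, mul_assoc]
        _ = (nu (Res f g * PB) * nu (Res f h * PC)) * nu PD := by rw [res2, res3]
        _ = nu ((Res f g * Res f h) * (PD * (PB * PC))) := by
            rw [← nu_mul, ← nu_mul]
            exact congrArg nu (by ring)
    have hne : PD * (PB * PC) ≠ 0 := by
      refine mul_ne_zero' ?_ (mul_ne_zero' ?_ ?_)
      · exact prod_ne_zero' fun k hk => pow_ne_zero'
          (hDw.1 (k + 1) (by rw [Finset.mem_range] at hk; omega)) m
      · exact prod_ne_zero' fun k hk => pow_ne_zero'
          (hgw.1 (k + 1) (by rw [Finset.mem_range] at hk; omega)) m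
      · exact prod_ne_zero' fun k hk => pow_ne_zero'
          (hhw.1 (k + 1) (by rw [Finset.mem_range] at hk; omega)) m
    exact nu_cancel_eq hne key
  · -- part 2
    have hA : (f * g).coeff = conv f.coeff g.coeff := coeff_mul_conv f g
    have hdeg : (f * g).natDegree = m + n := natDegree_mul_eq hfw hgw
    have hAw : Win (conv f.coeff g.coeff) (m + n) := conv_win hfw hgw
    have res4 := res_formula (f := f * g) (g := h) (by rw [hA, hdeg]; exact hAw) hhw
    rw [hA, hdeg] at res4
    have res5 := res_formula hfw hhw
    have res6 := res_formula hgw hhw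
    have hSfmul : ∀ k, Sf (conv f.coeff g.coeff) h.coeff (m + n) 0 k =
        Sf f.coeff h.coeff m 0 k * Sf g.coeff h.coeff n 0 k :=
      Sf_conv_mul hfw.2.1 hgw.2.1
    set PCm : F := ∏ k ∈ Finset.range p, h.coeff (k + 1) ^ m with hPCm
    set PCn : F := ∏ k ∈ Finset.range p, h.coeff (k + 1) ^ n with hPCn
    set SF : F := ∏ k ∈ Finset.range p, Sf f.coeff h.coeff m 0 k with hSF
    set SG : F := ∏ k ∈ Finset.range p, Sf g.coeff h.coeff n 0 k with hSG
    have hWsplit : (∏ k ∈ Finset.range p, h.coeff (k + 1) ^ (m + n)) = PCm * PCn := by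
      rw [hPCm, hPCn, ← Finset.prod_mul_distrib]
      exact Finset.prod_congr rfl fun k _ => pow_add _ _ _
    have hSsplit : (∏ k ∈ Finset.range p, Sf (conv f.coeff g.coeff) h.coeff (m + n) 0 k) =
        SF * SG := by
      rw [hSF, hSG, ← Finset.prod_mul_distrib]
      exact Finset.prod_congr rfl fun k _ => hSfmul k
    have key : nu (Res (f * g) h * (PCm * PCn)) =
        nu ((Res f h * Res g h) * (PCm * PCn)) := by
      calc nu (Res (f * g) h * (PCm * PCn))
          = nu (h.coeff p ^ (m + n) * ∏ k ∈ Finset.range p,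
              Sf (conv f.coeff g.coeff) h.coeff (m + n) 0 k) := by rw [← hWsplit]; exact res4
        _ = nu ((h.coeff p ^ m * SF) * (h.coeff p ^ n * SG)) := by
            rw [hSsplit]
            exact congrArg nu (by rw [pow_add]; ring)
        _ = nu (h.coeff p ^ m * SF) * nu (h.coeff p ^ n * SG) := nu_mul _ _
        _ = nu (Res f h * PCm) * nu (Res g h * PCn) := by rw [res5, res6]
        _ = nu ((Res f h * Res g h) * (PCm * PCn)) := by
            rw [← nu_mul]
            exact congrArg nu (by ring)
    have hne : PCm * PCn ≠ 0 := by
      refine mul_ne_zero' ?_ ?_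
      · exact prod_ne_zero' fun k hk => pow_ne_zero'
          (hhw.1 (k + 1) (by rw [Finset.mem_range] at hk; omega)) m
      · exact prod_ne_zero' fun k hk => pow_ne_zero'
          (hhw.1 (k + 1) (by rw [Finset.mem_range] at hk; omega)) n
    exact nu_cancel_eq hne key
end

section
/- Let R be a commutative semiring equipped with an idempotent semiring homomorphism ν : R → R with ghost ideal G₀ = {a ∈ R : ν(a) = a}, satisfying supertropicality (ν(a) = ν(b) implies a + b = ν(a)). Then for every ideal A of R, the supertropical radical √A = {a ∈ R : there exist k ≥ 1 and b ∈ A with a^k + b ∈ G₀ and ν(a^k + b) = ν(a^k)} is an ideal of R. -/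
/-- A commutative semiring with ghosts: an idempotent "semiring homomorphism"
ghost map `nu`, satisfying supertropicality. -/
class SemiringWithGhosts (R : Type*) extends CommSemiring R where
  nu : R → R
  nu_idem : ∀ a : R, nu (nu a) = nu a
  nu_add : ∀ a b : R, nu (a + b) = nu a + nu b
  nu_mul : ∀ a b : R, nu (a * b) = nu a * nu b
  nu_zero : nu (0 : R) = 0
  supertropicality : ∀ a b : R, nu a = nu b → a + b = nu a

open SemiringWithGhosts

/-- the supertropical radical of a subset `A` -/
def stRadical {R : Type*} [SemiringWithGhosts R] (A : Set R) : Set R :=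
  {a : R | ∃ (k : ℕ) (b : R), 1 ≤ k ∧ b ∈ A ∧
      nu (a ^ k + b) = a ^ k + b ∧ nu (a ^ k + b) = nu (a ^ k)}

section Aux

variable {R : Type*} [SemiringWithGhosts R]

/-- multiplying a ghost element by anything yields a ghost element -/
lemma nu_ghost_mul (c g : R) (hg : nu g = g) : nu (c * g) = c * g := by
  have h2 : g + g = g := by rw [supertropicality g g rfl, hg]
  have h3 : c * g + c * g = c * g := by rw [← mul_add, h2]
  have h4 : c * g + c * g = nu (c * g) := supertropicality (c * g) (c * g) rfl
  rw [h3] at h4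
  exact h4.symm

/-- main multiplicative lemma: if `x + b = nu x` then `u*x + u*b = nu (u*x)`. -/
lemma key_mul (u x b : R) (h : x + b = nu x) : u * x + u * b = nu (u * x) := by
  have hg : nu (nu x) = nu x := nu_idem x
  calc u * x + u * b = u * (x + b) := (mul_add u x b).symm
    _ = u * nu x := by rw [h]
    _ = nu (u * nu x) := (nu_ghost_mul u (nu x) hg).symm
    _ = nu u * nu (nu x) := nu_mul u (nu x)
    _ = nu u * nu x := by rw [hg]
    _ = nu (u * x) := (nu_mul u x).symm

lemma nu_sum {ι : Type*} (s : Finset ι) (f : ι → R) :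
    nu (∑ i ∈ s, f i) = ∑ i ∈ s, nu (f i) := by
  classical
  induction s using Finset.induction_on with
  | empty => simpa using nu_zero
  | @insert _ _ hi ih =>
      rw [Finset.sum_insert hi, Finset.sum_insert hi, nu_add, ih]

/-- a clean characterization of membership in the supertropical radical -/
lemma mem_stRadical_iff (S : Set R) (a : R) :
    a ∈ stRadical S ↔ ∃ (k : ℕ) (b : R), 1 ≤ k ∧ b ∈ S ∧ a ^ k + b = nu (a ^ k) := by
  constructor
  · rintro ⟨k, b, hk, hb, h1, h2⟩
    exact ⟨k, b, hk, hb, by rw [← h1, h2]⟩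
  · rintro ⟨k, b, hk, hb, h⟩
    refine ⟨k, b, hk, hb, ?_, ?_⟩
    · rw [h, nu_idem, ← h]
    · rw [h, nu_idem]

end Aux

/-- the supertropical radical of an ideal is an ideal. -/
theorem stmt18 {R : Type*} [SemiringWithGhosts R] (A : Ideal R) :
    ∃ I : Ideal R, (I : Set R) = stRadical (A : Set R) := by
  classical
  refine ⟨{ carrier := stRadical (A : Set R)
            zero_mem' := ?_
            add_mem' := ?_
            smul_mem' := ?_ }, rfl⟩
  · -- addition
    intro x y hx hy
    obtain ⟨k, b, hk, hbA, hb⟩ := (mem_stRadical_iff _ _).mp hx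
    obtain ⟨l, c, hl, hcA, hc⟩ := (mem_stRadical_iff _ _).mp hy
    set m := k + l with hm
    have hterm : ∀ i : ℕ, ∃ d : R, d ∈ A ∧
        x ^ i * y ^ (m - i) * (m.choose i : R) + d
          = nu (x ^ i * y ^ (m - i) * (m.choose i : R)) := by
      intro i
      rcases le_or_gt k i with hik | hik
      · -- use the relation for x
        have e : x ^ i = x ^ (i - k) * x ^ k := by
          rw [← pow_add, Nat.sub_add_cancel hik]
        refine ⟨(x ^ (i - k) * y ^ (m - i) * (m.choose i : R)) * b,
          A.mul_mem_left _ hbA, ?_⟩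
        have e2 : x ^ i * y ^ (m - i) * (m.choose i : R)
            = (x ^ (i - k) * y ^ (m - i) * (m.choose i : R)) * x ^ k := by
          rw [e]; ring
        rw [e2]
        exact key_mul _ _ _ hb
      · -- use the relation for y
        have hl2 : l ≤ m - i := by omega
        have e : y ^ (m - i) = y ^ (m - i - l) * y ^ l := by
          rw [← pow_add, Nat.sub_add_cancel hl2]
        refine ⟨(x ^ i * y ^ (m - i - l) * (m.choose i : R)) * c,
          A.mul_mem_left _ hcA, ?_⟩
        have e2 : x ^ i * y ^ (m - i) * (m.choose i : R)
            = (x ^ i * y ^ (m - i - l) * (m.choose i : R)) * y ^ l := by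
          rw [e]; ring
        rw [e2]
        exact key_mul _ _ _ hc
    choose d hdA hd using hterm
    refine (mem_stRadical_iff _ _).mpr
      ⟨m, ∑ i ∈ Finset.range (m + 1), d i, by omega,
        Ideal.sum_mem A (fun i _ => hdA i), ?_⟩
    calc (x + y) ^ m + ∑ i ∈ Finset.range (m + 1), d i
        = (∑ i ∈ Finset.range (m + 1), x ^ i * y ^ (m - i) * (m.choose i : R))
            + ∑ i ∈ Finset.range (m + 1), d i := by rw [add_pow]
      _ = ∑ i ∈ Finset.range (m + 1),
            (x ^ i * y ^ (m - i) * (m.choose i : R) + d i) :=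
          Finset.sum_add_distrib.symm
      _ = ∑ i ∈ Finset.range (m + 1),
            nu (x ^ i * y ^ (m - i) * (m.choose i : R)) :=
          Finset.sum_congr rfl (fun i _ => hd i)
      _ = nu (∑ i ∈ Finset.range (m + 1),
            x ^ i * y ^ (m - i) * (m.choose i : R)) := (nu_sum _ _).symm
      _ = nu ((x + y) ^ m) := by rw [← add_pow]
  · -- zero
    refine (mem_stRadical_iff _ _).mpr ⟨1, 0, le_refl 1, A.zero_mem, ?_⟩
    simp [nu_zero]
  · -- scalar multiplication
    intro r x hx
    obtain ⟨k, b, hk, hbA, hb⟩ := (mem_stRadical_iff _ _).mp hx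
    refine (mem_stRadical_iff _ _).mpr
      ⟨k, r ^ k * b, hk, A.mul_mem_left _ hbA, ?_⟩
    have := key_mul (r ^ k) (x ^ k) b hb
    simpa [smul_eq_mul, mul_pow] using this
end
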